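/- arXiv:1503.02582 — 3 statements merged into one kernel-verified Lean document; each statement's English description precedes it below -/
import Mathlib

section
/- Let E ⊆ ℂ be a compact set. If E is H∞-removable, then E is totally disconnected. -/
namespace HRemAux

open Complex Set

/-- Endpoint of a chain starting at `x` with further vertices `l`. -/
def endp (x : ℂ) (l : List ℂ) : ℂ := l.getLastD x

/-- Sum of `log ((q-c)/(p-c))` over consecutive vertices of the chain. -/
noncomputable def W (c : ℂ) : ℂ → List ℂ → ℂ
  | _, [] => 0
  | x, y :: l => Complex.log ((y - c) / (x - c)) + W c y l

/-- All segments of the chain are inside `S`. -/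
def Adm (S : Set ℂ) : ℂ → List ℂ → Prop
  | _, [] => True
  | x, y :: l => segment ℝ x y ⊆ S ∧ Adm S y l

/-- The union of the segments of the chain. -/
def Edg : ℂ → List ℂ → Set ℂ
  | _, [] => ∅
  | x, y :: l => segment ℝ x y ∪ Edg y l

@[simp] lemma endp_nil (x : ℂ) : endp x [] = x := rfl
@[simp] lemma endp_cons (x y : ℂ) (l : List ℂ) : endp x (y :: l) = endp y l := by
  cases l <;> rfl

@[simp] lemma W_nil (c x : ℂ) : W c x [] = 0 := rfl
@[simp] lemma W_cons (c x y : ℂ) (l : List ℂ) :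
    W c x (y :: l) = Complex.log ((y - c) / (x - c)) + W c y l := by simp [W]

@[simp] lemma Adm_nil (S : Set ℂ) (x : ℂ) : Adm S x [] := trivial
@[simp] lemma Adm_cons (S : Set ℂ) (x y : ℂ) (l : List ℂ) :
    Adm S x (y :: l) ↔ segment ℝ x y ⊆ S ∧ Adm S y l := Iff.rfl

@[simp] lemma Edg_nil (x : ℂ) : Edg x [] = ∅ := rfl
@[simp] lemma Edg_cons (x y : ℂ) (l : List ℂ) :
    Edg x (y :: l) = segment ℝ x y ∪ Edg y l := rfl

lemma endp_append (x : ℂ) (l₁ l₂ : List ℂ) :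
    endp x (l₁ ++ l₂) = endp (endp x l₁) l₂ := by
  induction l₁ generalizing x with
  | nil => simp
  | cons y l ih => simp [ih]

lemma W_append (c x : ℂ) (l₁ l₂ : List ℂ) :
    W c x (l₁ ++ l₂) = W c x l₁ + W c (endp x l₁) l₂ := by
  induction l₁ generalizing x with
  | nil => simp
  | cons y l ih => simp [ih, add_assoc]

lemma Adm_append {S : Set ℂ} {x : ℂ} {l₁ l₂ : List ℂ} (h₁ : Adm S x l₁)
    (h₂ : Adm S (endp x l₁) l₂) : Adm S x (l₁ ++ l₂) := by
  induction l₁ generalizing x with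
  | nil => simpa using h₂
  | cons y l ih => exact ⟨h₁.1, ih h₁.2 (by simpa using h₂)⟩

lemma Edg_append (x : ℂ) (l₁ l₂ : List ℂ) :
    Edg x (l₁ ++ l₂) = Edg x l₁ ∪ Edg (endp x l₁) l₂ := by
  induction l₁ generalizing x with
  | nil => simp
  | cons y l ih => simp [ih, union_assoc]

lemma Edg_subset {S : Set ℂ} {x : ℂ} {l : List ℂ} (h : Adm S x l) : Edg x l ⊆ S := by
  induction l generalizing x with
  | nil => simp
  | cons y l ih => exact union_subset h.1 (ih h.2)

/-- reversed chain (list of vertices, starting from `endp x l`, ending at `x`). -/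
def rev (x : ℂ) (l : List ℂ) : List ℂ :=
  match l with
  | [] => []
  | y :: l => rev y l ++ [x]

@[simp] lemma rev_nil (x : ℂ) : rev x [] = [] := rfl
@[simp] lemma rev_cons (x y : ℂ) (l : List ℂ) : rev x (y :: l) = rev y l ++ [x] := rfl

lemma endp_rev (x : ℂ) (l : List ℂ) : endp (endp x l) (rev x l) = x := by
  induction l generalizing x with
  | nil => simp
  | cons y l ih => rw [endp_cons, rev_cons, endp_append, ih]; rfl

lemma Adm_rev {S : Set ℂ} {x : ℂ} {l : List ℂ} (h : Adm S x l) :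
    Adm S (endp x l) (rev x l) := by
  induction l generalizing x with
  | nil => simp
  | cons y l ih =>
    rw [endp_cons, rev_cons]
    refine Adm_append (ih h.2) ?_
    rw [endp_rev]
    exact ⟨by rw [segment_symm]; exact h.1, trivial⟩

lemma slit_of_not_mem_segment {p q c : ℂ} (h : c ∉ segment ℝ p q) :
    p ≠ c ∧ q ≠ c ∧ (q - c) / (p - c) ∈ slitPlane := by
  have hp : p ≠ c := by rintro rfl; exact h (left_mem_segment ℝ p q)
  have hq : q ≠ c := by rintro rfl; exact h (right_mem_segment ℝ p q)
  refine ⟨hp, hq, ?_⟩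
  by_contra hu
  rw [mem_slitPlane_iff_not_le_zero, not_not] at hu
  set u : ℂ := (q - c) / (p - c) with hudef
  have hpc : p - c ≠ 0 := sub_ne_zero_of_ne hp
  have hure : u.re ≤ 0 ∧ u.im = 0 := by
    rw [Complex.le_def] at hu; simpa using hu
  have huu : u = (u.re : ℂ) := by
    apply Complex.ext <;> simp [hure.2]
  set r : ℝ := u.re with hr
  have hrle : r ≤ 0 := hure.1
  have hqc : q - c = (r : ℂ) * (p - c) := by
    rw [← huu, hudef]; field_simp
  -- c = (q + (-r) p)/(1 + (-r)) as a convex combination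
  apply h
  have h1r : (0 : ℝ) < 1 - r := by linarith
  refine ⟨-r / (1 - r), 1 / (1 - r),
    div_nonneg (by linarith) (by linarith), div_nonneg (by linarith) (by linarith), ?_, ?_⟩
  · field_simp; ring
  · have h1rC : (1 : ℂ) - (r : ℂ) ≠ 0 := by
      have : ((1 - r : ℝ) : ℂ) ≠ 0 := Complex.ofReal_ne_zero.mpr h1r.ne'
      simpa using this
    rw [Complex.real_smul, Complex.real_smul]
    push_cast
    have hqc' : q - c = (r : ℂ) * p - (r : ℂ) * c := by rw [hqc]; ring
    field_simp
    linear_combination hqc'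

lemma ne_of_not_mem_Edg_left {x y c : ℂ} {l : List ℂ} (h : c ∉ Edg x (y :: l)) : x ≠ c :=
  (slit_of_not_mem_segment (fun hc => h (Or.inl hc))).1

lemma W_rev {c x : ℂ} {l : List ℂ} (h : c ∉ Edg x l) :
    W c (endp x l) (rev x l) = - W c x l := by
  induction l generalizing x with
  | nil => simp
  | cons y l ih =>
    have hseg : c ∉ segment ℝ x y := fun hc => h (Or.inl hc)
    have hl : c ∉ Edg y l := fun hc => h (Or.inr hc)
    obtain ⟨hx, hy, hslit⟩ := slit_of_not_mem_segment hseg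
    rw [endp_cons, rev_cons, W_append, ih hl, endp_rev]
    have hlog : Complex.log ((x - c) / (y - c)) = - Complex.log ((y - c) / (x - c)) := by
      rw [← inv_div, Complex.log_inv _ (slitPlane_arg_ne_pi hslit)]
    simp only [W_cons, W_nil, add_zero]
    rw [hlog]
    ring

lemma exp_W {c x : ℂ} {l : List ℂ} (hx : x ≠ c) (h : c ∉ Edg x l) :
    Complex.exp (W c x l) = (endp x l - c) / (x - c) := by
  induction l generalizing x with
  | nil => simp [div_self (sub_ne_zero_of_ne hx)]
  | cons y l ih =>
    have hseg : c ∉ segment ℝ x y := fun hc => h (Or.inl hc)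
    have hl : c ∉ Edg y l := fun hc => h (Or.inr hc)
    obtain ⟨hx', hy, hslit⟩ := slit_of_not_mem_segment hseg
    have hxc : x - c ≠ 0 := sub_ne_zero_of_ne hx
    have hyc : y - c ≠ 0 := sub_ne_zero_of_ne hy
    rw [W_cons, Complex.exp_add, Complex.exp_log (div_ne_zero hyc hxc), endp_cons, ih hy hl]
    field_simp

lemma W_int {c x : ℂ} {l : List ℂ} (hx : x ≠ c) (h : c ∉ Edg x l)
    (hcl : endp x l = x) : ∃ n : ℤ, W c x l = n * (2 * Real.pi * Complex.I) := by
  have := exp_W hx h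
  rw [hcl, div_self (sub_ne_zero_of_ne hx)] at this
  exact Complex.exp_eq_one_iff.mp this

lemma isClosed_Edg (x : ℂ) (l : List ℂ) : IsClosed (Edg x l) := by
  induction l generalizing x with
  | nil => simp
  | cons y l ih =>
    refine IsClosed.union ?_ (ih y)
    rw [segment_eq_image ℝ x y]
    exact (isCompact_Icc.image (by continuity)).isClosed

lemma W_continuousAt {x c : ℂ} {l : List ℂ} (h : c ∉ Edg x l) :
    ContinuousAt (fun c' => W c' x l) c := by
  induction l generalizing x with
  | nil => simpa using continuousAt_const
  | cons y l ih =>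
    have hseg : c ∉ segment ℝ x y := fun hc => h (Or.inl hc)
    have hl : c ∉ Edg y l := fun hc => h (Or.inr hc)
    obtain ⟨hx, hy, hslit⟩ := slit_of_not_mem_segment hseg
    simp only [W_cons]
    refine ContinuousAt.add (ContinuousAt.clog ?_ hslit) (ih hl)
    exact ContinuousAt.div (by fun_prop) (by fun_prop) (sub_ne_zero_of_ne hx)

/-- Key discrete "winding number" lemma : for a closed chain avoiding a preconnected set `t`,
the total log-sum is the same seen from any two points of `t`. -/
lemma W_const_on_preconnected {t : Set ℂ} (ht : IsPreconnected t) {a b x : ℂ} {l : List ℂ}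
    (hdisj : ∀ c ∈ t, c ∉ Edg x l ∧ x ≠ c) (ha : a ∈ t) (hb : b ∈ t)
    (hcl : endp x l = x) : W a x l = W b x l := by
  classical
  have key : ∀ c₀, c₀ ∉ Edg x l → x ≠ c₀ → ∀ᶠ c in nhds c₀, W c x l = W c₀ x l := by
    intro c₀ hc₀ hxc₀
    have hcont := W_continuousAt (x := x) (l := l) hc₀
    have hnear : ∀ᶠ c in nhds c₀, ‖W c x l - W c₀ x l‖ < 1 := by
      have h2 := Metric.tendsto_nhds.mp hcont.tendsto 1 one_pos
      filter_upwards [h2] with c hc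
      simpa [dist_eq_norm] using hc
    have hopen : ∀ᶠ c in nhds c₀, c ∉ Edg x l :=
      (isClosed_Edg x l).isOpen_compl.mem_nhds (by simpa using hc₀)
    have hne : ∀ᶠ c in nhds c₀, x ≠ c := by
      have h3 : IsOpen {c : ℂ | c ≠ x} := isOpen_ne
      have h4 := h3.mem_nhds (by simpa [Set.mem_setOf_eq] using hxc₀.symm)
      filter_upwards [h4] with c hc using hc.symm
    filter_upwards [hnear, hopen, hne] with c hc hcE hcx
    obtain ⟨n, hn⟩ := W_int hcx hcE hcl
    obtain ⟨m, hm⟩ := W_int hxc₀ hc₀ hcl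
    rcases eq_or_ne n m with rfl | hnm
    · rw [hn, hm]
    · exfalso
      have h1 : (1:ℝ) ≤ |((n - m : ℤ) : ℝ)| := by
        have := Int.one_le_abs (sub_ne_zero_of_ne hnm)
        exact_mod_cast this
      have hval : W c x l - W c₀ x l = ((n - m : ℤ) : ℂ) * (2 * Real.pi * Complex.I) := by
        rw [hn, hm]; push_cast; ring
      rw [hval] at hc
      have hnorm : ‖((n - m : ℤ) : ℂ) * (2 * Real.pi * Complex.I)‖
          = |((n - m : ℤ) : ℝ)| * (2 * Real.pi) := by
        rw [norm_mul, Complex.norm_intCast]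
        congr 1
        simp [norm_mul, abs_of_pos Real.pi_pos]
      rw [hnorm] at hc
      nlinarith [Real.pi_gt_three]
  set u : Set ℂ := {c | c ∉ Edg x l ∧ x ≠ c ∧ W c x l = W a x l} with hu
  set v : Set ℂ := {c | c ∉ Edg x l ∧ x ≠ c ∧ W c x l ≠ W a x l} with hv
  have hou : IsOpen u := by
    rw [isOpen_iff_mem_nhds]
    rintro c₀ ⟨h1, h2, h3⟩
    have hopen : ∀ᶠ c in nhds c₀, c ∉ Edg x l :=
      (isClosed_Edg x l).isOpen_compl.mem_nhds (by simpa using h1)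
    have hne : ∀ᶠ c in nhds c₀, x ≠ c := by
      have hh : IsOpen {c : ℂ | c ≠ x} := isOpen_ne
      have h4 := hh.mem_nhds (by simpa [Set.mem_setOf_eq] using h2.symm)
      filter_upwards [h4] with c hc using hc.symm
    filter_upwards [key c₀ h1 h2, hopen, hne] with c hc h5 h6
    exact ⟨h5, h6, hc.trans h3⟩
  have hov : IsOpen v := by
    rw [isOpen_iff_mem_nhds]
    rintro c₀ ⟨h1, h2, h3⟩
    have hopen : ∀ᶠ c in nhds c₀, c ∉ Edg x l :=
      (isClosed_Edg x l).isOpen_compl.mem_nhds (by simpa using h1)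
    have hne : ∀ᶠ c in nhds c₀, x ≠ c := by
      have hh : IsOpen {c : ℂ | c ≠ x} := isOpen_ne
      have h4 := hh.mem_nhds (by simpa [Set.mem_setOf_eq] using h2.symm)
      filter_upwards [h4] with c hc using hc.symm
    filter_upwards [key c₀ h1 h2, hopen, hne] with c hc h5 h6
    exact ⟨h5, h6, by rw [hc]; exact h3⟩
  have hdisj2 : Disjoint u v := by
    rw [Set.disjoint_left]
    rintro c ⟨_, _, h3⟩ ⟨_, _, h4⟩
    exact h4 h3
  have hcover : t ⊆ u ∪ v := by
    intro c hc
    obtain ⟨h1, h2⟩ := hdisj c hc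
    by_cases h3 : W c x l = W a x l
    · exact Or.inl ⟨h1, h2, h3⟩
    · exact Or.inr ⟨h1, h2, h3⟩
  rcases ht.subset_or_subset hou hov hdisj2 hcover with h | h
  · exact ((h hb).2.2).symm
  · exact absurd (h ha).2.2 (by simp)

/-- Every point of an open preconnected set is reachable from `z₀` by an admissible chain. -/
lemma reach_all {Ω : Set ℂ} (hΩo : IsOpen Ω) (hΩc : IsPreconnected Ω) {z₀ : ℂ} (hz₀ : z₀ ∈ Ω) :
    ∀ z ∈ Ω, ∃ l, Adm Ω z₀ l ∧ endp z₀ l = z := by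
  classical
  set u : Set ℂ := {z | z ∈ Ω ∧ ∃ l, Adm Ω z₀ l ∧ endp z₀ l = z} with hu
  set v : Set ℂ := {z | z ∈ Ω ∧ ¬ ∃ l, Adm Ω z₀ l ∧ endp z₀ l = z} with hv
  have hball : ∀ z ∈ Ω, ∃ ε > 0, Metric.ball z ε ⊆ Ω := fun z hz =>
    Metric.isOpen_iff.mp hΩo z hz
  have hou : IsOpen u := by
    rw [Metric.isOpen_iff]
    rintro z ⟨hz, l, hadm, hend⟩
    obtain ⟨ε, hε, hball⟩ := hball z hz
    refine ⟨ε, hε, fun w hw => ⟨hball hw, l ++ [w], ?_, ?_⟩⟩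
    · refine Adm_append hadm ?_
      rw [hend]
      exact ⟨by
        refine (convex_ball z ε).segment_subset (Metric.mem_ball_self hε) hw |>.trans hball,
        trivial⟩
    · rw [endp_append, hend]; rfl
  have hov : IsOpen v := by
    rw [Metric.isOpen_iff]
    rintro z ⟨hz, hnr⟩
    obtain ⟨ε, hε, hball⟩ := hball z hz
    refine ⟨ε, hε, fun w hw => ⟨hball hw, fun ⟨l, hadm, hend⟩ => hnr ?_⟩⟩
    refine ⟨l ++ [z], Adm_append hadm ?_, by rw [endp_append, hend]; rfl⟩
    rw [hend]
    exact ⟨by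
      refine (convex_ball z ε).segment_subset hw (Metric.mem_ball_self hε) |>.trans hball,
      trivial⟩
  have hdisj : Disjoint u v := by
    rw [Set.disjoint_left]; rintro z ⟨_, h⟩ ⟨_, h2⟩; exact h2 h
  have hcov : Ω ⊆ u ∪ v := by
    intro z hz
    by_cases h : ∃ l, Adm Ω z₀ l ∧ endp z₀ l = z
    · exact Or.inl ⟨hz, h⟩
    · exact Or.inr ⟨hz, h⟩
  rcases hΩc.subset_or_subset hou hov hdisj hcov with h | h
  · exact fun z hz => (h hz).2
  · exact absurd (⟨[], trivial, rfl⟩ : ∃ l, Adm Ω z₀ l ∧ endp z₀ l = z₀) (h hz₀).2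

/-- The continuation value relation. -/
def VRel (a b z₀ : ℂ) (Ω : Set ℂ) (z v : ℂ) : Prop :=
  ∃ l, Adm Ω z₀ l ∧ endp z₀ l = z ∧ W a z₀ l - W b z₀ l = v

noncomputable def V (a b z₀ : ℂ) (Ω : Set ℂ) (z : ℂ) : ℂ :=
  Classical.epsilon (VRel a b z₀ Ω z)

/-- Uniqueness of the continuation value. -/
lemma VRel_unique {a b z₀ : ℂ} {Ω t : Set ℂ} (ht : IsPreconnected t) (ha : a ∈ t) (hb : b ∈ t)
    (hΩt : ∀ c ∈ t, c ∉ Ω) (hz₀ : z₀ ∈ Ω) {z v v' : ℂ} (h : VRel a b z₀ Ω z v)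
    (h' : VRel a b z₀ Ω z v') : v = v' := by
  obtain ⟨l₁, hadm₁, hend₁, hval₁⟩ := h
  obtain ⟨l₂, hadm₂, hend₂, hval₂⟩ := h'
  have hloopadm : Adm Ω z₀ (l₁ ++ rev z₀ l₂) := by
    refine Adm_append hadm₁ ?_
    rw [hend₁, ← hend₂]
    exact Adm_rev hadm₂
  have hloopend : endp z₀ (l₁ ++ rev z₀ l₂) = z₀ := by
    rw [endp_append, hend₁, ← hend₂, endp_rev]
  have hWsplit : ∀ c ∈ t, W c z₀ (l₁ ++ rev z₀ l₂) = W c z₀ l₁ - W c z₀ l₂ := by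
    intro c hc
    have hce : c ∉ Edg z₀ l₂ := fun hmem => hΩt c hc (Edg_subset hadm₂ hmem)
    rw [W_append, hend₁, ← hend₂, W_rev hce, sub_eq_add_neg]
  have hdisj : ∀ c ∈ t, c ∉ Edg z₀ (l₁ ++ rev z₀ l₂) ∧ z₀ ≠ c := by
    intro c hc
    constructor
    · exact fun hmem => hΩt c hc (Edg_subset hloopadm hmem)
    · rintro rfl; exact hΩt _ hc hz₀
  have hW := W_const_on_preconnected ht hdisj ha hb hloopend
  rw [hWsplit a ha, hWsplit b hb] at hW
  rw [← hval₁, ← hval₂]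
  linear_combination hW

lemma V_eq {a b z₀ : ℂ} {Ω t : Set ℂ} (ht : IsPreconnected t) (ha : a ∈ t) (hb : b ∈ t)
    (hΩt : ∀ c ∈ t, c ∉ Ω) (hz₀ : z₀ ∈ Ω) {z v : ℂ} (h : VRel a b z₀ Ω z v) :
    V a b z₀ Ω z = v :=
  VRel_unique ht ha hb hΩt hz₀ (Classical.epsilon_spec (⟨v, h⟩ : ∃ v, VRel a b z₀ Ω z v)) h

/-- The square-root branch. -/
noncomputable def hfun (a b z₀ : ℂ) (Ω : Set ℂ) (z : ℂ) : ℂ :=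
  Complex.exp ((Complex.log ((z₀ - a) / (z₀ - b)) + V a b z₀ Ω z) / 2)



section BranchProps

variable {a b z₀ : ℂ} {Ω t : Set ℂ}
  (ht : IsPreconnected t) (ha : a ∈ t) (hb : b ∈ t) (hΩt : ∀ c ∈ t, c ∉ Ω)
  (hΩo : IsOpen Ω) (hΩpre : IsPreconnected Ω) (hz₀ : z₀ ∈ Ω)

include ht ha hb hΩt hz₀

lemma V_self : V a b z₀ Ω z₀ = 0 :=
  V_eq ht ha hb hΩt hz₀ ⟨[], trivial, rfl, by simp⟩

include hΩo hΩpre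

lemma V_rel_self : ∀ z ∈ Ω, VRel a b z₀ Ω z (V a b z₀ Ω z) := by
  intro z hz
  obtain ⟨l, hadm, hend⟩ := reach_all hΩo hΩpre hz₀ z hz
  have h : VRel a b z₀ Ω z (W a z₀ l - W b z₀ l) := ⟨l, hadm, hend, rfl⟩
  rw [V_eq ht ha hb hΩt hz₀ h]
  exact h

lemma hfun_sq : ∀ z ∈ Ω, (hfun a b z₀ Ω z) ^ 2 = (z - a) / (z - b) := by
  intro z hz
  have hza : z ≠ a := fun h => hΩt a ha (h ▸ hz)
  have hzb : z ≠ b := fun h => hΩt b hb (h ▸ hz)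
  have hz₀a : z₀ ≠ a := fun h => hΩt a ha (h ▸ hz₀)
  have hz₀b : z₀ ≠ b := fun h => hΩt b hb (h ▸ hz₀)
  obtain ⟨l, hadm, hend, hval⟩ := V_rel_self ht ha hb hΩt hΩo hΩpre hz₀ z hz
  have hEa : a ∉ Edg z₀ l := fun hmem => hΩt a ha (Edg_subset hadm hmem)
  have hEb : b ∉ Edg z₀ l := fun hmem => hΩt b hb (Edg_subset hadm hmem)
  have expa : Complex.exp (W a z₀ l) = (z - a) / (z₀ - a) := by
    rw [exp_W hz₀a hEa, hend]
  have expb : Complex.exp (W b z₀ l) = (z - b) / (z₀ - b) := by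
    rw [exp_W hz₀b hEb, hend]
  have hgne : (z₀ - a) / (z₀ - b) ≠ 0 :=
    div_ne_zero (sub_ne_zero_of_ne hz₀a) (sub_ne_zero_of_ne hz₀b)
  rw [hfun, sq, ← Complex.exp_add]
  have harg : (Complex.log ((z₀ - a) / (z₀ - b)) + V a b z₀ Ω z) / 2 +
      (Complex.log ((z₀ - a) / (z₀ - b)) + V a b z₀ Ω z) / 2
      = Complex.log ((z₀ - a) / (z₀ - b)) + (W a z₀ l - W b z₀ l) := by
    rw [← hval]; ring
  rw [harg, Complex.exp_add, Complex.exp_log hgne, Complex.exp_sub, expa, expb]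
  field_simp [sub_ne_zero_of_ne hza, sub_ne_zero_of_ne hzb,
    sub_ne_zero_of_ne hz₀a, sub_ne_zero_of_ne hz₀b]

lemma hfun_differentiableOn : DifferentiableOn ℂ (hfun a b z₀ Ω) Ω := by
  intro z₁ hz₁
  suffices h : DifferentiableAt ℂ (hfun a b z₀ Ω) z₁ by
    exact h.differentiableWithinAt
  obtain ⟨ε, hε, hball⟩ := Metric.isOpen_iff.mp hΩo z₁ hz₁
  have hz₁a : z₁ ≠ a := fun h => hΩt a ha (h ▸ hz₁)
  have hz₁b : z₁ ≠ b := fun h => hΩt b hb (h ▸ hz₁)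
  obtain ⟨l, hadm, hend, hval⟩ := V_rel_self ht ha hb hΩt hΩo hΩpre hz₀ z₁ hz₁
  have key : ∀ z ∈ Metric.ball z₁ ε, hfun a b z₀ Ω z = hfun a b z₀ Ω z₁ *
      Complex.exp ((Complex.log ((z - a) / (z₁ - a)) - Complex.log ((z - b) / (z₁ - b))) / 2) := by
    intro z hz
    have hseg : segment ℝ z₁ z ⊆ Ω :=
      ((convex_ball z₁ ε).segment_subset (Metric.mem_ball_self hε) hz).trans hball
    have hrel : VRel a b z₀ Ω z (V a b z₀ Ω z₁ +
        (Complex.log ((z - a) / (z₁ - a)) - Complex.log ((z - b) / (z₁ - b)))) := by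
      refine ⟨l ++ [z], Adm_append hadm (by rw [hend]; exact ⟨hseg, trivial⟩),
        by rw [endp_append, hend]; rfl, ?_⟩
      rw [W_append, W_append, hend]
      simp only [W_cons, W_nil, add_zero]
      rw [← hval]
      ring
    rw [hfun, hfun, V_eq ht ha hb hΩt hz₀ hrel, ← Complex.exp_add]
    congr 1
    ring
  have hF : DifferentiableAt ℂ (fun z => hfun a b z₀ Ω z₁ *
      Complex.exp ((Complex.log ((z - a) / (z₁ - a)) - Complex.log ((z - b) / (z₁ - b))) / 2)) z₁ := by
    have hda : DifferentiableAt ℂ (fun z => Complex.log ((z - a) / (z₁ - a))) z₁ := by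
      refine DifferentiableAt.clog ?_ ?_
      · exact (differentiableAt_id.sub_const a).div_const _
      · rw [div_self (sub_ne_zero_of_ne hz₁a)]
        exact one_mem_slitPlane
    have hdb : DifferentiableAt ℂ (fun z => Complex.log ((z - b) / (z₁ - b))) z₁ := by
      refine DifferentiableAt.clog ?_ ?_
      · exact (differentiableAt_id.sub_const b).div_const _
      · rw [div_self (sub_ne_zero_of_ne hz₁b)]
        exact one_mem_slitPlane
    exact (((hda.sub hdb).div_const 2).cexp).const_mul _
  have hEq : (hfun a b z₀ Ω) =ᶠ[nhds z₁] (fun z => hfun a b z₀ Ω z₁ *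
      Complex.exp ((Complex.log ((z - a) / (z₁ - a)) - Complex.log ((z - b) / (z₁ - b))) / 2)) := by
    filter_upwards [Metric.ball_mem_nhds z₁ hε] with z hz using key z hz
  exact hEq.differentiableAt_iff.mpr hF

end BranchProps

lemma re_large {h g : ℂ} (hsq : h ^ 2 = g) (hg : ‖g - 1‖ < 1/4) :
    1/2 < |h.re| := by
  by_contra H
  push_neg at H
  obtain ⟨hl, hr⟩ := abs_le.mp H
  have h1 : (1:ℝ)/2 ≤ ‖h - 1‖ := by
    have t1 : |(h - 1).re| ≤ ‖h - 1‖ := Complex.abs_re_le_norm _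
    have t2 : (h - 1).re = h.re - 1 := by simp
    have t3 : (1:ℝ)/2 ≤ |h.re - 1| := by
      have := neg_le_abs (h.re - 1)
      linarith
    rw [t2] at t1
    linarith
  have h2 : (1:ℝ)/2 ≤ ‖h + 1‖ := by
    have t1 : |(h + 1).re| ≤ ‖h + 1‖ := Complex.abs_re_le_norm _
    have t2 : (h + 1).re = h.re + 1 := by simp
    have t3 : (1:ℝ)/2 ≤ |h.re + 1| := by
      have := le_abs_self (h.re + 1)
      linarith
    rw [t2] at t1
    linarith
  have hfact : g - 1 = (h - 1) * (h + 1) := by rw [← hsq]; ring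
  rw [hfact, norm_mul] at hg
  nlinarith [norm_nonneg (h-1), norm_nonneg (h+1)]

lemma isPreconnected_norm_gt {R : ℝ} (hR : 0 ≤ R) :
    IsPreconnected {z : ℂ | R < ‖z‖} := by
  have hrank : 1 < Module.rank ℝ ℂ := by
    rw [Complex.rank_real_complex]
    norm_num
  have hsph : IsPreconnected (Metric.sphere (0:ℂ) 1) := isPreconnected_sphere hrank 0 1
  have hprod : IsPreconnected ((Set.Ioi R) ×ˢ (Metric.sphere (0:ℂ) 1)) :=
    isPreconnected_Ioi.prod hsph
  have hcont : Continuous (fun p : ℝ × ℂ => p.1 • p.2) := continuous_fst.smul continuous_snd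
  have himg := hprod.image _ hcont.continuousOn
  have heq : (fun p : ℝ × ℂ => p.1 • p.2) '' ((Set.Ioi R) ×ˢ (Metric.sphere (0:ℂ) 1))
      = {z : ℂ | R < ‖z‖} := by
    apply Set.Subset.antisymm
    · rintro - ⟨⟨r, w⟩, ⟨hr, hw⟩, rfl⟩
      have hw1 : ‖w‖ = 1 := by simpa using hw
      have hr0 : 0 < r := lt_of_le_of_lt hR hr
      simp only [Set.mem_setOf_eq, norm_smul, hw1, mul_one, Real.norm_eq_abs,
        abs_of_pos hr0]
      exact hr
    · intro z hz
      have hz0 : z ≠ 0 := by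
        intro h; rw [h] at hz; simp at hz; linarith [hz]
      have hnz : ‖z‖ ≠ 0 := norm_ne_zero_iff.mpr hz0
      refine ⟨(‖z‖, ‖z‖⁻¹ • z), ⟨hz, ?_⟩, ?_⟩
      · have : ‖(‖z‖⁻¹ • z)‖ = 1 := by
          rw [norm_smul, Real.norm_eq_abs, _root_.abs_of_nonneg (inv_nonneg.mpr (norm_nonneg z)),
            inv_mul_cancel₀ hnz]
        simpa using this
      · simp only [smul_smul, mul_inv_cancel₀ hnz, one_smul]
  rwa [heq] at himg

end HRemAux

/-- A compact set `E ⊆ ℂ` is `H∞`-removable if every bounded holomorphic function on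
`ℂ \ E` is constant. -/
def HInftyRemovable (E : Set ℂ) : Prop :=
  ∀ f : ℂ → ℂ, DifferentiableOn ℂ f Eᶜ → (∃ M : ℝ, ∀ z ∈ Eᶜ, ‖f z‖ ≤ M) →
    ∀ z ∈ Eᶜ, ∀ w ∈ Eᶜ, f z = f w

/-- If a compact set `E ⊆ ℂ` is `H∞`-removable, then `E` is totally disconnected. -/
theorem stmt_0 (E : Set ℂ) (hE : IsCompact E) (hrem : HInftyRemovable E) :
    IsTotallyDisconnected E := by
  classical
  intro t hts hpre
  by_contra hsub
  rw [Set.not_subsingleton_iff] at hsub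
  obtain ⟨a, ha, b, hb, hab⟩ := hsub
  open HRemAux Complex in
  -- basic geometry
  obtain ⟨R₀, hR₀⟩ := (Metric.isBounded_iff_subset_closedBall 0).mp hE.isBounded
  set d : ℝ := dist a b with hd
  have hdpos : 0 < d := dist_pos.mpr hab
  set R₁ : ℝ := max R₀ (‖b‖ + 4 * d) with hR₁
  have hR₁b : ‖b‖ + 4 * d ≤ R₁ := le_max_right _ _
  have hR₁nn : 0 ≤ R₁ := le_trans (by positivity) hR₁b
  have hbig_memE : ∀ z : ℂ, R₁ < ‖z‖ → z ∈ Eᶜ := by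
    intro z hz
    intro hzE
    have := hR₀ hzE
    simp only [Metric.mem_closedBall, dist_zero_right] at this
    have : ‖z‖ ≤ R₁ := le_trans this (le_max_left _ _)
    linarith
  have hzb_far : ∀ z : ℂ, R₁ < ‖z‖ → 4 * d < ‖z - b‖ := by
    intro z hz
    have h1 : ‖z - b‖ ≥ ‖z‖ - ‖b‖ := by
      have h2 := norm_add_le (z - b) b
      rw [sub_add_cancel] at h2
      linarith
    have : ‖b‖ + 4 * d < ‖z‖ := lt_of_le_of_lt hR₁b hz
    linarith
  have hg_near : ∀ z : ℂ, R₁ < ‖z‖ → ‖(z - a)/(z - b) - 1‖ < 1/4 := by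
    intro z hz
    have h4d := hzb_far z hz
    have hzb : z - b ≠ 0 := by
      intro h
      rw [h] at h4d
      simp at h4d
      linarith
    have heq : (z - a)/(z - b) - 1 = (b - a)/(z - b) := by
      field_simp
      ring
    rw [heq, norm_div]
    have hba : ‖b - a‖ = d := by
      rw [hd, dist_comm, Complex.dist_eq]
    rw [hba]
    rw [div_lt_iff₀ (norm_pos_iff.mpr hzb)]
    nlinarith
  -- the base point and the component
  set z₀ : ℂ := ((R₁ + 1 : ℝ) : ℂ) with hz₀def
  have hz₀norm : ‖z₀‖ = R₁ + 1 := by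
    rw [hz₀def, Complex.norm_real, Real.norm_eq_abs, _root_.abs_of_nonneg (by linarith)]
  have hz₀E : z₀ ∈ Eᶜ := hbig_memE z₀ (by rw [hz₀norm]; linarith)
  set Ω : Set ℂ := connectedComponentIn Eᶜ z₀ with hΩdef
  have hΩo : IsOpen Ω := hE.isClosed.isOpen_compl.connectedComponentIn
  have hΩpre : IsPreconnected Ω := isPreconnected_connectedComponentIn
  have hz₀Ω : z₀ ∈ Ω := mem_connectedComponentIn hz₀E
  have hΩE : Ω ⊆ Eᶜ := connectedComponentIn_subset _ _
  have hΩt : ∀ c ∈ t, c ∉ Ω := fun c hc hcΩ => (hΩE hcΩ) (hts hc)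
  -- the far region
  set A : Set ℂ := {z : ℂ | R₁ < ‖z‖} with hA
  have hApre : IsPreconnected A := isPreconnected_norm_gt hR₁nn
  have hz₀A : z₀ ∈ A := by rw [hA, Set.mem_setOf_eq, hz₀norm]; linarith
  have hAΩ : A ⊆ Ω := hApre.subset_connectedComponentIn hz₀A (fun z hz => hbig_memE z hz)
  -- the branch
  set h : ℂ → ℂ := hfun a b z₀ Ω with hhdef
  have hsq : ∀ z ∈ Ω, h z ^ 2 = (z - a)/(z - b) := hfun_sq hpre ha hb hΩt hΩo hΩpre hz₀Ω
  have hdiff : DifferentiableOn ℂ h Ω := hfun_differentiableOn hpre ha hb hΩt hΩo hΩpre hz₀Ω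
  -- positivity of the real part at the base point
  have hre0 : 0 < (h z₀).re := by
    have hV0 : V a b z₀ Ω z₀ = 0 := V_self hpre ha hb hΩt hz₀Ω
    have hform : h z₀ = Complex.exp (Complex.log ((z₀ - a)/(z₀ - b)) / 2) := by
      rw [hhdef, hfun, hV0, add_zero]
    set w : ℂ := (z₀ - a)/(z₀ - b) with hw
    have hwnear : ‖w - 1‖ < 1/4 := hg_near z₀ (by rw [hz₀norm]; linarith)
    have hwre : 0 < w.re := by
      have t1 : |(w - 1).re| ≤ ‖w - 1‖ := Complex.abs_re_le_norm _
      have t2 : (w - 1).re = w.re - 1 := by simp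
      rw [t2] at t1
      have := neg_abs_le (w.re - 1)
      linarith
    have harg : |w.arg| < Real.pi / 2 := Complex.abs_arg_lt_pi_div_two_iff.mpr (Or.inl hwre)
    have him : (Complex.log w / 2).im = w.arg / 2 := by
      rw [Complex.div_im]
      simp [Complex.log_im]
      ring
    have hre : (Complex.log w / 2).re = (Complex.log w).re / 2 := by
      rw [Complex.div_re]
      simp
      ring
    rw [hform, Complex.exp_re, him, hre]
    have hcos : 0 < Real.cos (w.arg / 2) := by
      apply Real.cos_pos_of_mem_Ioo
      constructor
      · nlinarith [abs_lt.mp harg, Real.pi_pos]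
      · nlinarith [abs_lt.mp harg, Real.pi_pos]
    positivity
  -- |Re h| > 1/2 on A
  have hre_half : ∀ z ∈ A, 1/2 < |(h z).re| := fun z hz =>
    re_large (hsq z (hAΩ hz)) (hg_near z hz)
  -- Re h > 1/2 on A, by connectedness
  have hreA : ∀ z ∈ A, 1/2 < (h z).re := by
    have hcont : ContinuousOn (fun z => (h z).re) Ω :=
      Complex.continuous_re.comp_continuousOn hdiff.continuousOn
    set u : Set ℂ := Ω ∩ (fun z => (h z).re) ⁻¹' (Set.Ioi (1/2)) with hu
    set v : Set ℂ := Ω ∩ (fun z => (h z).re) ⁻¹' (Set.Iio (-(1/2))) with hv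
    have hou : IsOpen u := hcont.isOpen_inter_preimage hΩo isOpen_Ioi
    have hov : IsOpen v := hcont.isOpen_inter_preimage hΩo isOpen_Iio
    have hdisj : Disjoint u v := by
      rw [Set.disjoint_left]
      rintro z ⟨_, h1⟩ ⟨_, h2⟩
      simp only [Set.mem_preimage, Set.mem_Ioi, Set.mem_Iio] at h1 h2
      linarith
    have hcov : A ⊆ u ∪ v := by
      intro z hz
      have := hre_half z hz
      rcases abs_cases ((h z).re) with ⟨he, _⟩ | ⟨he, _⟩
      · exact Or.inl ⟨hAΩ hz, by simp only [Set.mem_preimage, Set.mem_Ioi]; linarith⟩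
      · exact Or.inr ⟨hAΩ hz, by simp only [Set.mem_preimage, Set.mem_Iio]; linarith⟩
    rcases hApre.subset_or_subset hou hov hdisj hcov with hsub | hsub
    · intro z hz
      have := (hsub hz).2
      simpa using this
    · exfalso
      have := (hsub hz₀A).2
      simp only [Set.mem_preimage, Set.mem_Iio] at this
      have h2 := hre_half z₀ hz₀A
      linarith
  -- lower bound for |h z + 1| on Ω
  set c₀ : ℝ := d / (R₁ + ‖b‖) with hc₀
  have hRb : 0 < R₁ + ‖b‖ := by
    have := norm_nonneg b
    nlinarith
  have hc₀pos : 0 < c₀ := div_pos hdpos hRb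
  set δ : ℝ := min (3/2) (c₀/4) with hδ
  have hδpos : 0 < δ := lt_min (by norm_num) (by positivity)
  have hlow : ∀ z ∈ Ω, δ ≤ ‖h z + 1‖ := by
    intro z hz
    by_cases hzA : R₁ < ‖z‖
    · -- far away : real part is large
      have := hreA z hzA
      have hre_le : (h z + 1).re ≤ ‖h z + 1‖ := Complex.re_le_norm _
      have : (3:ℝ)/2 ≤ ‖h z + 1‖ := by
        simp only [Complex.add_re, Complex.one_re] at hre_le
        linarith
      exact le_trans (min_le_left _ _) this
    · -- close : use |g - 1| ≥ c₀
      push_neg at hzA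
      have hzb : z ≠ b := fun h => hΩt b hb (h ▸ hz)
      have hzbne : z - b ≠ 0 := sub_ne_zero_of_ne hzb
      have habs_zb : ‖z - b‖ ≤ R₁ + ‖b‖ := by
        have h2 := norm_add_le z (-b)
        rw [← sub_eq_add_neg] at h2
        rw [norm_neg] at h2
        linarith
      have hg1 : c₀ ≤ ‖(z - a)/(z - b) - 1‖ := by
        have heq : (z - a)/(z - b) - 1 = (b - a)/(z - b) := by
          field_simp
          ring
        rw [heq, norm_div]
        have hba : ‖b - a‖ = d := by rw [hd, dist_comm, Complex.dist_eq]
        rw [hba, hc₀, div_le_div_iff₀ hRb (norm_pos_iff.mpr hzbne)]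
        exact mul_le_mul_of_nonneg_left habs_zb (le_of_lt hdpos)
      have hfact : ‖h z - 1‖ * ‖h z + 1‖ =
          ‖(z - a)/(z - b) - 1‖ := by
        rw [← norm_mul]
        congr 1
        rw [← hsq z hz]
        ring
      by_cases hh3 : ‖h z‖ ≤ 3
      · have hm1 : ‖h z - 1‖ ≤ 4 := by
          have h2 := norm_add_le (h z) (-1)
          rw [← sub_eq_add_neg] at h2
          rw [norm_neg, norm_one] at h2
          linarith
        have : c₀ ≤ 4 * ‖h z + 1‖ := by
          calc c₀ ≤ ‖h z - 1‖ * ‖h z + 1‖ := by rw [hfact]; exact hg1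
          _ ≤ 4 * ‖h z + 1‖ := by
              apply mul_le_mul_of_nonneg_right hm1 (norm_nonneg _)
        have : c₀ / 4 ≤ ‖h z + 1‖ := by linarith
        exact le_trans (min_le_right _ _) this
      · push_neg at hh3
        have : ‖h z‖ - 1 ≤ ‖h z + 1‖ := by
          have h2 := norm_add_le (h z + 1) (-1)
          have h3 : h z + 1 + (-1) = h z := by ring
          rw [h3] at h2
          rw [norm_neg, norm_one] at h2
          linarith
        refine le_trans (min_le_left _ _) (by linarith)
  have hne : ∀ z ∈ Ω, h z + 1 ≠ 0 := by
    intro z hz hcon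
    have := hlow z hz
    rw [hcon] at this
    simp at this
    linarith
  -- the test function
  set f : ℂ → ℂ := fun z => if z ∈ Ω then (h z + 1)⁻¹ else 0 with hf
  have hfd : DifferentiableOn ℂ f Eᶜ := by
    intro z hz
    by_cases hzΩ : z ∈ Ω
    · suffices hd : DifferentiableAt ℂ f z from hd.differentiableWithinAt
      have hEq : f =ᶠ[nhds z] (fun w => (h w + 1)⁻¹) := by
        filter_upwards [hΩo.mem_nhds hzΩ] with w hw
        rw [hf]
        simp only [if_pos hw]
      rw [hEq.differentiableAt_iff]
      have hhz : DifferentiableAt ℂ h z := hdiff.differentiableAt (hΩo.mem_nhds hzΩ)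
      exact (hhz.add_const 1).inv (hne z hzΩ)
    · suffices hd : DifferentiableAt ℂ f z from hd.differentiableWithinAt
      set Ω' : Set ℂ := connectedComponentIn Eᶜ z with hΩ'
      have hΩ'o : IsOpen Ω' := hE.isClosed.isOpen_compl.connectedComponentIn
      have hzΩ' : z ∈ Ω' := mem_connectedComponentIn hz
      have hdisj : ∀ w ∈ Ω', w ∉ Ω := by
        intro w hw hwΩ
        have h1 : connectedComponentIn Eᶜ z = connectedComponentIn Eᶜ w :=
          connectedComponentIn_eq hw
        have h2 : connectedComponentIn Eᶜ z₀ = connectedComponentIn Eᶜ w :=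
          connectedComponentIn_eq hwΩ
        apply hzΩ
        rw [hΩdef, h2, ← h1]
        exact hzΩ'
      have hEq : f =ᶠ[nhds z] (fun _ => 0) := by
        filter_upwards [hΩ'o.mem_nhds hzΩ'] with w hw
        rw [hf]
        simp only [if_neg (hdisj w hw)]
      rw [hEq.differentiableAt_iff]
      exact differentiableAt_const 0
  have hfb : ∃ M : ℝ, ∀ z ∈ Eᶜ, ‖f z‖ ≤ M := by
    refine ⟨δ⁻¹, fun z _ => ?_⟩
    rw [hf]
    by_cases hzΩ : z ∈ Ω
    · simp only [if_pos hzΩ, norm_inv]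
      exact inv_anti₀ hδpos (hlow z hzΩ)
    · simp only [if_neg hzΩ, norm_zero]
      positivity
  -- apply removability
  have hz₁A : z₀ + 1 ∈ A := by
    rw [hA, Set.mem_setOf_eq]
    have : z₀ + 1 = ((R₁ + 2 : ℝ) : ℂ) := by
      rw [hz₀def]; push_cast; ring
    rw [this, Complex.norm_real, Real.norm_eq_abs, _root_.abs_of_nonneg (by linarith)]
    linarith
  have hz₁Ω : z₀ + 1 ∈ Ω := hAΩ hz₁A
  have hfeq := hrem f hfd hfb z₀ (hΩE hz₀Ω) (z₀ + 1) (hΩE hz₁Ω)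
  rw [hf] at hfeq
  simp only [if_pos hz₀Ω, if_pos hz₁Ω] at hfeq
  have hheq : h z₀ = h (z₀ + 1) := by
    have := inv_injective hfeq
    linear_combination this
  have hgeq : (z₀ - a)/(z₀ - b) = (z₀ + 1 - a)/(z₀ + 1 - b) := by
    rw [← hsq z₀ hz₀Ω, ← hsq (z₀ + 1) hz₁Ω, hheq]
  have hz₀b : z₀ - b ≠ 0 := sub_ne_zero_of_ne (fun h => hΩt b hb (h ▸ hz₀Ω))
  have hz₁b : z₀ + 1 - b ≠ 0 := sub_ne_zero_of_ne (fun h => hΩt b hb (h ▸ hz₁Ω))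
  rw [div_eq_div_iff hz₀b hz₁b] at hgeq
  apply hab
  linear_combination -hgeq
end

section
/- Let E ⊆ ℂ be a compact set. The following are equivalent: (i) for every open set U ⊆ ℂ with E ⊆ U, every bounded holomorphic function on U \ E extends to a bounded holomorphic function on U (i.e. there is a bounded holomorphic g on U agreeing with f on U \ E); (ii) E is H∞-removable. -/
open Complex Metric Set intervalIntegral
open scoped Real Interval Topology

noncomputable section HRem

namespace HRem

/-- Horizontal edge integral: the segment from `s*m + s*n*I` to `s*(m+1) + s*n*I`. -/
def eH (s : ℝ) (φ : ℂ → ℂ) (m n : ℤ) : ℂ :=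
  ∫ x : ℝ in (s*m)..(s*(m+1)), φ (x + (s*n : ℝ) * I)

/-- Vertical edge integral: the segment from `s*m + s*n*I` to `s*m + s*(n+1)*I`, times `I`. -/
def eV (s : ℝ) (φ : ℂ → ℂ) (m n : ℤ) : ℂ :=
  I • ∫ y : ℝ in (s*n)..(s*(n+1)), φ ((s*m : ℝ) + y * I)

/-- Counterclockwise boundary integral over the grid square indexed by `p`. -/
def rectB (s : ℝ) (φ : ℂ → ℂ) (p : ℤ × ℤ) : ℂ :=
  eH s φ p.1 p.2 - eH s φ p.1 (p.2+1) + eV s φ (p.1+1) p.2 - eV s φ p.1 p.2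

/-- The closed grid square indexed by `p`. -/
def sqr (s : ℝ) (p : ℤ × ℤ) : Set ℂ :=
  Icc (s*p.1) (s*(p.1+1)) ×ℂ Icc (s*p.2) (s*(p.2+1))

/-- The open grid square. -/
def sqrO (s : ℝ) (p : ℤ × ℤ) : Set ℂ :=
  {z : ℂ | s*p.1 < z.re ∧ z.re < s*(p.1+1) ∧ s*p.2 < z.im ∧ z.im < s*(p.2+1)}

lemma mem_sqr {s : ℝ} {p : ℤ × ℤ} {z : ℂ} :
    z ∈ sqr s p ↔ (s*p.1 ≤ z.re ∧ z.re ≤ s*(p.1+1)) ∧ (s*p.2 ≤ z.im ∧ z.im ≤ s*(p.2+1)) := by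
  simp [sqr, Complex.mem_reProdIm, Set.mem_Icc, and_assoc]

lemma sqrO_subset_sqr {s : ℝ} {p : ℤ × ℤ} : sqrO s p ⊆ sqr s p := by
  intro z hz
  rcases hz with ⟨h1, h2, h3, h4⟩
  exact mem_sqr.2 ⟨⟨h1.le, h2.le⟩, ⟨h3.le, h4.le⟩⟩

lemma isClosed_sqr {s : ℝ} {p : ℤ × ℤ} : IsClosed (sqr s p) := by
  have : sqr s p = Complex.re ⁻¹' (Icc (s*p.1) (s*(p.1+1))) ∩
      Complex.im ⁻¹' (Icc (s*p.2) (s*(p.2+1))) := by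
    ext z; simp [sqr, Complex.mem_reProdIm]
  rw [this]
  exact ((isClosed_Icc.preimage Complex.continuous_re).inter
    (isClosed_Icc.preimage Complex.continuous_im))

/-- Uniqueness: a point with strict coordinates for `q` belongs only to the square `q`. -/
lemma sqr_unique {s : ℝ} (hs : 0 < s) {p q : ℤ × ℤ} {z : ℂ}
    (hzO : z ∈ sqrO s q) (hz : z ∈ sqr s p) : p = q := by
  rcases hzO with ⟨h1, h2, h3, h4⟩
  rcases mem_sqr.1 hz with ⟨⟨a1, a2⟩, ⟨a3, a4⟩⟩
  have e1 : p.1 = q.1 := by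
    have l1 : (p.1 : ℝ) < q.1 + 1 := by
      have := lt_of_le_of_lt a1 h2
      have := (mul_lt_mul_iff_right₀ hs).1 this
      push_cast at this ⊢; linarith
    have l2 : (q.1 : ℝ) < p.1 + 1 := by
      have := lt_of_lt_of_le h1 a2
      have := (mul_lt_mul_iff_right₀ hs).1 this
      push_cast at this ⊢; linarith
    have : p.1 < q.1 + 1 := by exact_mod_cast l1
    have : q.1 < p.1 + 1 := by exact_mod_cast l2
    omega
  have e2 : p.2 = q.2 := by
    have l1 : (p.2 : ℝ) < q.2 + 1 := by
      have := lt_of_le_of_lt a3 h4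
      have := (mul_lt_mul_iff_right₀ hs).1 this
      push_cast at this ⊢; linarith
    have l2 : (q.2 : ℝ) < p.2 + 1 := by
      have := lt_of_lt_of_le h3 a4
      have := (mul_lt_mul_iff_right₀ hs).1 this
      push_cast at this ⊢; linarith
    have : p.2 < q.2 + 1 := by exact_mod_cast l1
    have : q.2 < p.2 + 1 := by exact_mod_cast l2
    omega
  exact Prod.ext e1 e2

/-- The center of a square. -/
def ctr (s : ℝ) (p : ℤ × ℤ) : ℂ := Complex.mk (s*p.1 + s/2) (s*p.2 + s/2)

lemma ctr_mem_sqrO {s : ℝ} (hs : 0 < s) (p : ℤ × ℤ) : ctr s p ∈ sqrO s p := by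
  constructor
  · show s*p.1 < s*p.1 + s/2; linarith
  refine ⟨?_, ?_, ?_⟩
  · show s*p.1 + s/2 < s*(p.1+1); push_cast; nlinarith
  · show s*p.2 < s*p.2 + s/2; linarith
  · show s*p.2 + s/2 < s*(p.2+1); push_cast; nlinarith

lemma combo_mem_sqrO {s : ℝ} (hs : 0 < s) {p : ℤ × ℤ} {z : ℂ} (hz : z ∈ sqr s p)
    {t : ℝ} (ht0 : 0 < t) (ht1 : t ≤ 1) : z + (t : ℂ) * (ctr s p - z) ∈ sqrO s p := by
  rcases mem_sqr.1 hz with ⟨⟨a1, a2⟩, ⟨a3, a4⟩⟩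
  have hre : (z + (t : ℂ) * (ctr s p - z)).re = z.re + t * ((s*p.1 + s/2) - z.re) := by
    simp [ctr, Complex.add_re, Complex.mul_re, Complex.sub_re, Complex.ofReal_re,
      Complex.ofReal_im, Complex.sub_im]
    try ring
  have him : (z + (t : ℂ) * (ctr s p - z)).im = z.im + t * ((s*p.2 + s/2) - z.im) := by
    simp [ctr, Complex.add_im, Complex.mul_im, Complex.sub_im, Complex.ofReal_re,
      Complex.ofReal_im, Complex.sub_re]
    try ring
  have hp1 : (s:ℝ)*(p.1+1) = s*p.1 + s := by push_cast; ring
  have hp2 : (s:ℝ)*(p.2+1) = s*p.2 + s := by push_cast; ring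
  have hp1' := hp1; have hp2' := hp2
  refine ⟨?_, ?_, ?_, ?_⟩
  · show s*p.1 < (z + (t:ℂ) * (ctr s p - z)).re
    rw [hre]; nlinarith
  · show (z + (t:ℂ) * (ctr s p - z)).re < s*(p.1+1)
    rw [hre, hp1]; nlinarith
  · show s*p.2 < (z + (t:ℂ) * (ctr s p - z)).im
    rw [him]; nlinarith
  · show (z + (t:ℂ) * (ctr s p - z)).im < s*(p.2+1)
    rw [him, hp2]; nlinarith

lemma sqr_eq_uIcc {s : ℝ} (hs : 0 < s) (p : ℤ × ℤ) :
    sqr s p = uIcc (s*p.1) (s*(p.1+1)) ×ℂ uIcc (s*p.2) (s*(p.2+1)) := by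
  have h1 : (s:ℝ)*p.1 ≤ s*(p.1+1) := by nlinarith [hs.le]
  have h2 : (s:ℝ)*p.2 ≤ s*(p.2+1) := by nlinarith [hs.le]
  rw [sqr, uIcc_of_le h1, uIcc_of_le h2]

/-- Cauchy–Goursat on a grid square. -/
lemma rectB_zero {s : ℝ} (hs : 0 < s) {φ : ℂ → ℂ} {p : ℤ × ℤ}
    (hφ : DifferentiableOn ℂ φ (sqr s p)) : rectB s φ p = 0 := by
  have key := Complex.integral_boundary_rect_eq_zero_of_differentiableOn φ
    (Complex.mk (s*p.1) (s*p.2)) (Complex.mk (s*(p.1+1)) (s*(p.2+1))) (by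
      rw [sqr_eq_uIcc hs] at hφ; exact hφ)
  simpa [rectB, eH, eV, Complex.mk] using key

/-- `log (-x) = log x + π I` for `x` in the open lower half plane. -/
lemma log_neg_of_im_neg {x : ℂ} (hx : x.im < 0) : Complex.log (-x) = Complex.log x + π * I := by
  rw [Complex.log, Complex.log, norm_neg, Complex.arg_neg_eq_arg_add_pi_of_im_neg hx]
  push_cast
  ring

/-- `log (-x) = log x - π I` for `x` in the open upper half plane. -/
lemma log_neg_of_im_pos {x : ℂ} (hx : 0 < x.im) : Complex.log (-x) = Complex.log x - π * I := by
  rw [Complex.log, Complex.log, norm_neg, Complex.arg_neg_eq_arg_sub_pi_of_im_pos hx]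
  push_cast
  ring

lemma integral_horiz {z : ℂ} {c : ℝ} (hc : c ≠ z.im) (a b : ℝ) :
    ∫ x : ℝ in a..b, ((x : ℂ) + (c:ℝ) * I - z)⁻¹
      = Complex.log ((b:ℂ) + (c:ℝ)*I - z) - Complex.log ((a:ℂ) + (c:ℝ)*I - z) := by
  have hne : ∀ x : ℝ, ((x:ℂ) + (c:ℝ)*I - z) ∈ Complex.slitPlane := by
    intro x
    rw [Complex.mem_slitPlane_iff]
    right
    simp only [Complex.sub_im, Complex.add_im, Complex.ofReal_im, Complex.mul_im,
      Complex.ofReal_re, Complex.I_im, Complex.I_re, mul_zero, mul_one, zero_add, zero_mul]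
    intro h; exact hc (by linarith)
  have hder : ∀ x ∈ uIcc a b,
      HasDerivAt (fun x : ℝ => Complex.log ((x:ℂ) + (c:ℝ)*I - z))
        (((x:ℂ) + (c:ℝ)*I - z)⁻¹) x := by
    intro x _
    have h1 : HasDerivAt (fun w : ℂ => w + (c:ℝ)*I - z) 1 (x:ℂ) :=
      ((hasDerivAt_id _).add_const _).sub_const _
    have h2 : HasDerivAt (fun w : ℂ => Complex.log (w + (c:ℝ)*I - z))
        (1 / ((x:ℂ) + (c:ℝ)*I - z)) (x:ℂ) := h1.clog (hne x)
    have h3 := h2.comp_ofReal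
    rwa [one_div] at h3
  have hcont : Continuous (fun x : ℝ => ((x:ℂ) + (c:ℝ)*I - z)⁻¹) := by
    apply Continuous.inv₀
    · continuity
    · intro x; exact Complex.slitPlane_ne_zero (hne x)
  rw [intervalIntegral.integral_eq_sub_of_hasDerivAt hder (hcont.intervalIntegrable a b)]

lemma integral_vert_pos {z : ℂ} {c : ℝ} (hc : z.re < c) (a b : ℝ) :
    ∫ y : ℝ in a..b, ((c:ℂ) + (y:ℝ) * I - z)⁻¹
      = (-I) * (Complex.log ((c:ℂ) + (b:ℝ)*I - z) - Complex.log ((c:ℂ) + (a:ℝ)*I - z)) := by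
  have hne : ∀ y : ℝ, ((c:ℂ) + (y:ℝ)*I - z) ∈ Complex.slitPlane := by
    intro y
    rw [Complex.mem_slitPlane_iff]
    left
    simp only [Complex.sub_re, Complex.add_re, Complex.ofReal_re, Complex.mul_re,
      Complex.ofReal_im, Complex.I_re, Complex.I_im, mul_zero, mul_one, zero_mul, sub_zero]
    linarith
  have hder : ∀ y ∈ uIcc a b,
      HasDerivAt (fun y : ℝ => (-I) * Complex.log ((c:ℂ) + (y:ℝ)*I - z))
        (((c:ℂ) + (y:ℝ)*I - z)⁻¹) y := by
    intro y _
    have h1 : HasDerivAt (fun w : ℂ => (c:ℂ) + w*I - z) I (y:ℂ) := by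
      simpa using (((hasDerivAt_id ((y:ℝ):ℂ)).mul_const I).const_add (c:ℂ)).sub_const z
    have h2 : HasDerivAt (fun w : ℂ => (-I) * Complex.log ((c:ℂ) + w*I - z))
        ((-I) * (I / ((c:ℂ) + (y:ℝ)*I - z))) (y:ℂ) := (h1.clog (hne y)).const_mul (-I)
    have h3 := h2.comp_ofReal
    have he : (-I) * (I / ((c:ℂ) + (y:ℝ)*I - z)) = ((c:ℂ) + (y:ℝ)*I - z)⁻¹ := by
      rw [mul_div_assoc', neg_mul, Complex.I_mul_I, neg_neg, one_div]
    rwa [he] at h3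
  have hcont : Continuous (fun y : ℝ => ((c:ℂ) + (y:ℝ)*I - z)⁻¹) := by
    apply Continuous.inv₀
    · continuity
    · intro y; exact Complex.slitPlane_ne_zero (hne y)
  rw [intervalIntegral.integral_eq_sub_of_hasDerivAt hder (hcont.intervalIntegrable a b)]
  ring

lemma integral_vert_neg {z : ℂ} {c : ℝ} (hc : c < z.re) (a b : ℝ) :
    ∫ y : ℝ in a..b, ((c:ℂ) + (y:ℝ) * I - z)⁻¹
      = (-I) * (Complex.log (-((c:ℂ) + (b:ℝ)*I - z)) - Complex.log (-((c:ℂ) + (a:ℝ)*I - z))) := by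
  have hne : ∀ y : ℝ, (-((c:ℂ) + (y:ℝ)*I - z)) ∈ Complex.slitPlane := by
    intro y
    rw [Complex.mem_slitPlane_iff]
    left
    simp only [Complex.neg_re, Complex.sub_re, Complex.add_re, Complex.ofReal_re, Complex.mul_re,
      Complex.ofReal_im, Complex.I_re, Complex.I_im, mul_zero, mul_one, zero_mul, sub_zero]
    linarith
  have hder : ∀ y ∈ uIcc a b,
      HasDerivAt (fun y : ℝ => (-I) * Complex.log (-((c:ℂ) + (y:ℝ)*I - z)))
        (((c:ℂ) + (y:ℝ)*I - z)⁻¹) y := by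
    intro y _
    have h1 : HasDerivAt (fun w : ℂ => -((c:ℂ) + w*I - z)) (-I) (y:ℂ) := by
      have h := ((((hasDerivAt_id ((y:ℝ):ℂ)).mul_const I).const_add (c:ℂ)).sub_const z).neg
      simp only [one_mul] at h
      exact h
    have h2 : HasDerivAt (fun w : ℂ => (-I) * Complex.log (-((c:ℂ) + w*I - z)))
        ((-I) * ((-I) / (-((c:ℂ) + (y:ℝ)*I - z)))) (y:ℂ) := (h1.clog (hne y)).const_mul (-I)
    have h3 := h2.comp_ofReal
    have he : (-I) * ((-I) / (-((c:ℂ) + (y:ℝ)*I - z))) = ((c:ℂ) + (y:ℝ)*I - z)⁻¹ := by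
      rw [mul_div_assoc', neg_mul_neg, Complex.I_mul_I, div_neg, neg_div, neg_neg, one_div]
    rwa [he] at h3
  have hcont : Continuous (fun y : ℝ => ((c:ℂ) + (y:ℝ)*I - z)⁻¹) := by
    apply Continuous.inv₀
    · continuity
    · intro y h
      have : (-((c:ℂ) + (y:ℝ)*I - z)) = 0 := by rw [h, neg_zero]
      exact Complex.slitPlane_ne_zero (hne y) this
  rw [intervalIntegral.integral_eq_sub_of_hasDerivAt hder (hcont.intervalIntegrable a b)]
  ring

/-- Winding of the square boundary around an interior point. -/
lemma rectB_winding {s : ℝ} (hs : 0 < s) {p : ℤ × ℤ} {z : ℂ} (hz : z ∈ sqrO s p) :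
    rectB s (fun w => (w - z)⁻¹) p = 2 * π * I := by
  obtain ⟨h1, h2, h3, h4⟩ := hz
  set A00 : ℂ := (s:ℂ)*(p.1:ℤ) + (s:ℂ)*(p.2:ℤ)*I - z with hA00
  set A10 : ℂ := (s:ℂ)*((p.1:ℤ)+1) + (s:ℂ)*(p.2:ℤ)*I - z with hA10
  set A01 : ℂ := (s:ℂ)*(p.1:ℤ) + (s:ℂ)*((p.2:ℤ)+1)*I - z with hA01
  set A11 : ℂ := (s:ℂ)*((p.1:ℤ)+1) + (s:ℂ)*((p.2:ℤ)+1)*I - z with hA11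
  have hbot : eH s (fun w => (w - z)⁻¹) p.1 p.2 = Complex.log A10 - Complex.log A00 := by
    simp only [eH]
    refine (integral_horiz (c := s*(p.2:ℤ)) h3.ne _ _).trans ?_
    rw [hA10, hA00]; congr 2 <;> push_cast <;> ring
  have htop : eH s (fun w => (w - z)⁻¹) p.1 (p.2+1) = Complex.log A11 - Complex.log A01 := by
    simp only [eH]
    have hne : s*(((p.2+1):ℤ):ℝ) ≠ z.im := by push_cast; intro h; rw [← h] at h4; push_cast at h4; linarith
    refine (integral_horiz (c := s*((p.2+1):ℤ)) hne _ _).trans ?_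
    rw [hA11, hA01]; congr 2 <;> push_cast <;> ring
  have hright : eV s (fun w => (w - z)⁻¹) (p.1+1) p.2
      = I • ((-I) * (Complex.log A11 - Complex.log A10)) := by
    simp only [eV]
    congr 1
    have hlt : z.re < s*(((p.1+1):ℤ):ℝ) := by push_cast; push_cast at h2; linarith
    refine (integral_vert_pos (c := s*((p.1+1):ℤ)) hlt _ _).trans ?_
    rw [hA11, hA10]; congr 3 <;> push_cast <;> ring
  have hleft : eV s (fun w => (w - z)⁻¹) p.1 p.2
      = I • ((-I) * (Complex.log (-A01) - Complex.log (-A00))) := by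
    simp only [eV]
    congr 1
    refine (integral_vert_neg (c := s*(p.1:ℤ)) h1 _ _).trans ?_
    rw [hA01, hA00]; congr 3 <;> push_cast <;> ring
  have him0 : A00.im < 0 := by
    rw [hA00]
    simp only [Complex.sub_im, Complex.add_im, Complex.mul_im, Complex.I_im, Complex.I_re,
      Complex.ofReal_re, Complex.ofReal_im, Complex.intCast_im, Complex.intCast_re,
      Complex.mul_re, mul_zero, mul_one, zero_mul, zero_add, sub_zero, add_zero]
    push_cast; nlinarith [h3]
  have him1 : 0 < A01.im := by
    rw [hA01]
    simp only [Complex.sub_im, Complex.add_im, Complex.mul_im, Complex.I_im, Complex.I_re,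
      Complex.ofReal_re, Complex.ofReal_im, Complex.intCast_im, Complex.intCast_re,
      Complex.mul_re, Complex.add_re, Complex.one_re, Complex.one_im, mul_zero, mul_one,
      zero_mul, zero_add, sub_zero, add_zero]
    push_cast; nlinarith [h4]
  have e0 := log_neg_of_im_neg him0
  have e1 := log_neg_of_im_pos him1
  rw [rectB, hbot, htop, hright, hleft, e0, e1, smul_eq_mul, smul_eq_mul]
  have : I * -I = 1 := by rw [mul_neg, Complex.I_mul_I, neg_neg]
  calc Complex.log A10 - Complex.log A00 - (Complex.log A11 - Complex.log A01) +
        I * (-I * (Complex.log A11 - Complex.log A10)) -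
        I * (-I * (Complex.log A01 - (π:ℂ) * I - (Complex.log A00 + (π:ℂ) * I)))
      = Complex.log A10 - Complex.log A00 - (Complex.log A11 - Complex.log A01) +
        (I * -I) * (Complex.log A11 - Complex.log A10) -
        (I * -I) * (Complex.log A01 - (π:ℂ) * I - (Complex.log A00 + (π:ℂ) * I)) := by ring
    _ = 2 * π * I := by rw [this]; ring

lemma horiz_edge_mem {s : ℝ} (hs : 0 < s) {m n k : ℤ} (hk : n = k ∨ n = k+1) :
    ∀ x ∈ uIcc (s*(m:ℝ)) (s*((m:ℝ)+1)), (((x:ℝ):ℂ) + ((s*(n:ℝ) : ℝ):ℂ)*I) ∈ sqr s (m, k) := by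
  intro x hx
  have hle : s*(m:ℝ) ≤ s*((m:ℝ)+1) := by nlinarith
  rw [uIcc_of_le hle] at hx
  rw [mem_sqr]
  constructor
  · simpa using hx
  · have : (((x:ℝ):ℂ) + ((s*(n:ℝ) : ℝ):ℂ)*I).im = s*(n:ℝ) := by simp
    rw [this]
    rcases hk with h | h <;> subst h
    · simp only []
      constructor
      · exact le_refl _
      · push_cast; nlinarith
    · constructor
      · push_cast; nlinarith
      · push_cast; exact le_refl _

lemma vert_edge_mem {s : ℝ} (hs : 0 < s) {m n k : ℤ} (hk : m = k ∨ m = k+1) :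
    ∀ y ∈ uIcc (s*(n:ℝ)) (s*((n:ℝ)+1)), (((s*(m:ℝ) : ℝ):ℂ) + ((y:ℝ):ℂ)*I) ∈ sqr s (k, n) := by
  intro y hy
  have hle : s*(n:ℝ) ≤ s*((n:ℝ)+1) := by nlinarith
  rw [uIcc_of_le hle] at hy
  rw [mem_sqr]
  constructor
  · have : (((s*(m:ℝ) : ℝ):ℂ) + ((y:ℝ):ℂ)*I).re = s*(m:ℝ) := by simp
    rw [this]
    rcases hk with h | h <;> subst h
    · constructor
      · exact le_refl _
      · push_cast; nlinarith
    · constructor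
      · push_cast; nlinarith
      · push_cast; exact le_refl _
  · simpa using hy

lemma eH_split {s : ℝ} {f : ℂ → ℂ} {z : ℂ} {m n : ℤ} (hz : (s*(n:ℝ)) ≠ z.im)
    (h1 : IntervalIntegrable (fun x : ℝ => dslope f z (((x:ℝ):ℂ) + ((s*(n:ℝ)):ℝ)*I))
      MeasureTheory.volume (s*(m:ℝ)) (s*((m:ℝ)+1))) :
    eH s (fun w => f w * (w - z)⁻¹) m n
      = eH s (dslope f z) m n + f z * eH s (fun w => (w - z)⁻¹) m n := by
  have hnept : ∀ x : ℝ, (((x:ℝ):ℂ) + ((s*(n:ℝ)):ℝ)*I) ≠ z := by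
    intro x h
    apply hz
    rw [← h]; simp
  have hker : Continuous (fun x : ℝ => ((((x:ℝ):ℂ) + ((s*(n:ℝ)):ℝ)*I) - z)⁻¹) := by
    apply Continuous.inv₀
    · continuity
    · intro x; exact sub_ne_zero.2 (hnept x)
  simp only [eH]
  rw [← intervalIntegral.integral_const_mul]
  rw [← intervalIntegral.integral_add h1 ((show Continuous (fun x : ℝ =>
    f z * ((((x:ℝ):ℂ) + ((s*(n:ℝ)):ℝ)*I) - z)⁻¹) from continuous_const.mul hker).intervalIntegrable _ _)]
  apply intervalIntegral.integral_congr
  intro x _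
  have hne := hnept x
  show f _ * (_ - z)⁻¹ = dslope f z _ + f z * (_ - z)⁻¹
  rw [dslope_of_ne _ hne, slope_def_field]
  have hnz : (((x:ℝ):ℂ) + ((s*(n:ℝ)):ℝ)*I) - z ≠ 0 := sub_ne_zero.2 hne
  field_simp
  ring

lemma eV_split {s : ℝ} {f : ℂ → ℂ} {z : ℂ} {m n : ℤ} (hz : (s*(m:ℝ)) ≠ z.re)
    (h1 : IntervalIntegrable (fun y : ℝ => dslope f z (((s*(m:ℝ)):ℝ) + ((y:ℝ):ℂ)*I))
      MeasureTheory.volume (s*(n:ℝ)) (s*((n:ℝ)+1))) :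
    eV s (fun w => f w * (w - z)⁻¹) m n
      = eV s (dslope f z) m n + f z * eV s (fun w => (w - z)⁻¹) m n := by
  have hnept : ∀ y : ℝ, ((((s*(m:ℝ)):ℝ):ℂ) + ((y:ℝ):ℂ)*I) ≠ z := by
    intro y h
    apply hz
    rw [← h]; simp
  have hker : Continuous (fun y : ℝ => (((((s*(m:ℝ)):ℝ):ℂ) + ((y:ℝ):ℂ)*I) - z)⁻¹) := by
    apply Continuous.inv₀
    · continuity
    · intro y; exact sub_ne_zero.2 (hnept y)
  simp only [eV]
  rw [show f z * (I • ∫ y : ℝ in (s*(n:ℝ))..(s*((n:ℝ)+1)),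
      (fun w => (w - z)⁻¹) (((s*(m:ℝ)):ℝ) + (y:ℂ)*I))
      = I • (f z * ∫ y : ℝ in (s*(n:ℝ))..(s*((n:ℝ)+1)),
      (fun w => (w - z)⁻¹) (((s*(m:ℝ)):ℝ) + (y:ℂ)*I)) from by rw [smul_eq_mul, smul_eq_mul]; ring]
  rw [← smul_add]
  congr 1
  rw [← intervalIntegral.integral_const_mul]
  rw [← intervalIntegral.integral_add h1 ((show Continuous (fun y : ℝ =>
    f z * (((((s*(m:ℝ)):ℝ):ℂ) + ((y:ℝ):ℂ)*I) - z)⁻¹) from continuous_const.mul hker).intervalIntegrable _ _)]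
  apply intervalIntegral.integral_congr
  intro y _
  have hne := hnept y
  show f _ * (_ - z)⁻¹ = dslope f z _ + f z * (_ - z)⁻¹
  rw [dslope_of_ne _ hne, slope_def_field]
  have hnz : ((((s*(m:ℝ)):ℝ):ℂ) + ((y:ℝ):ℂ)*I) - z ≠ 0 := sub_ne_zero.2 hne
  field_simp
  ring

/-- Cauchy integral formula on a grid square. -/
lemma rectB_cauchy {s : ℝ} (hs : 0 < s) {p : ℤ × ℤ} {z : ℂ} {f : ℂ → ℂ} {V : Set ℂ}
    (hV : IsOpen V) (hsub : sqr s p ⊆ V) (hf : DifferentiableOn ℂ f V) (hz : z ∈ sqrO s p) :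
    rectB s (fun w => f w * (w - z)⁻¹) p = 2 * π * I * f z := by
  obtain ⟨h1, h2, h3, h4⟩ := hz
  have hzV : z ∈ V := hsub (sqrO_subset_sqr ⟨h1, h2, h3, h4⟩)
  have hd : DifferentiableOn ℂ (dslope f z) V :=
    (Complex.differentiableOn_dslope (hV.mem_nhds hzV)).2 hf
  have hcd : ContinuousOn (dslope f z) V := hd.continuousOn
  -- integrability of the dslope compositions over the four edges
  have hintH : ∀ n : ℤ, (n = p.2 ∨ n = p.2 + 1) →
      IntervalIntegrable (fun x : ℝ => dslope f z (((x:ℝ):ℂ) + ((s*(n:ℝ)):ℝ)*I))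
        MeasureTheory.volume (s*((p.1:ℤ):ℝ)) (s*(((p.1:ℤ):ℝ)+1)) := by
    intro n hn
    apply ContinuousOn.intervalIntegrable
    apply hcd.comp (Continuous.continuousOn (by continuity))
    intro x hx
    apply hsub
    have := horiz_edge_mem hs (m := p.1) (n := n) (k := p.2) ?_ x hx
    · exact this
    · rcases hn with h | h
      · left; omega
      · right; omega
  have hintV : ∀ m : ℤ, (m = p.1 ∨ m = p.1 + 1) →
      IntervalIntegrable (fun y : ℝ => dslope f z (((s*(m:ℝ)):ℝ) + ((y:ℝ):ℂ)*I))
        MeasureTheory.volume (s*((p.2:ℤ):ℝ)) (s*(((p.2:ℤ):ℝ)+1)) := by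
    intro m hm
    apply ContinuousOn.intervalIntegrable
    apply hcd.comp (Continuous.continuousOn (by continuity))
    intro y hy
    apply hsub
    have := vert_edge_mem hs (m := m) (n := p.2) (k := p.1) ?_ y hy
    · exact this
    · rcases hm with h | h
      · left; omega
      · right; omega
  have hne1 : (s*((p.2:ℤ):ℝ)) ≠ z.im := h3.ne
  have hne2 : (s*(((p.2+1):ℤ):ℝ)) ≠ z.im := by
    push_cast
    intro h; rw [← h] at h4; linarith
  have hne3 : (s*(((p.1+1):ℤ):ℝ)) ≠ z.re := by
    push_cast
    intro h; rw [← h] at h2; linarith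
  have hne4 : (s*((p.1:ℤ):ℝ)) ≠ z.re := h1.ne
  have e1 := eH_split (f := f) hne1 (hintH p.2 (Or.inl rfl))
  have e2 := eH_split (f := f) hne2 (by
    have := hintH (p.2+1) (Or.inr rfl)
    convert this using 3)
  have e3 := eV_split (f := f) hne3 (by
    have := hintV (p.1+1) (Or.inr rfl)
    convert this using 3)
  have e4 := eV_split (f := f) hne4 (hintV p.1 (Or.inl rfl))
  have hzero : rectB s (dslope f z) p = 0 := by
    apply rectB_zero hs
    exact hd.mono hsub
  have hwind : rectB s (fun w => (w - z)⁻¹) p = 2 * π * I := rectB_winding hs ⟨h1, h2, h3, h4⟩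
  have : rectB s (fun w => f w * (w - z)⁻¹) p
      = rectB s (dslope f z) p + f z * rectB s (fun w => (w - z)⁻¹) p := by
    rw [rectB, rectB, rectB, e1, e2, e3, e4]
    ring
  rw [this, hzero, hwind]
  ring

open MeasureTheory in
/-- A Cauchy-type integral over a parametrized segment is differentiable off the segment. -/
lemma kernelInt_diffAt {f : ℂ → ℂ} {γ : ℝ → ℂ} (hγ : Continuous γ) {a b : ℝ}
    (hfc : ContinuousOn (fun t => f (γ t)) (uIcc a b))
    {z₀ : ℂ} (hz : ∀ t ∈ uIcc a b, γ t ≠ z₀) :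
    DifferentiableAt ℂ (fun z => ∫ t in a..b, f (γ t) * ((γ t) - z)⁻¹) z₀ := by
  obtain ⟨C, hC⟩ := (isCompact_uIcc (a := a) (b := b)).exists_bound_of_continuousOn hfc
  set S : Set ℂ := γ '' (uIcc a b) with hS
  have hScpt : IsCompact S := (isCompact_uIcc).image hγ
  have hSne : S.Nonempty := ⟨γ a, ⟨a, left_mem_uIcc, rfl⟩⟩
  have hz₀S : z₀ ∉ S := by
    rintro ⟨t, ht, rfl⟩
    exact hz t ht rfl
  have hdpos : 0 < infDist z₀ S :=
    (hScpt.isClosed.notMem_iff_infDist_pos hSne).1 hz₀S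
  set d : ℝ := infDist z₀ S with hd
  set δ : ℝ := d / 2 with hδ
  have hδpos : 0 < δ := by positivity
  have hdist : ∀ t ∈ uIcc a b, d ≤ dist z₀ (γ t) := by
    intro t ht
    exact Metric.infDist_le_dist_of_mem ⟨t, ht, rfl⟩
  have hfar : ∀ t ∈ uIcc a b, ∀ x ∈ Metric.ball z₀ δ, δ ≤ ‖γ t - x‖ := by
    intro t ht x hx
    have h1 := hdist t ht
    rw [Metric.mem_ball] at hx
    have h2 : dist z₀ (γ t) ≤ dist z₀ x + dist x (γ t) := dist_triangle _ _ _
    have h3 : dist z₀ x < δ := by rwa [dist_comm z₀ x]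
    have h4 : d - δ ≤ dist x (γ t) := by linarith
    have h5 : ‖γ t - x‖ = dist x (γ t) := by rw [dist_comm, dist_eq_norm]
    have h6 : d - δ = δ := by rw [hδ]; ring
    linarith [h5 ▸ h4]
  have key := intervalIntegral.hasDerivAt_integral_of_dominated_loc_of_deriv_le
    (F := fun z t => f (γ t) * ((γ t) - z)⁻¹)
    (F' := fun z t => f (γ t) * (((γ t) - z)^2)⁻¹)
    (x₀ := z₀) (a := a) (b := b) (μ := volume)
    (bound := fun _ => C * (δ^2)⁻¹) (Metric.ball_mem_nhds z₀ hδpos) ?_ ?_ ?_ ?_ ?_ ?_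
  · exact key.2.differentiableAt
  · -- measurability for nearby z
    refine Filter.Eventually.of_forall (fun x => ?_)
    apply AEStronglyMeasurable.mul
    · exact ((hfc.mono uIoc_subset_uIcc).aestronglyMeasurable measurableSet_uIoc)
    · apply Measurable.aestronglyMeasurable
      exact ((hγ.measurable.sub measurable_const).inv)
  · -- integrability at z₀
    apply ContinuousOn.intervalIntegrable
    apply hfc.mul
    apply ContinuousOn.inv₀
    · exact (hγ.continuousOn.sub continuousOn_const)
    · intro t ht
      exact sub_ne_zero.2 (hz t ht)
  · refine AEStronglyMeasurable.mul ((hfc.mono uIoc_subset_uIcc).aestronglyMeasurable measurableSet_uIoc) ?_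
    apply Measurable.aestronglyMeasurable
    exact (((hγ.measurable.sub measurable_const).pow_const 2).inv)
  · -- bound on the derivative
    refine Filter.Eventually.of_forall (fun t => fun ht x hx => ?_)
    have ht' := uIoc_subset_uIcc ht
    rw [norm_mul, norm_inv, norm_pow]
    have h1 : δ ≤ ‖γ t - x‖ := hfar t ht' x hx
    have h2 : δ^2 ≤ ‖γ t - x‖^2 := by nlinarith
    have h3 : (‖γ t - x‖^2)⁻¹ ≤ (δ^2)⁻¹ := by
      apply inv_anti₀
      · positivity
      · exact h2
    have h4 : ‖f (γ t)‖ ≤ C := hC t ht'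
    have h5 : (0:ℝ) ≤ (‖γ t - x‖ ^ 2)⁻¹ := by positivity
    have h6 : (0:ℝ) ≤ ‖f (γ t)‖ := norm_nonneg _
    calc ‖f (γ t)‖ * (‖γ t - x‖^2)⁻¹ ≤ C * (‖γ t - x‖^2)⁻¹ := by
          apply mul_le_mul_of_nonneg_right h4 h5
      _ ≤ C * (δ^2)⁻¹ := by
          apply mul_le_mul_of_nonneg_left h3 (le_trans h6 h4)
  · exact intervalIntegrable_const
  · -- differentiability in the parameter
    refine Filter.Eventually.of_forall (fun t => fun ht x hx => ?_)
    have ht' := uIoc_subset_uIcc ht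
    have hne : γ t - x ≠ 0 := by
      have := hfar t ht' x hx
      intro h
      rw [h, norm_zero] at this
      linarith
    have h1 : HasDerivAt (fun z : ℂ => γ t - z) (-1) x := (hasDerivAt_id x).const_sub (γ t)
    have h2 : HasDerivAt (fun z : ℂ => (γ t - z)⁻¹) (-(-1) / (γ t - x)^2) x := h1.inv hne
    have h3 := h2.const_mul (f (γ t))
    have he : f (γ t) * (-(-1) / (γ t - x)^2) = f (γ t) * ((γ t - x)^2)⁻¹ := by
      rw [neg_neg, div_eq_mul_inv, one_mul]
    rw [he] at h3
    exact h3

/-- A bound for Cauchy-type segment integrals. -/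
lemma kernelInt_bound {f : ℂ → ℂ} {γ : ℝ → ℂ} {a b : ℝ} {M d : ℝ} {z : ℂ}
    (hM : ∀ t ∈ uIcc a b, ‖f (γ t)‖ ≤ M)
    (hd : ∀ t ∈ uIcc a b, d ≤ dist z (γ t)) (hd0 : 0 < d) :
    ‖∫ t in a..b, f (γ t) * ((γ t) - z)⁻¹‖ ≤ M / d * |b - a| := by
  apply intervalIntegral.norm_integral_le_of_norm_le_const
  intro t ht
  have ht' := uIoc_subset_uIcc ht
  rw [norm_mul, norm_inv]
  have h1 : d ≤ ‖γ t - z‖ := by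
    have := hd t ht'
    rwa [dist_comm, dist_eq_norm] at this
  have h2 : ‖(γ t - z)‖⁻¹ ≤ d⁻¹ := by
    apply inv_anti₀ hd0 h1
  have h3 := hM t ht'
  have h0 : (0:ℝ) ≤ ‖γ t - z‖⁻¹ := by positivity
  calc ‖f (γ t)‖ * ‖γ t - z‖⁻¹ ≤ M * ‖γ t - z‖⁻¹ := mul_le_mul_of_nonneg_right h3 h0
    _ ≤ M * d⁻¹ := mul_le_mul_of_nonneg_left h2 (le_trans (norm_nonneg _) h3)
    _ = M / d := by rw [div_eq_mul_inv]

open Classical in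
/-- Sum of (signed, oriented) edge integrals of squares in `T`, restricted to edges whose
"outer" neighbour satisfies `cond`. -/
noncomputable def edgesum (s : ℝ) (cond : ℤ × ℤ → Prop) (φ : ℂ → ℂ) (T : Finset (ℤ × ℤ)) : ℂ :=
  ∑ p ∈ T,
    ((if cond (p.1, p.2-1) then eH s φ p.1 p.2 else 0)
    + (if cond (p.1, p.2+1) then -eH s φ p.1 (p.2+1) else 0)
    + (if cond (p.1+1, p.2) then eV s φ (p.1+1) p.2 else 0)
    + (if cond (p.1-1, p.2) then -eV s φ p.1 p.2 else 0))

open Classical in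
lemma edgesum_tri (s : ℝ) (c1 c2 c3 : ℤ × ℤ → Prop) (φ : ℂ → ℂ) (T : Finset (ℤ × ℤ))
    (h123 : ∀ q, c1 q ∨ c2 q ∨ c3 q)
    (h12 : ∀ q, c1 q → c2 q → False) (h13 : ∀ q, c1 q → c3 q → False)
    (h23 : ∀ q, c2 q → c3 q → False) :
    edgesum s c1 φ T + edgesum s c2 φ T + edgesum s c3 φ T = ∑ p ∈ T, rectB s φ p := by
  have tri : ∀ (q : ℤ × ℤ) (X : ℂ),
      ((if c1 q then X else 0) + (if c2 q then X else 0)) + (if c3 q then X else 0) = X := by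
    intro q X
    rcases h123 q with h | h | h
    · rw [if_pos h, if_neg (fun h' => h12 q h h'), if_neg (fun h' => h13 q h h')]; ring
    · rw [if_neg (fun h' => h12 q h' h), if_pos h, if_neg (fun h' => h23 q h h')]; ring
    · rw [if_neg (fun h' => h13 q h' h), if_neg (fun h' => h23 q h' h), if_pos h]; ring
  rw [edgesum, edgesum, edgesum, ← Finset.sum_add_distrib, ← Finset.sum_add_distrib]
  apply Finset.sum_congr rfl
  intro p _
  have t1 := tri (p.1, p.2-1) (eH s φ p.1 p.2)
  have t2 := tri (p.1, p.2+1) (-eH s φ p.1 (p.2+1))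
  have t3 := tri (p.1+1, p.2) (eV s φ (p.1+1) p.2)
  have t4 := tri (p.1-1, p.2) (-eV s φ p.1 p.2)
  rw [rectB]
  calc _ = (((if c1 (p.1, p.2-1) then eH s φ p.1 p.2 else 0)
          + (if c2 (p.1, p.2-1) then eH s φ p.1 p.2 else 0))
          + (if c3 (p.1, p.2-1) then eH s φ p.1 p.2 else 0))
        + (((if c1 (p.1, p.2+1) then -eH s φ p.1 (p.2+1) else 0)
          + (if c2 (p.1, p.2+1) then -eH s φ p.1 (p.2+1) else 0))
          + (if c3 (p.1, p.2+1) then -eH s φ p.1 (p.2+1) else 0))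
        + (((if c1 (p.1+1, p.2) then eV s φ (p.1+1) p.2 else 0)
          + (if c2 (p.1+1, p.2) then eV s φ (p.1+1) p.2 else 0))
          + (if c3 (p.1+1, p.2) then eV s φ (p.1+1) p.2 else 0))
        + (((if c1 (p.1-1, p.2) then -eV s φ p.1 p.2 else 0)
          + (if c2 (p.1-1, p.2) then -eV s φ p.1 p.2 else 0))
          + (if c3 (p.1-1, p.2) then -eV s φ p.1 p.2 else 0)) := by ring
    _ = _ := by rw [t1, t2, t3, t4]; ring

open Classical in
/-- Interior edges cancel. -/
lemma edgesum_self (s : ℝ) (φ : ℂ → ℂ) (T : Finset (ℤ × ℤ)) :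
    edgesum s (fun q => q ∈ T) φ T = 0 := by
  have iteNorm : ∀ (c : Prop) (i : Decidable c) (X : ℂ),
      @ite ℂ c i X 0 = @ite ℂ c (Classical.propDecidable c) X 0 := by
    intro c i X
    cases Subsingleton.elim i (Classical.propDecidable c)
    rfl
  rw [edgesum]
  rw [Finset.sum_add_distrib, Finset.sum_add_distrib, Finset.sum_add_distrib]
  have hH : (∑ p ∈ T, if (p.1, p.2+1) ∈ T then -eH s φ p.1 (p.2+1) else 0)
      = -∑ p ∈ T, (if (p.1, p.2-1) ∈ T then eH s φ p.1 p.2 else 0) := by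
    have e1 : (∑ p ∈ T, if (p.1, p.2+1) ∈ T then -eH s φ p.1 (p.2+1) else 0)
        = -∑ p ∈ T, (if (p.1, p.2+1) ∈ T then eH s φ p.1 (p.2+1) else 0) := by
      rw [← Finset.sum_neg_distrib]
      apply Finset.sum_congr rfl
      intro p _
      split_ifs <;> simp
    rw [e1, neg_inj]
    rw [← Finset.sum_filter (fun p : ℤ×ℤ => (p.1, p.2+1) ∈ T) (fun p => eH s φ p.1 (p.2+1))]
    rw [← Finset.sum_filter (fun p : ℤ×ℤ => (p.1, p.2-1) ∈ T) (fun p => eH s φ p.1 p.2)]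
    refine Finset.sum_nbij' (fun p => (p.1, p.2+1)) (fun q => (q.1, q.2-1)) ?_ ?_ ?_ ?_ ?_
    · intro p hp
      rw [Finset.mem_filter] at hp ⊢
      refine ⟨hp.2, ?_⟩
      simpa using hp.1
    · intro q hq
      rw [Finset.mem_filter] at hq ⊢
      refine ⟨hq.2, ?_⟩
      simpa using hq.1
    · intro p _; simp
    · intro q _; simp
    · intro p _; rfl
  have hV : (∑ p ∈ T, if (p.1-1, p.2) ∈ T then -eV s φ p.1 p.2 else 0)
      = -∑ p ∈ T, (if (p.1+1, p.2) ∈ T then eV s φ (p.1+1) p.2 else 0) := by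
    have e1 : (∑ p ∈ T, if (p.1-1, p.2) ∈ T then -eV s φ p.1 p.2 else 0)
        = -∑ p ∈ T, (if (p.1-1, p.2) ∈ T then eV s φ p.1 p.2 else 0) := by
      rw [← Finset.sum_neg_distrib]
      apply Finset.sum_congr rfl
      intro p _
      split_ifs <;> simp
    rw [e1, neg_inj]
    rw [← Finset.sum_filter (fun p : ℤ×ℤ => (p.1-1, p.2) ∈ T) (fun p => eV s φ p.1 p.2)]
    rw [← Finset.sum_filter (fun p : ℤ×ℤ => (p.1+1, p.2) ∈ T) (fun p => eV s φ (p.1+1) p.2)]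
    refine Finset.sum_nbij' (fun p => (p.1-1, p.2)) (fun q => (q.1+1, q.2)) ?_ ?_ ?_ ?_ ?_
    · intro p hp
      rw [Finset.mem_filter] at hp ⊢
      refine ⟨hp.2, ?_⟩
      simpa using hp.1
    · intro q hq
      rw [Finset.mem_filter] at hq ⊢
      refine ⟨hq.2, ?_⟩
      simpa using hq.1
    · intro p _; simp
    · intro q _; simp
    · intro p _
      show eV s φ p.1 p.2 = eV s φ (p.1 - 1 + 1) p.2
      congr 1
      omega
  simp only [iteNorm] at hH hV ⊢
  rw [hH, hV]
  ring

/-- The square `p` comes within distance `t` of `E`. -/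
def Ptouch (s t : ℝ) (E : Set ℂ) (p : ℤ × ℤ) : Prop := ∃ w ∈ sqr s p, infDist w E ≤ t

/-- Union of all grid squares coming within distance `t` of `E`. -/
def Kset (s t : ℝ) (E : Set ℂ) : Set ℂ := ⋃ p ∈ {p : ℤ × ℤ | Ptouch s t E p}, sqr s p

lemma sqr_diam {s : ℝ} (hs : 0 < s) {p : ℤ × ℤ} {z w : ℂ}
    (hz : z ∈ sqr s p) (hw : w ∈ sqr s p) : dist z w ≤ 2*s := by
  rcases mem_sqr.1 hz with ⟨⟨a1, a2⟩, ⟨a3, a4⟩⟩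
  rcases mem_sqr.1 hw with ⟨⟨b1, b2⟩, ⟨b3, b4⟩⟩
  rw [Complex.dist_eq]
  calc ‖z - w‖ ≤ |(z-w).re| + |(z-w).im| := Complex.norm_le_abs_re_add_abs_im _
    _ ≤ s + s := by
        apply add_le_add
        · rw [Complex.sub_re, abs_le]
          constructor <;> push_cast at a1 a2 b1 b2 ⊢ <;> nlinarith
        · rw [Complex.sub_im, abs_le]
          constructor <;> push_cast at a3 a4 b3 b4 ⊢ <;> nlinarith
    _ = 2*s := by ring

lemma mem_sqr_floor {s : ℝ} (hs : 0 < s) (z : ℂ) :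
    z ∈ sqr s (⌊z.re/s⌋, ⌊z.im/s⌋) := by
  rw [mem_sqr]
  constructor
  · constructor
    · calc s * (⌊z.re/s⌋ : ℝ) ≤ s * (z.re/s) := by
            apply mul_le_mul_of_nonneg_left (Int.floor_le _) hs.le
        _ = z.re := by field_simp
    · push_cast
      calc z.re = s * (z.re/s) := by field_simp
        _ ≤ s * ((⌊z.re/s⌋:ℝ) + 1) := by
            apply mul_le_mul_of_nonneg_left (Int.lt_floor_add_one _).le hs.le
  · constructor
    · calc s * (⌊z.im/s⌋ : ℝ) ≤ s * (z.im/s) := by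
            apply mul_le_mul_of_nonneg_left (Int.floor_le _) hs.le
        _ = z.im := by field_simp
    · push_cast
      calc z.im = s * (z.im/s) := by field_simp
        _ ≤ s * ((⌊z.im/s⌋:ℝ) + 1) := by
            apply mul_le_mul_of_nonneg_left (Int.lt_floor_add_one _).le hs.le

lemma mem_Kset_of_infDist {s t : ℝ} (hs : 0 < s) {E : Set ℂ} {z : ℂ}
    (h : infDist z E ≤ t) : z ∈ Kset s t E := by
  apply Set.mem_biUnion (show (⌊z.re/s⌋, ⌊z.im/s⌋) ∈ {p : ℤ × ℤ | Ptouch s t E p} from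
    ⟨z, mem_sqr_floor hs z, h⟩) (mem_sqr_floor hs z)

lemma infDist_le_of_mem_Kset {s t : ℝ} (hs : 0 < s) {E : Set ℂ} {z : ℂ}
    (h : z ∈ Kset s t E) : infDist z E ≤ t + 2*s := by
  rcases Set.mem_iUnion₂.1 h with ⟨p, hp, hzp⟩
  rcases hp with ⟨w, hw, hwd⟩
  calc infDist z E ≤ infDist w E + dist z w := Metric.infDist_le_infDist_add_dist
    _ ≤ t + 2*s := add_le_add hwd (sqr_diam hs hzp hw)

lemma infDist_gt_of_not_touch {s t : ℝ} {E : Set ℂ} {p : ℤ × ℤ}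
    (h : ¬ Ptouch s t E p) {w : ℂ} (hw : w ∈ sqr s p) : t < infDist w E := by
  by_contra hc
  exact h ⟨w, hw, le_of_not_gt hc⟩

lemma touch_finite {s t R : ℝ} (hs : 0 < s) {E : Set ℂ} (hne : E.Nonempty)
    (hR : E ⊆ Metric.closedBall 0 R) (ht : 0 ≤ t) :
    Set.Finite {p : ℤ × ℤ | Ptouch s t E p} := by
  set B : ℝ := (t + 1 + R)/s + 1 with hB
  apply Set.Finite.subset (Set.finite_Icc (α := ℤ × ℤ) (-(⌈B⌉+1), -(⌈B⌉+1)) (⌈B⌉+1, ⌈B⌉+1))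
  rintro p ⟨w, hw, hwd⟩
  have hlt : infDist w E < t + 1 := lt_of_le_of_lt hwd (by linarith)
  obtain ⟨e, heE, hde⟩ := (Metric.infDist_lt_iff hne).1 hlt
  have heR : ‖e‖ ≤ R := by
    have := hR heE
    rwa [Metric.mem_closedBall, dist_zero_right] at this
  have hwn : ‖w‖ ≤ t + 1 + R := by
    calc ‖w‖ = dist w 0 := by rw [dist_zero_right]
      _ ≤ dist w e + dist e 0 := dist_triangle _ _ _
      _ ≤ (t+1) + R := add_le_add hde.le (by rwa [dist_zero_right])
  have hre : |w.re| ≤ t + 1 + R := le_trans (Complex.abs_re_le_norm w) hwn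
  have him : |w.im| ≤ t + 1 + R := le_trans (Complex.abs_im_le_norm w) hwn
  rcases mem_sqr.1 hw with ⟨⟨a1, a2⟩, ⟨a3, a4⟩⟩
  rw [abs_le] at hre him
  have hBpos : 0 < (t + 1 + R)/s := by
    have : 0 < t + 1 + R := by
      have : (0:ℝ) ≤ R := le_trans (norm_nonneg e) heR
      linarith
    positivity
  have h1 : (p.1 : ℝ) ≤ B := by
    rw [hB]
    have : s * (p.1:ℝ) ≤ t + 1 + R := le_trans a1 hre.2
    rw [← le_div_iff₀' hs] at this
    linarith
  have h2 : -B ≤ (p.1 : ℝ) := by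
    rw [hB]
    have : -(t + 1 + R) ≤ s * ((p.1:ℝ)+1) := by push_cast at a2; linarith
    rw [← div_le_iff₀' hs] at this
    have : -((t+1+R)/s) ≤ (p.1:ℝ)+1 := by
      calc -((t+1+R)/s) = (-(t+1+R))/s := by ring
        _ ≤ (p.1:ℝ)+1 := this
    linarith
  have h3 : (p.2 : ℝ) ≤ B := by
    rw [hB]
    have : s * (p.2:ℝ) ≤ t + 1 + R := le_trans a3 him.2
    rw [← le_div_iff₀' hs] at this
    linarith
  have h4 : -B ≤ (p.2 : ℝ) := by
    rw [hB]
    have : -(t + 1 + R) ≤ s * ((p.2:ℝ)+1) := by push_cast at a4; linarith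
    rw [← div_le_iff₀' hs] at this
    have : -((t+1+R)/s) ≤ (p.2:ℝ)+1 := by
      calc -((t+1+R)/s) = (-(t+1+R))/s := by ring
        _ ≤ (p.2:ℝ)+1 := this
    linarith
  have hceil : B ≤ ((⌈B⌉:ℤ):ℝ) + 1 := by
    have := Int.le_ceil B
    push_cast
    linarith
  rw [Set.mem_Icc, Prod.le_def, Prod.le_def]
  refine ⟨⟨?_, ?_⟩, ⟨?_, ?_⟩⟩
  · exact_mod_cast (by push_cast; linarith : ((-(⌈B⌉+1) : ℤ):ℝ) ≤ (p.1:ℝ))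
  · exact_mod_cast (by push_cast; linarith : ((-(⌈B⌉+1) : ℤ):ℝ) ≤ (p.2:ℝ))
  · exact_mod_cast (by push_cast; linarith : ((p.1:ℝ)) ≤ (((⌈B⌉+1) : ℤ):ℝ))
  · exact_mod_cast (by push_cast; linarith : ((p.2:ℝ)) ≤ (((⌈B⌉+1) : ℤ):ℝ))

lemma subset_interior_Kset {s t : ℝ} (hs : 0 < s) {E : Set ℂ} :
    {z : ℂ | infDist z E < t} ⊆ interior (Kset s t E) := by
  apply interior_maximal
  · intro z hz
    exact mem_Kset_of_infDist hs (le_of_lt hz)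
  · exact isOpen_lt (Metric.continuous_infDist_pt E) continuous_const

lemma not_mem_interior_Kset {s t : ℝ} (hs : 0 < s) {E : Set ℂ} {q : ℤ × ℤ}
    (hq : ¬ Ptouch s t E q) {w : ℂ} (hw : w ∈ sqr s q) :
    w ∉ interior (Kset s t E) := by
  intro hint
  rw [mem_interior_iff_mem_nhds, Metric.mem_nhds_iff] at hint
  obtain ⟨r, hr, hball⟩ := hint
  set tt : ℝ := min (r/(4*s)) 1 with htt
  have htt0 : 0 < tt := by
    apply lt_min
    · positivity
    · norm_num
  have htt1 : tt ≤ 1 := min_le_right _ _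
  set w' : ℂ := w + (tt : ℂ) * (ctr s q - w) with hw'
  have hw'O : w' ∈ sqrO s q := combo_mem_sqrO hs hw htt0 htt1
  have hdist : dist w' w < r := by
    rw [Complex.dist_eq, hw']
    have : w + (tt:ℂ) * (ctr s q - w) - w = (tt:ℂ) * (ctr s q - w) := by ring
    rw [this, norm_mul]
    have h1 : ‖(tt:ℂ)‖ = tt := by
      rw [Complex.norm_real, Real.norm_eq_abs, abs_of_pos htt0]
    have h2 : ‖ctr s q - w‖ ≤ 2*s := by
      rw [← Complex.dist_eq]
      exact sqr_diam hs (sqrO_subset_sqr (ctr_mem_sqrO hs q)) hw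
    rw [h1]
    calc tt * ‖ctr s q - w‖ ≤ tt * (2*s) := by
          apply mul_le_mul_of_nonneg_left h2 htt0.le
      _ ≤ (r/(4*s)) * (2*s) := by
          apply mul_le_mul_of_nonneg_right (min_le_left _ _) (by linarith)
      _ = r/2 := by field_simp; ring
      _ < r := by linarith
  have hw'K : w' ∈ Kset s t E := hball hdist
  rcases Set.mem_iUnion₂.1 hw'K with ⟨p', hp', hwp'⟩
  have : p' = q := sqr_unique hs hw'O hwp'
  rw [this] at hp'
  exact hq hp'

lemma eH_diffAt {s : ℝ} (hs : 0 < s) {f : ℂ → ℂ} {m n k1 k2 : ℤ} {z₀ : ℂ}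
    (hk1 : n = k1 ∨ n = k1+1) (hk2 : n = k2 ∨ n = k2+1)
    (hfc : ContinuousOn f (sqr s (m, k1)))
    (hz : ∀ w ∈ sqr s (m, k2), w ≠ z₀) :
    DifferentiableAt ℂ (fun z => eH s (fun w => f w * (w - z)⁻¹) m n) z₀ := by
  simp only [eH]
  exact kernelInt_diffAt (γ := fun t : ℝ => ((t:ℝ):ℂ) + ((s*(n:ℝ)):ℝ)*I)
    (by continuity)
    (hfc.comp (Continuous.continuousOn (by continuity)) (fun t ht => horiz_edge_mem hs hk1 t ht))
    (fun t ht => hz _ (horiz_edge_mem hs hk2 t ht))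

lemma eV_diffAt {s : ℝ} (hs : 0 < s) {f : ℂ → ℂ} {m n k1 k2 : ℤ} {z₀ : ℂ}
    (hk1 : m = k1 ∨ m = k1+1) (hk2 : m = k2 ∨ m = k2+1)
    (hfc : ContinuousOn f (sqr s (k1, n)))
    (hz : ∀ w ∈ sqr s (k2, n), w ≠ z₀) :
    DifferentiableAt ℂ (fun z => eV s (fun w => f w * (w - z)⁻¹) m n) z₀ := by
  simp only [eV]
  exact DifferentiableAt.const_smul (kernelInt_diffAt (γ := fun t : ℝ => (((s*(m:ℝ)):ℝ):ℂ) + ((t:ℝ):ℂ)*I)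
    (by continuity)
    (hfc.comp (Continuous.continuousOn (by continuity)) (fun t ht => vert_edge_mem hs hk1 t ht))
    (fun t ht => hz _ (vert_edge_mem hs hk2 t ht))) I

lemma eH_norm_le {s : ℝ} (hs : 0 < s) {f : ℂ → ℂ} {m n k1 k2 : ℤ} {z : ℂ} {M d : ℝ}
    (hk1 : n = k1 ∨ n = k1+1) (hk2 : n = k2 ∨ n = k2+1) (hd0 : 0 < d)
    (hM : ∀ w ∈ sqr s (m, k1), ‖f w‖ ≤ M)
    (hd : ∀ w ∈ sqr s (m, k2), d ≤ dist z w) :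
    ‖eH s (fun w => f w * (w - z)⁻¹) m n‖ ≤ M / d * s := by
  simp only [eH]
  have key := kernelInt_bound (γ := fun t : ℝ => ((t:ℝ):ℂ) + ((s*(n:ℝ)):ℝ)*I)
    (z := z) (a := s*(m:ℝ)) (b := s*((m:ℝ)+1))
    (fun t ht => hM _ (horiz_edge_mem hs hk1 t ht))
    (fun t ht => hd _ (horiz_edge_mem hs hk2 t ht)) hd0
  have habs : |s*((m:ℝ)+1) - s*(m:ℝ)| = s := by
    rw [show s*((m:ℝ)+1) - s*(m:ℝ) = s from by ring, abs_of_pos hs]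
  rw [habs] at key
  exact key

lemma eV_norm_le {s : ℝ} (hs : 0 < s) {f : ℂ → ℂ} {m n k1 k2 : ℤ} {z : ℂ} {M d : ℝ}
    (hk1 : m = k1 ∨ m = k1+1) (hk2 : m = k2 ∨ m = k2+1) (hd0 : 0 < d)
    (hM : ∀ w ∈ sqr s (k1, n), ‖f w‖ ≤ M)
    (hd : ∀ w ∈ sqr s (k2, n), d ≤ dist z w) :
    ‖eV s (fun w => f w * (w - z)⁻¹) m n‖ ≤ M / d * s := by
  simp only [eV]
  rw [norm_smul, Complex.norm_I, one_mul]
  have key := kernelInt_bound (γ := fun t : ℝ => (((s*(m:ℝ)):ℝ):ℂ) + ((t:ℝ):ℂ)*I)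
    (z := z) (a := s*(n:ℝ)) (b := s*((n:ℝ)+1))
    (fun t ht => hM _ (vert_edge_mem hs hk1 t ht))
    (fun t ht => hd _ (vert_edge_mem hs hk2 t ht)) hd0
  have habs : |s*((n:ℝ)+1) - s*(n:ℝ)| = s := by
    rw [show s*((n:ℝ)+1) - s*(n:ℝ) = s from by ring, abs_of_pos hs]
  rw [habs] at key
  exact key

/-- Membership of a touching square stays close to `E`. -/
lemma infDist_le_of_touch {s t : ℝ} (hs : 0 < s) {E : Set ℂ} {p : ℤ × ℤ}
    (hp : Ptouch s t E p) {w : ℂ} (hw : w ∈ sqr s p) : infDist w E ≤ t + 2*s := by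
  obtain ⟨w₀, hw₀, hd₀⟩ := hp
  calc infDist w E ≤ infDist w₀ E + dist w w₀ := Metric.infDist_le_infDist_add_dist
    _ ≤ t + 2*s := add_le_add hd₀ (sqr_diam hs hw hw₀)

lemma sqr_subset_Kset {s t : ℝ} {E : Set ℂ} {p : ℤ × ℤ} (hp : Ptouch s t E p) :
    sqr s p ⊆ Kset s t E :=
  fun _ hw => Set.mem_biUnion hp hw

open Classical in
lemma edgesum_diffAt {s : ℝ} (hs : 0 < s) {cond : ℤ × ℤ → Prop} {f : ℂ → ℂ}
    {T : Finset (ℤ × ℤ)} {z₀ : ℂ}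
    (hfT : ∀ p ∈ T, ContinuousOn f (sqr s p))
    (hc : ∀ q, cond q → ∀ w ∈ sqr s q, w ≠ z₀) :
    DifferentiableAt ℂ (fun z => edgesum s cond (fun w => f w * (w - z)⁻¹) T) z₀ := by
  simp only [edgesum]
  apply DifferentiableAt.fun_sum
  intro p hp
  have hfcp : ContinuousOn f (sqr s (p.1, p.2)) := by
    rw [Prod.mk.eta]; exact hfT p hp
  refine DifferentiableAt.add (DifferentiableAt.add (DifferentiableAt.add ?_ ?_) ?_) ?_
  · rcases Classical.em (cond (p.1, p.2-1)) with hcd | hcd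
    · simp only [if_pos hcd]
      exact eH_diffAt hs (Or.inl rfl) (Or.inr (by omega)) hfcp (hc _ hcd)
    · simp only [if_neg hcd]
      exact differentiableAt_const 0
  · rcases Classical.em (cond (p.1, p.2+1)) with hcd | hcd
    · simp only [if_pos hcd]
      exact (eH_diffAt hs (Or.inr rfl) (Or.inl rfl) hfcp (hc _ hcd)).neg
    · simp only [if_neg hcd]
      exact differentiableAt_const 0
  · rcases Classical.em (cond (p.1+1, p.2)) with hcd | hcd
    · simp only [if_pos hcd]
      exact eV_diffAt hs (Or.inr rfl) (Or.inl rfl) hfcp (hc _ hcd)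
    · simp only [if_neg hcd]
      exact differentiableAt_const 0
  · rcases Classical.em (cond (p.1-1, p.2)) with hcd | hcd
    · simp only [if_pos hcd]
      exact (eV_diffAt hs (Or.inl rfl) (Or.inr (by omega)) hfcp (hc _ hcd)).neg
    · simp only [if_neg hcd]
      exact differentiableAt_const 0

open Classical in
lemma edgesum_bound {s : ℝ} (hs : 0 < s) {cond : ℤ × ℤ → Prop} {f : ℂ → ℂ}
    {T : Finset (ℤ × ℤ)} {z : ℂ} {M d : ℝ} (hd0 : 0 < d) (hM0 : 0 ≤ M)
    (hMT : ∀ p ∈ T, ∀ w ∈ sqr s p, ‖f w‖ ≤ M)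
    (hdc : ∀ q, cond q → ∀ w ∈ sqr s q, d ≤ dist z w) :
    ‖edgesum s cond (fun w => f w * (w - z)⁻¹) T‖ ≤ (T.card : ℝ) * (4 * (M/d*s)) := by
  have hMds : 0 ≤ M/d*s := by positivity
  rw [edgesum]
  refine le_trans (norm_sum_le _ _) ?_
  refine le_trans (Finset.sum_le_card_nsmul T _ (4 * (M/d*s)) ?_) (le_of_eq (by rw [nsmul_eq_mul]))
  intro p hp
  have hMp : ∀ w ∈ sqr s (p.1, p.2), ‖f w‖ ≤ M := by
    rw [Prod.mk.eta]; exact hMT p hp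
  have t1 : ‖if cond (p.1, p.2-1) then eH s (fun w => f w * (w - z)⁻¹) p.1 p.2 else 0‖
      ≤ M/d*s := by
    rcases Classical.em (cond (p.1, p.2-1)) with hcd | hcd
    · rw [if_pos hcd]
      exact eH_norm_le hs (Or.inl rfl) (Or.inr (by omega)) hd0 hMp (hdc _ hcd)
    · rw [if_neg hcd, norm_zero]; exact hMds
  have t2 : ‖if cond (p.1, p.2+1) then -eH s (fun w => f w * (w - z)⁻¹) p.1 (p.2+1) else 0‖
      ≤ M/d*s := by
    rcases Classical.em (cond (p.1, p.2+1)) with hcd | hcd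
    · rw [if_pos hcd, norm_neg]
      exact eH_norm_le hs (Or.inr rfl) (Or.inl rfl) hd0 hMp (hdc _ hcd)
    · rw [if_neg hcd, norm_zero]; exact hMds
  have t3 : ‖if cond (p.1+1, p.2) then eV s (fun w => f w * (w - z)⁻¹) (p.1+1) p.2 else 0‖
      ≤ M/d*s := by
    rcases Classical.em (cond (p.1+1, p.2)) with hcd | hcd
    · rw [if_pos hcd]
      exact eV_norm_le hs (Or.inr rfl) (Or.inl rfl) hd0 hMp (hdc _ hcd)
    · rw [if_neg hcd, norm_zero]; exact hMds
  have t4 : ‖if cond (p.1-1, p.2) then -eV s (fun w => f w * (w - z)⁻¹) p.1 p.2 else 0‖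
      ≤ M/d*s := by
    rcases Classical.em (cond (p.1-1, p.2)) with hcd | hcd
    · rw [if_pos hcd, norm_neg]
      exact eV_norm_le hs (Or.inl rfl) (Or.inr (by omega)) hd0 hMp (hdc _ hcd)
    · rw [if_neg hcd, norm_zero]; exact hMds
  calc ‖_ + _ + _ + _‖ ≤ _ := norm_add_le _ _
    _ ≤ _ + _ + _ := add_le_add (norm_add_le _ _) t4
    _ ≤ _ + _ + _ + _ := by
        refine add_le_add (add_le_add (norm_add_le _ _) t3) (le_refl _)
    _ ≤ M/d*s + M/d*s + M/d*s + M/d*s := by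
        refine add_le_add (add_le_add (add_le_add t1 t2) (le_refl _)) (le_refl _)
    _ = 4 * (M/d*s) := by ring

end HRem

namespace HRem

set_option maxHeartbeats 1000000 in
lemma extension_of_removable (E : Set ℂ) (hE : IsCompact E) (hrem : HInftyRemovable E)
    (U : Set ℂ) (hU : IsOpen U) (hEU : E ⊆ U) (f : ℂ → ℂ)
    (hf : DifferentiableOn ℂ f (U \ E)) (M : ℝ) (hM0 : 0 ≤ M)
    (hM : ∀ z ∈ U \ E, ‖f z‖ ≤ M) :
    ∃ g : ℂ → ℂ, DifferentiableOn ℂ g U ∧ (∃ C : ℝ, ∀ z ∈ U, ‖g z‖ ≤ C) ∧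
      ∀ z ∈ U \ E, g z = f z := by
  classical
  rcases Set.eq_empty_or_nonempty E with hEe | hne
  · subst hEe
    exact ⟨f, by simpa using hf, ⟨M, by simpa using hM⟩, fun z _ => rfl⟩
  obtain ⟨δ, hδ0, hδU⟩ := hE.exists_thickening_subset_open hU hEU
  set s : ℝ := δ/14 with hsdef
  have hs : 0 < s := by positivity
  have hUdist : ∀ z : ℂ, infDist z E < 14*s → z ∈ U := by
    intro z hz
    apply hδU
    rw [Metric.mem_thickening_iff_infDist_lt hne]
    calc infDist z E < 14*s := hz
      _ = δ := by rw [hsdef]; ring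
  obtain ⟨R, hR⟩ := hE.isBounded.subset_closedBall 0
  set Q1 : ℤ × ℤ → Prop := Ptouch s s E with hQ1def
  set Q2 : ℤ × ℤ → Prop := Ptouch s (10*s) E with hQ2def
  have hQ12 : ∀ p, Q1 p → Q2 p := by
    rintro p ⟨w, hw, hd⟩; exact ⟨w, hw, by linarith⟩
  have hSSfin : Set.Finite {p : ℤ × ℤ | Q2 p ∧ ¬ Q1 p} :=
    (touch_finite hs hne hR (by positivity)).subset (fun p hp => hp.1)
  set FS : Finset (ℤ × ℤ) := hSSfin.toFinset with hFSdef
  have hFS : ∀ p, p ∈ FS ↔ (Q2 p ∧ ¬ Q1 p) := fun p => hSSfin.mem_toFinset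
  set K1 : Set ℂ := Kset s s E with hK1def
  set K2 : Set ℂ := Kset s (10*s) E with hK2def
  have hsqrUE : ∀ p, Q2 p → ¬ Q1 p → sqr s p ⊆ U \ E := by
    intro p h2 h1 w hw
    constructor
    · apply hUdist
      have := infDist_le_of_touch hs h2 hw
      linarith
    · intro hwE
      have := infDist_gt_of_not_touch h1 hw
      rw [Metric.infDist_zero_of_mem hwE] at this
      linarith
  have hK1U : ∀ z ∈ K1, z ∈ U := by
    intro z hz
    apply hUdist
    have := infDist_le_of_mem_Kset hs hz
    linarith
  have hEK1 : E ⊆ K1 := fun e he =>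
    mem_Kset_of_infDist hs (by rw [Metric.infDist_zero_of_mem he]; linarith)
  have hK1closed : IsClosed K1 :=
    Set.Finite.isClosed_biUnion (touch_finite hs hne hR hs.le) (fun _ _ => isClosed_sqr)
  have hK2U : ∀ z ∈ K2, z ∈ U := by
    intro z hz
    apply hUdist
    have := infDist_le_of_mem_Kset hs hz
    linarith
  have hK1K2 : K1 ⊆ interior K2 := by
    intro z hz
    apply subset_interior_Kset hs
    have := infDist_le_of_mem_Kset hs hz
    show infDist z E < 10*s
    linarith
  have hUE : IsOpen (U \ E) := hU.sdiff hE.isClosed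
  have hfcont : ContinuousOn f (U \ E) := hf.continuousOn
  set g : ℂ → ℂ :=
    fun z => (2*(π:ℂ)*I)⁻¹ * edgesum s (fun q => ¬ Q2 q) (fun w => f w * (w - z)⁻¹) FS
    with hgdef
  set k : ℂ → ℂ :=
    fun z => (2*(π:ℂ)*I)⁻¹ * edgesum s Q1 (fun w => f w * (w - z)⁻¹) FS with hkdef
  have h2πI : (2*(π:ℂ)*I) ≠ 0 := Complex.two_pi_I_ne_zero
  -- main identity on interiors of the squares of FS
  have hmain : ∀ p₀ ∈ FS, ∀ z ∈ sqrO s p₀, g z + k z = f z := by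
    intro p₀ hp₀ z hz
    have htri := edgesum_tri s Q1 (fun q => q ∈ FS) (fun q => ¬ Q2 q)
      (fun w => f w * (w - z)⁻¹) FS
      (by
        intro q
        by_cases h1 : Q1 q
        · exact Or.inl h1
        by_cases h2 : Q2 q
        · exact Or.inr (Or.inl ((hFS q).2 ⟨h2, h1⟩))
        · exact Or.inr (Or.inr h2))
      (fun q hq1 hqF => ((hFS q).1 hqF).2 hq1)
      (fun q hq1 hq2 => hq2 (hQ12 q hq1))
      (fun q hqF hq2 => hq2 ((hFS q).1 hqF).1)
    have hself := edgesum_self s (fun w => f w * (w - z)⁻¹) FS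
    have hsum : ∑ p ∈ FS, rectB s (fun w => f w * (w - z)⁻¹) p = 2*(π:ℂ)*I * f z := by
      rw [Finset.sum_eq_single_of_mem p₀ hp₀ (fun p hp hpne => by
        apply rectB_zero hs
        apply DifferentiableOn.mul
        · exact hf.mono (hsqrUE p ((hFS p).1 hp).1 ((hFS p).1 hp).2)
        · apply DifferentiableOn.inv
          · exact differentiableOn_id.sub (differentiableOn_const z)
          · intro w hw
            apply sub_ne_zero.2
            intro hwz
            exact hpne (sqr_unique hs hz (hwz ▸ hw)))]
      exact rectB_cauchy hs hUE (hsqrUE p₀ ((hFS p₀).1 hp₀).1 ((hFS p₀).1 hp₀).2) hf hz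
    rw [hself, add_zero, hsum] at htri
    show (2*(π:ℂ)*I)⁻¹ * edgesum s (fun q => ¬ Q2 q) (fun w => f w * (w - z)⁻¹) FS
      + (2*(π:ℂ)*I)⁻¹ * edgesum s Q1 (fun w => f w * (w - z)⁻¹) FS = f z
    rw [← mul_add, add_comm, htri]
    field_simp
  -- differentiability of g on the interior of K2
  have hgdiff : ∀ z₀ ∈ interior K2, DifferentiableAt ℂ g z₀ := by
    intro z₀ hz₀
    apply DifferentiableAt.const_mul
    apply edgesum_diffAt hs
    · intro p hp
      exact hfcont.mono (hsqrUE p ((hFS p).1 hp).1 ((hFS p).1 hp).2)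
    · intro q hq w hw heq
      exact not_mem_interior_Kset hs hq hw (heq ▸ hz₀)
  -- differentiability of k off K1
  have hkdiff : ∀ z₀, z₀ ∉ K1 → DifferentiableAt ℂ k z₀ := by
    intro z₀ hz₀
    apply DifferentiableAt.const_mul
    apply edgesum_diffAt hs
    · intro p hp
      exact hfcont.mono (hsqrUE p ((hFS p).1 hp).1 ((hFS p).1 hp).2)
    · intro q hq w hw heq
      exact hz₀ (heq ▸ sqr_subset_Kset hq hw)
  -- norm bound helper
  have hnorm2pi : ∀ x : ℂ, ‖(2*(π:ℂ)*I)⁻¹ * x‖ ≤ ‖x‖ := by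
    intro x
    rw [norm_mul, norm_inv]
    have h1 : ‖(2*(π:ℂ)*I)‖ = 2*π := by
      rw [norm_mul, norm_mul, Complex.norm_I, mul_one]
      simp [Real.pi_nonneg]
    rw [h1]
    have h2 : (2*π)⁻¹ ≤ 1 := by
      rw [inv_le_one₀ (by positivity)]
      nlinarith [Real.pi_gt_three]
    calc (2*π)⁻¹ * ‖x‖ ≤ 1 * ‖x‖ := mul_le_mul_of_nonneg_right h2 (norm_nonneg x)
      _ = ‖x‖ := one_mul _
  set CB : ℝ := (FS.card : ℝ) * (4*M) with hCBdef
  have hCB0 : 0 ≤ CB := by positivity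
  have hMsq : ∀ p ∈ FS, ∀ w ∈ sqr s p, ‖f w‖ ≤ M := by
    intro p hp w hw
    exact hM w (hsqrUE p ((hFS p).1 hp).1 ((hFS p).1 hp).2 hw)
  -- bound for g where infDist ≤ 8s
  have hgb : ∀ z : ℂ, infDist z E ≤ 8*s → ‖g z‖ ≤ CB := by
    intro z hz
    refine le_trans (hnorm2pi _) ?_
    refine le_trans (edgesum_bound hs (d := 2*s) (by positivity) hM0 hMsq ?_) ?_
    · intro q hq w hw
      have h1 : 10*s < infDist w E := infDist_gt_of_not_touch hq hw
      have h2 : infDist w E ≤ infDist z E + dist w z := Metric.infDist_le_infDist_add_dist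
      rw [dist_comm]
      linarith
    · rw [hCBdef]
      have : M/(2*s)*s = M/2 := by field_simp
      rw [this]
      have : (FS.card:ℝ) ≥ 0 := by positivity
      nlinarith
  -- bound for k away from K1
  have hkb : ∀ z : ℂ, (∀ w ∈ K1, s ≤ dist z w) → ‖k z‖ ≤ CB := by
    intro z hz
    refine le_trans (hnorm2pi _) ?_
    refine le_trans (edgesum_bound hs (d := s) hs hM0 hMsq ?_) ?_
    · intro q hq w hw
      exact hz w (sqr_subset_Kset hq hw)
    · rw [hCBdef]
      have : M/s*s = M := by field_simp
      rw [this]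
  -- the identity f = g + k on interior K2 \ K1
  have hOid : ∀ z, z ∈ interior K2 → z ∉ K1 → f z = g z + k z := by
    intro z hzint hzK1
    have hzK2 : z ∈ K2 := interior_subset hzint
    rcases Set.mem_iUnion₂.1 hzK2 with ⟨p, hpQ2, hzp⟩
    have hpQ1 : ¬ Q1 p := fun h => hzK1 (sqr_subset_Kset h hzp)
    have hpFS : p ∈ FS := (hFS p).2 ⟨hpQ2, hpQ1⟩
    have hzUE : z ∈ U \ E := ⟨hK2U z hzK2, fun he => hzK1 (hEK1 he)⟩
    have hfd : DifferentiableAt ℂ f z := hf.differentiableAt (hUE.mem_nhds hzUE)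
    have hgd := hgdiff z hzint
    have hkd := hkdiff z hzK1
    have hcont : ContinuousAt (fun w => f w - g w - k w) z :=
      ((hfd.sub hgd).sub hkd).continuousAt
    have hpath : Filter.Tendsto (fun t : ℝ => z + (t:ℂ) * (ctr s p - z)) (𝓝[>] (0:ℝ)) (𝓝 z) := by
      have hcp : Continuous (fun t : ℝ => z + (t:ℂ) * (ctr s p - z)) :=
        continuous_const.add (Complex.continuous_ofReal.mul continuous_const)
      have h0 := hcp.tendsto' 0 z (by simp)
      exact h0.mono_left nhdsWithin_le_nhds
    have hev : ((fun w => f w - g w - k w) ∘ (fun t : ℝ => z + (t:ℂ) * (ctr s p - z)))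
        =ᶠ[𝓝[>] (0:ℝ)] (fun _ => 0) := by
      filter_upwards [Ioc_mem_nhdsGT_of_mem (Set.mem_Ico.2 ⟨le_refl (0:ℝ), zero_lt_one⟩)] with t ht
      have hmem := combo_mem_sqrO hs hzp ht.1 ht.2
      have hid := hmain p hpFS _ hmem
      show f _ - g _ - k _ = 0
      rw [← hid]
      ring
    have hzero : f z - g z - k z = 0 :=
      tendsto_nhds_unique ((hcont.tendsto.comp hpath).congr' hev) tendsto_const_nhds
    rw [sub_sub, sub_eq_zero] at hzero
    exact hzero
  -- glued function on the complement of E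
  set kt : ℂ → ℂ := fun z => if z ∈ K1 then f z - g z else k z with hktdef
  have hktdiff : DifferentiableOn ℂ kt Eᶜ := by
    intro z hz
    apply DifferentiableAt.differentiableWithinAt
    by_cases hzK1 : z ∈ K1
    · have hzUE : z ∈ U \ E := ⟨hK1U z hzK1, hz⟩
      have hN : (interior K2 ∩ Eᶜ) ∈ 𝓝 z :=
        (isOpen_interior.inter hE.isClosed.isOpen_compl).mem_nhds ⟨hK1K2 hzK1, hz⟩
      refine DifferentiableAt.congr_of_eventuallyEq
        ((hf.differentiableAt (hUE.mem_nhds hzUE)).sub (hgdiff z (hK1K2 hzK1))) ?_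
      filter_upwards [hN] with w hw
      by_cases hwK1 : w ∈ K1
      · rw [hktdef]; simp only [if_pos hwK1, Pi.sub_apply]
      · rw [hktdef]; simp only [if_neg hwK1, Pi.sub_apply]
        have := hOid w hw.1 hwK1
        rw [this]; ring
    · have hN : K1ᶜ ∈ 𝓝 z := hK1closed.isOpen_compl.mem_nhds hzK1
      refine DifferentiableAt.congr_of_eventuallyEq (hkdiff z hzK1) ?_
      filter_upwards [hN] with w hw
      rw [hktdef]; simp only [if_neg hw]
  have hktbd : ∀ z ∈ Eᶜ, ‖kt z‖ ≤ M + CB := by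
    intro z hz
    by_cases hzK1 : z ∈ K1
    · rw [hktdef]; simp only [if_pos hzK1]
      have hzUE : z ∈ U \ E := ⟨hK1U z hzK1, hz⟩
      have h1 : ‖f z‖ ≤ M := hM z hzUE
      have h2 : ‖g z‖ ≤ CB := by
        apply hgb
        have := infDist_le_of_mem_Kset hs hzK1
        linarith
      calc ‖f z - g z‖ ≤ ‖f z‖ + ‖g z‖ := norm_sub_le _ _
        _ ≤ M + CB := add_le_add h1 h2
    · rw [hktdef]; simp only [if_neg hzK1]
      by_cases hfar : 4*s ≤ infDist z E
      · have : ‖k z‖ ≤ CB := by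
          apply hkb
          intro w hw
          have h1 : infDist w E ≤ 3*s := by
            have := infDist_le_of_mem_Kset hs hw
            linarith
          have h2 : infDist z E ≤ infDist w E + dist z w := Metric.infDist_le_infDist_add_dist
          linarith
        linarith
      · push_neg at hfar
        have hzint : z ∈ interior K2 := subset_interior_Kset hs (by
          show infDist z E < 10*s
          linarith)
        have := hOid z hzint hzK1
        have hzUE : z ∈ U \ E := ⟨hK2U z (interior_subset hzint), hz⟩
        have h1 : ‖f z‖ ≤ M := hM z hzUE
        have h2 : ‖g z‖ ≤ CB := by
          apply hgb
          linarith
        have hkz : k z = f z - g z := by rw [this]; ring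
        rw [hkz]
        calc ‖f z - g z‖ ≤ ‖f z‖ + ‖g z‖ := norm_sub_le _ _
          _ ≤ M + CB := add_le_add h1 h2
  -- apply removability
  have hR0 : 0 ≤ R := by
    obtain ⟨e, he⟩ := hne
    have := hR he
    rw [Metric.mem_closedBall, dist_zero_right] at this
    exact le_trans (norm_nonneg e) this
  set z₀ : ℂ := ((R+1 : ℝ) : ℂ) with hz₀def
  have hz₀E : z₀ ∈ Eᶜ := by
    intro hz₀
    have := hR hz₀
    rw [Metric.mem_closedBall, dist_zero_right] at this
    rw [hz₀def] at this
    rw [Complex.norm_real] at this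
    rw [Real.norm_eq_abs, abs_of_pos (by linarith)] at this
    linarith
  have hconst := hrem kt hktdiff ⟨M + CB, hktbd⟩
  set c : ℂ := kt z₀ with hcdef
  have hc : ∀ z ∈ Eᶜ, kt z = c := fun z hz => hconst z hz z₀ hz₀E
  have hcbd : ‖c‖ ≤ M + CB := hktbd z₀ hz₀E
  -- final function
  refine ⟨fun z => if z ∈ K1 then g z + c else f z, ?_, ⟨M + CB + CB, ?_⟩, ?_⟩
  · intro z hzU
    apply DifferentiableAt.differentiableWithinAt
    by_cases hzK1 : z ∈ K1
    · refine DifferentiableAt.congr_of_eventuallyEq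
        ((hgdiff z (hK1K2 hzK1)).add_const c) ?_
      filter_upwards [isOpen_interior.mem_nhds (hK1K2 hzK1)] with w hw
      by_cases hwK1 : w ∈ K1
      · simp only [if_pos hwK1]
      · simp only [if_neg hwK1]
        have hwE : w ∈ Eᶜ := fun he => hwK1 (hEK1 he)
        have h1 := hOid w hw hwK1
        have h2 : k w = c := by
          have := hc w hwE
          rw [hktdef] at this
          simp only [if_neg hwK1] at this
          exact this
        rw [h1, h2]
    · have hzE : z ∉ E := fun he => hzK1 (hEK1 he)
      refine DifferentiableAt.congr_of_eventuallyEq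
        (hf.differentiableAt (hUE.mem_nhds ⟨hzU, hzE⟩)) ?_
      filter_upwards [hK1closed.isOpen_compl.mem_nhds hzK1] with w hw
      simp only [if_neg hw]
  · intro z hzU
    by_cases hzK1 : z ∈ K1
    · simp only [if_pos hzK1]
      have h2 : ‖g z‖ ≤ CB := by
        apply hgb
        have := infDist_le_of_mem_Kset hs hzK1
        linarith
      calc ‖g z + c‖ ≤ ‖g z‖ + ‖c‖ := norm_add_le _ _
        _ ≤ CB + (M + CB) := add_le_add h2 hcbd
        _ = M + CB + CB := by ring
    · simp only [if_neg hzK1]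
      have hzE : z ∉ E := fun he => hzK1 (hEK1 he)
      have := hM z ⟨hzU, hzE⟩
      linarith
  · intro z hzUE
    by_cases hzK1 : z ∈ K1
    · simp only [if_pos hzK1]
      have h2 : kt z = f z - g z := by
        rw [hktdef]; simp only [if_pos hzK1]
      have h3 := hc z hzUE.2
      rw [h2] at h3
      rw [hcdef] at h3 ⊢
      rw [← h3]
      ring
    · simp only [if_neg hzK1]

end HRem

/-- `H∞`-removability of a compact set `E` is equivalent to the local extension property:
for every open set `U ⊇ E`, every bounded holomorphic function on `U \ E` extends to a
bounded holomorphic function on `U`. -/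
theorem stmt_1 (E : Set ℂ) (hE : IsCompact E) :
    (∀ U : Set ℂ, IsOpen U → E ⊆ U →
      ∀ f : ℂ → ℂ, DifferentiableOn ℂ f (U \ E) → (∃ M : ℝ, ∀ z ∈ U \ E, ‖f z‖ ≤ M) →
        ∃ g : ℂ → ℂ, DifferentiableOn ℂ g U ∧ (∃ M : ℝ, ∀ z ∈ U, ‖g z‖ ≤ M) ∧
          ∀ z ∈ U \ E, g z = f z)
    ↔ HInftyRemovable E := by
  constructor
  · intro h f hf hbd z hz w hw
    obtain ⟨M, hM⟩ := hbd
    have hdiff' : DifferentiableOn ℂ f (Set.univ \ E) := by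
      rwa [← Set.compl_eq_univ_diff]
    have hbd' : ∃ M : ℝ, ∀ z ∈ Set.univ \ E, ‖f z‖ ≤ M :=
      ⟨M, fun z hz => hM z (by rwa [← Set.compl_eq_univ_diff] at hz)⟩
    obtain ⟨g, hgdiff, ⟨C, hC⟩, hgf⟩ :=
      h Set.univ isOpen_univ (Set.subset_univ E) f hdiff' hbd'
    have hgd : Differentiable ℂ g := fun x =>
      (hgdiff x (Set.mem_univ x)).differentiableAt (Filter.univ_mem)
    have hbdd : Bornology.IsBounded (Set.range g) := by
      apply Bornology.IsBounded.subset (Metric.isBounded_closedBall (x := (0:ℂ)) (r := C))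
      rintro x ⟨y, rfl⟩
      rw [Metric.mem_closedBall, dist_zero_right]
      exact hC y (Set.mem_univ y)
    have hzw := hgd.apply_eq_apply_of_bounded hbdd z w
    have h1 : g z = f z := hgf z (by rwa [← Set.compl_eq_univ_diff])
    have h2 : g w = f w := hgf w (by rwa [← Set.compl_eq_univ_diff])
    rw [← h1, ← h2]
    exact hzw
  · intro hrem U hU hEU f hf hbd
    obtain ⟨M, hM⟩ := hbd
    exact HRem.extension_of_removable E hE hrem U hU hEU f hf (max M 0) (le_max_right _ _)
      (fun z hz => le_trans (hM z hz) (le_max_left _ _))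
end HRem
end

section
/- (Frostman) Let E ⊆ ℂ be a compact set with Hausdorff dimension dimH(E) > 1. Then E is not H∞-removable: there exists a nonconstant bounded holomorphic function on ℂ \ E. -/
open MeasureTheory Set
open scoped ENNReal NNReal Classical

noncomputable section
namespace F6

/-! ### The σ-dimensional Hausdorff content -/

/-- gauge function: `diam A ^ σ` for nonempty `A`, `0` for `∅`. -/
def mfun (σ : ℝ) (A : Set ℂ) : ℝ≥0∞ := ⨆ _ : A.Nonempty, EMetric.diam A ^ σ

lemma mfun_empty (σ : ℝ) : mfun σ ∅ = 0 := by simp [mfun]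

/-- the Hausdorff content of exponent `σ`. -/
def Lam (σ : ℝ) : OuterMeasure ℂ := OuterMeasure.ofFunction (mfun σ) (mfun_empty σ)

lemma mfun_le {σ : ℝ} (hσ : 0 ≤ σ) {A : Set ℂ} {d : ℝ≥0∞} (h : EMetric.diam A ≤ d) :
    mfun σ A ≤ d ^ σ := by
  refine iSup_le fun _ => ENNReal.rpow_le_rpow h hσ

lemma Lam_le_diam {σ : ℝ} (hσ : 0 ≤ σ) (A : Set ℂ) : Lam σ A ≤ EMetric.diam A ^ σ :=
  (MeasureTheory.OuterMeasure.ofFunction_le _).trans (mfun_le hσ le_rfl)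

/-- if the content vanishes, so does the Hausdorff measure. -/
lemma hausdorff_zero_of_Lam_zero {σ : ℝ} (hσ : 0 < σ) {A : Set ℂ} (h : Lam σ A = 0) :
    μH[σ] A = 0 := by
  rw [Measure.hausdorffMeasure_apply]
  simp only [iSup_le_iff, ENNReal.iSup_eq_zero]
  intro r hr
  refine le_antisymm ?_ zero_le
  refine ENNReal.le_of_forall_pos_le_add fun ε hε _ => ?_
  rw [zero_add]
  have hpos : (0:ℝ≥0∞) < min (ε : ℝ≥0∞) (r ^ σ) := by
    refine lt_min (by exact_mod_cast hε) ?_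
    exact ENNReal.rpow_pos_of_nonneg hr hσ.le
  have h0 : Lam σ A < min (ε : ℝ≥0∞) (r ^ σ) := by rw [h]; exact hpos
  rw [Lam, MeasureTheory.OuterMeasure.ofFunction_apply] at h0
  obtain ⟨t, ht⟩ := iInf_lt_iff.1 h0
  obtain ⟨hcov, hsum⟩ := iInf_lt_iff.1 ht
  have hdiam : ∀ n, EMetric.diam (t n) ≤ r := by
    intro n
    rcases eq_empty_or_nonempty (t n) with he | hne
    · simp [he, EMetric.diam, Metric.ediam_empty]
    · by_contra hlt
      push_neg at hlt
      have h1 : r ^ σ ≤ EMetric.diam (t n) ^ σ := ENNReal.rpow_le_rpow hlt.le hσ.le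
      have h2 : mfun σ (t n) ≤ ∑' n, mfun σ (t n) := ENNReal.le_tsum n
      have h3 : EMetric.diam (t n) ^ σ ≤ mfun σ (t n) := by
        rw [mfun]; exact le_iSup (fun _ : (t n).Nonempty => EMetric.diam (t n) ^ σ) hne
      have := (h1.trans (h3.trans h2)).trans_lt hsum
      exact absurd this (by simp)
  simp only [mfun] at hsum
  refine le_trans (iInf_le_of_le t (iInf_le_of_le hcov (iInf_le_of_le hdiam le_rfl))) ?_
  exact le_trans hsum.le (min_le_left _ _)

/-! ### Dyadic geometry -/

/-- side length of generation `n` squares. -/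
def ell (R : ℝ) (n : ℕ) : ℝ := 2 * R / 2 ^ n

def Iv (R : ℝ) (n : ℕ) (a : ℕ) : Set ℝ :=
  Set.Ico (-R + a * ell R n) (-R + (a + 1) * ell R n)

/-- half-open dyadic square of generation `n`, index `p`. -/
def sq (R : ℝ) (n : ℕ) (p : ℕ × ℕ) : Set ℂ := {y | y.re ∈ Iv R n p.1 ∧ y.im ∈ Iv R n p.2}

def box (n : ℕ) : Finset (ℕ × ℕ) := Finset.range (2 ^ n) ×ˢ Finset.range (2 ^ n)

def par (p : ℕ × ℕ) : ℕ × ℕ := (p.1 / 2, p.2 / 2)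

def anc (j : ℕ) (p : ℕ × ℕ) : ℕ × ℕ := (p.1 / 2 ^ j, p.2 / 2 ^ j)

def chOff : Finset (ℕ × ℕ) := ({0, 1} : Finset ℕ) ×ˢ ({0, 1} : Finset ℕ)

def child (q e : ℕ × ℕ) : ℕ × ℕ := (2 * q.1 + e.1, 2 * q.2 + e.2)

variable {σ R : ℝ} {E : Set ℂ}

lemma ell_pos (hR : 0 < R) (n : ℕ) : 0 < ell R n := by
  have : (0:ℝ) < 2 ^ n := by positivity
  exact div_pos (by linarith) this

lemma ell_succ (R : ℝ) (n : ℕ) : ell R (n + 1) = ell R n / 2 := by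
  simp [ell, pow_succ]; ring

lemma ell_zero (R : ℝ) : ell R 0 = 2 * R := by simp [ell]

lemma par_child (q : ℕ × ℕ) {e : ℕ × ℕ} (he : e ∈ chOff) : par (child q e) = q := by
  have h1 : e.1 ≤ 1 := by
    rcases Finset.mem_product.1 he with ⟨h, -⟩
    simp only [Finset.mem_insert, Finset.mem_singleton] at h; omega
  have h2 : e.2 ≤ 1 := by
    rcases Finset.mem_product.1 he with ⟨-, h⟩
    simp only [Finset.mem_insert, Finset.mem_singleton] at h; omega
  simp only [par, child, Prod.ext_iff]
  omega

lemma Iv_subset_par (hR : 0 < R) (n : ℕ) (b : ℕ) : Iv R (n + 1) b ⊆ Iv R n (b / 2) := by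
  intro t ht
  obtain ⟨h1, h2⟩ := ht
  have hl := ell_pos hR n
  have hs := ell_succ R n
  rw [hs] at h1 h2
  have c1 : ((b / 2 : ℕ) : ℝ) * 2 ≤ (b : ℝ) := by exact_mod_cast Nat.div_mul_le_self b 2
  have c2 : ((b : ℝ) + 1) ≤ (((b / 2 : ℕ) : ℝ) + 1) * 2 := by
    have h : b + 1 ≤ (b / 2 + 1) * 2 := by omega
    exact_mod_cast h
  constructor
  · have h : ((b / 2 : ℕ) : ℝ) * ell R n ≤ (b : ℝ) * (ell R n / 2) := by nlinarith
    linarith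
  · have h : ((b : ℝ) + 1) * (ell R n / 2) ≤ (((b / 2 : ℕ) : ℝ) + 1) * ell R n := by nlinarith
    linarith

lemma sq_subset_par (hR : 0 < R) (n : ℕ) (p : ℕ × ℕ) :
    sq R (n + 1) p ⊆ sq R n (par p) := by
  intro y hy
  exact ⟨Iv_subset_par hR n p.1 hy.1, Iv_subset_par hR n p.2 hy.2⟩

lemma anc_succ (j : ℕ) (p : ℕ × ℕ) : anc (j + 1) p = anc j (par p) := by
  simp only [anc, par, Nat.div_div_eq_div_mul, pow_succ]
  rw [Nat.mul_comm (2 ^ j) 2]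

lemma sq_subset_anc (hR : 0 < R) (k j : ℕ) (p : ℕ × ℕ) :
    sq R (k + j) p ⊆ sq R k (anc j p) := by
  induction j generalizing p with
  | zero => simp [anc]
  | succ j ih =>
    intro y hy
    rw [anc_succ]
    exact ih (par p) (sq_subset_par hR (k + j) p hy)

/-- a dyadic square is the union of its four children. -/
lemma Iv_split (hR : 0 < R) (n : ℕ) (a : ℕ) {t : ℝ} (ht : t ∈ Iv R n a) :
    t ∈ Iv R (n + 1) (2 * a) ∨ t ∈ Iv R (n + 1) (2 * a + 1) := by
  obtain ⟨h1, h2⟩ := ht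
  have hl := ell_pos hR n
  have hs := ell_succ R n
  simp only [Iv, Set.mem_Ico, hs]
  push_cast
  by_cases hc : t < -R + (2 * (a:ℝ) + 1) * (ell R n / 2)
  · left; constructor <;> linarith
  · push_neg at hc; right; constructor <;> linarith

lemma sq_eq_union_children (hR : 0 < R) (n : ℕ) (q : ℕ × ℕ) :
    sq R n q ⊆ ⋃ e ∈ chOff, sq R (n + 1) (child q e) := by
  intro y hy
  have h1 := Iv_split hR n q.1 hy.1
  have h2 := Iv_split hR n q.2 hy.2
  simp only [mem_iUnion, exists_prop]
  have hmem : ∀ u v : ℕ, u ≤ 1 → v ≤ 1 → ((u, v) : ℕ × ℕ) ∈ chOff := by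
    intro u v hu hv
    simp only [chOff, Finset.mem_product, Finset.mem_insert, Finset.mem_singleton]
    omega
  rcases h1 with h1 | h1 <;> rcases h2 with h2 | h2
  · exact ⟨(0, 0), hmem 0 0 (by norm_num) (by norm_num), by simpa [child] using ⟨h1, h2⟩⟩
  · exact ⟨(0, 1), hmem 0 1 (by norm_num) (by norm_num), by simpa [child] using ⟨h1, h2⟩⟩
  · exact ⟨(1, 0), hmem 1 0 (by norm_num) (by norm_num), by simpa [child] using ⟨h1, h2⟩⟩
  · exact ⟨(1, 1), hmem 1 1 (by norm_num) (by norm_num), by simpa [child] using ⟨h1, h2⟩⟩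

lemma dist_le_of_mem_sq (hR : 0 < R) {n : ℕ} {p : ℕ × ℕ} {a b : ℂ}
    (ha : a ∈ sq R n p) (hb : b ∈ sq R n p) : dist a b ≤ 2 * ell R n := by
  obtain ⟨⟨ha1, ha2⟩, ha3, ha4⟩ := ha
  obtain ⟨⟨hb1, hb2⟩, hb3, hb4⟩ := hb
  have e1 : ((p.1 : ℝ) + 1) * ell R n = p.1 * ell R n + ell R n := by ring
  have e2 : ((p.2 : ℝ) + 1) * ell R n = p.2 * ell R n + ell R n := by ring
  have hre : |(a - b).re| ≤ ell R n := by
    rw [Complex.sub_re, abs_le]; push_cast at ha1 ha2 hb1 hb2 ⊢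
    constructor <;> nlinarith
  have him : |(a - b).im| ≤ ell R n := by
    rw [Complex.sub_im, abs_le]; push_cast at ha3 ha4 hb3 hb4 ⊢
    constructor <;> nlinarith
  calc dist a b = ‖a - b‖ := Complex.dist_eq a b
    _ ≤ |(a - b).re| + |(a - b).im| := Complex.norm_le_abs_re_add_abs_im _
    _ ≤ ell R n + ell R n := add_le_add hre him
    _ = 2 * ell R n := by ring

lemma diam_sq_le (hR : 0 < R) (n : ℕ) (p : ℕ × ℕ) :
    EMetric.diam (sq R n p) ≤ ENNReal.ofReal (2 * ell R n) := by
  refine EMetric.diam_le fun a ha b hb => ?_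
  rw [edist_dist]
  exact ENNReal.ofReal_le_ofReal (dist_le_of_mem_sq hR ha hb)

/-! ### The Frostman weights -/

/-- `toReal` of the content of `E` intersected with a dyadic square. -/
def mr (σ R : ℝ) (E : Set ℂ) (n : ℕ) (p : ℕ × ℕ) : ℝ := (Lam σ (E ∩ sq R n p)).toReal

/-- sum of contents of the four children. -/
def Ssib (σ R : ℝ) (E : Set ℂ) (n : ℕ) (q : ℕ × ℕ) : ℝ :=
  ∑ e ∈ chOff, mr σ R E (n + 1) (child q e)

/-- the Frostman weights, defined by top-down proportional subdivision. -/
def w (σ R : ℝ) (E : Set ℂ) : ℕ → ℕ × ℕ → ℝ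
  | 0, p => if p = (0, 0) then (Lam σ E).toReal else 0
  | (n + 1), p => mr σ R E (n + 1) p * w σ R E n (par p) / Ssib σ R E n (par p)

/-- cap on the weight of a generation `n` square. -/
def cap (σ R : ℝ) (n : ℕ) : ℝ := (2 * ell R n) ^ σ

/-- total mass. -/
def W (σ : ℝ) (E : Set ℂ) : ℝ := (Lam σ E).toReal

lemma mr_nonneg (n : ℕ) (p : ℕ × ℕ) : 0 ≤ mr σ R E n p := ENNReal.toReal_nonneg

lemma Lam_inter_sq_le (hσ : 0 ≤ σ) (hR : 0 < R) (n : ℕ) (p : ℕ × ℕ) :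
    Lam σ (E ∩ sq R n p) ≤ ENNReal.ofReal (2 * ell R n) ^ σ := by
  refine (Lam_le_diam hσ _).trans (ENNReal.rpow_le_rpow ?_ hσ)
  exact (EMetric.diam_mono inter_subset_right).trans (diam_sq_le hR n p)

lemma Lam_inter_sq_ne_top (hσ : 0 ≤ σ) (hR : 0 < R) (n : ℕ) (p : ℕ × ℕ) :
    Lam σ (E ∩ sq R n p) ≠ ⊤ := by
  refine ne_top_of_le_ne_top ?_ (Lam_inter_sq_le hσ hR n p)
  exact ENNReal.rpow_ne_top_of_nonneg hσ ENNReal.ofReal_ne_top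

lemma mr_le_cap (hσ : 0 ≤ σ) (hR : 0 < R) (n : ℕ) (p : ℕ × ℕ) :
    mr σ R E n p ≤ cap σ R n := by
  have hl : (0:ℝ) < 2 * ell R n := by have := ell_pos hR n; linarith
  have h1 : (ENNReal.ofReal (2 * ell R n)) ^ σ = ENNReal.ofReal ((2 * ell R n) ^ σ) :=
    ENNReal.ofReal_rpow_of_pos hl
  have h2 := Lam_inter_sq_le (E := E) hσ hR n p
  rw [h1] at h2
  have h3 := ENNReal.toReal_mono ENNReal.ofReal_ne_top h2
  rw [ENNReal.toReal_ofReal (Real.rpow_nonneg hl.le σ)] at h3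
  exact h3

lemma mr_le_Ssib (hσ : 0 ≤ σ) (hR : 0 < R) (n : ℕ) (q : ℕ × ℕ) :
    mr σ R E n q ≤ Ssib σ R E n q := by
  have hsub : E ∩ sq R n q ⊆ ⋃ e ∈ (chOff : Finset (ℕ × ℕ)), (E ∩ sq R (n + 1) (child q e)) := by
    intro y hy
    rcases mem_iUnion₂.1 (sq_eq_union_children hR n q hy.2) with ⟨e, he, hye⟩
    exact mem_iUnion₂.2 ⟨e, he, hy.1, hye⟩
  have h1 : Lam σ (E ∩ sq R n q) ≤ ∑ e ∈ chOff, Lam σ (E ∩ sq R (n + 1) (child q e)) :=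
    (measure_mono hsub).trans (measure_biUnion_finset_le _ _)
  have hne : ∀ e ∈ (chOff : Finset (ℕ × ℕ)), Lam σ (E ∩ sq R (n + 1) (child q e)) ≠ ⊤ :=
    fun e _ => Lam_inter_sq_ne_top hσ hR _ _
  have h2 := ENNReal.toReal_mono (by
      rw [← lt_top_iff_ne_top]
      exact ENNReal.sum_lt_top.2 fun e he => lt_top_iff_ne_top.2 (hne e he)) h1
  rwa [ENNReal.toReal_sum hne] at h2

lemma Ssib_nonneg (n : ℕ) (q : ℕ × ℕ) : 0 ≤ Ssib σ R E n q :=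
  Finset.sum_nonneg fun _ _ => mr_nonneg _ _

lemma w_nonneg (n : ℕ) (p : ℕ × ℕ) : 0 ≤ w σ R E n p := by
  induction n generalizing p with
  | zero => simp only [w]; split <;> simp [ENNReal.toReal_nonneg]
  | succ n ih =>
    simp only [w]
    exact div_nonneg (mul_nonneg (mr_nonneg _ _) (ih _)) (Ssib_nonneg _ _)

lemma w_le_mr (hσ : 0 ≤ σ) (hR : 0 < R) (hE0 : E ⊆ sq R 0 (0, 0)) (n : ℕ) (p : ℕ × ℕ) :
    w σ R E n p ≤ mr σ R E n p := by
  induction n generalizing p with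
  | zero =>
    simp only [w]
    split
    · rename_i h
      subst h
      rw [mr, inter_eq_left.2 hE0]
    · exact mr_nonneg _ _
  | succ n ih =>
    simp only [w]
    by_cases hS : Ssib σ R E n (par p) = 0
    · simp [hS, mr_nonneg]
    · have hSpos : 0 < Ssib σ R E n (par p) := (Ssib_nonneg _ _).lt_of_ne (Ne.symm hS)
      rw [div_le_iff₀ hSpos]
      have hw : w σ R E n (par p) ≤ Ssib σ R E n (par p) :=
        (ih _).trans (mr_le_Ssib hσ hR n (par p))
      calc mr σ R E (n + 1) p * w σ R E n (par p)
          ≤ mr σ R E (n + 1) p * Ssib σ R E n (par p) :=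
            mul_le_mul_of_nonneg_left hw (mr_nonneg _ _)
        _ = mr σ R E (n + 1) p * Ssib σ R E n (par p) := rfl

lemma w_le_cap (hσ : 0 ≤ σ) (hR : 0 < R) (hE0 : E ⊆ sq R 0 (0, 0)) (n : ℕ) (p : ℕ × ℕ) :
    w σ R E n p ≤ cap σ R n := (w_le_mr hσ hR hE0 n p).trans (mr_le_cap hσ hR n p)

/-- consistency: the four children's masses add up to the parent's mass. -/
lemma w_consistent (hσ : 0 ≤ σ) (hR : 0 < R) (hE0 : E ⊆ sq R 0 (0, 0)) (n : ℕ) (q : ℕ × ℕ) :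
    ∑ e ∈ chOff, w σ R E (n + 1) (child q e) = w σ R E n q := by
  have hpc : ∀ e ∈ (chOff : Finset (ℕ × ℕ)), w σ R E (n + 1) (child q e)
      = mr σ R E (n + 1) (child q e) * w σ R E n q / Ssib σ R E n q := by
    intro e he
    simp only [w, par_child q he]
  rw [Finset.sum_congr rfl hpc]
  by_cases hS : Ssib σ R E n q = 0
  · have hw : w σ R E n q = 0 :=
      le_antisymm (((w_le_mr hσ hR hE0 n q).trans (mr_le_Ssib hσ hR n q)).trans hS.le)
        (w_nonneg _ _)
    simp [hS, hw]
  · rw [← Finset.sum_div, ← Finset.sum_mul]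
    have : (∑ e ∈ chOff, mr σ R E (n + 1) (child q e)) = Ssib σ R E n q := rfl
    rw [this]
    field_simp

lemma children_fiber (n : ℕ) {q : ℕ × ℕ} (hq : q ∈ box n) :
    (box (n + 1)).filter (fun p => par p = q) = chOff.image (child q) := by
  have hq1 : q.1 < 2 ^ n := by
    rcases Finset.mem_product.1 hq with ⟨h, -⟩; exact Finset.mem_range.1 h
  have hq2 : q.2 < 2 ^ n := by
    rcases Finset.mem_product.1 hq with ⟨-, h⟩; exact Finset.mem_range.1 h
  ext p
  simp only [box, chOff, par, child, Finset.mem_filter, Finset.mem_image, Finset.mem_product,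
    Finset.mem_range, Finset.mem_insert, Finset.mem_singleton, Prod.ext_iff, pow_succ]
  constructor
  · rintro ⟨⟨h1, h2⟩, h3, h4⟩
    refine ⟨(p.1 - 2 * q.1, p.2 - 2 * q.2), ⟨?_, ?_⟩, ?_, ?_⟩ <;> simp <;> omega
  · rintro ⟨e, ⟨he1, he2⟩, hep1, hep2⟩
    refine ⟨⟨?_, ?_⟩, ?_, ?_⟩ <;> omega

lemma child_injOn (q : ℕ × ℕ) : Set.InjOn (child q) (chOff : Finset (ℕ × ℕ)) := by
  intro a _ b _ hab
  simp only [child, Prod.ext_iff] at hab ⊢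
  omega

lemma sum_w_children (hσ : 0 ≤ σ) (hR : 0 < R) (hE0 : E ⊆ sq R 0 (0, 0)) (n : ℕ)
    {q : ℕ × ℕ} (hq : q ∈ box n) :
    ∑ p ∈ (box (n + 1)).filter (fun p => par p = q), w σ R E (n + 1) p = w σ R E n q := by
  rw [children_fiber n hq, Finset.sum_image (child_injOn q)]
  exact w_consistent hσ hR hE0 n q

/-- the masses of all generation-`k+j` descendants of `q` add up to the mass of `q`. -/
lemma par_mem_box {n : ℕ} {p : ℕ × ℕ} (hp : p ∈ box (n + 1)) : par p ∈ box n := by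
  rcases Finset.mem_product.1 hp with ⟨h1, h2⟩
  rw [Finset.mem_range, pow_succ] at h1 h2
  refine Finset.mem_product.2 ⟨Finset.mem_range.2 ?_, Finset.mem_range.2 ?_⟩ <;>
    simp only [par] <;> omega

lemma sum_w_desc (hσ : 0 ≤ σ) (hR : 0 < R) (hE0 : E ⊆ sq R 0 (0, 0)) (k j : ℕ)
    {q : ℕ × ℕ} (hq : q ∈ box k) :
    ∑ p ∈ (box (k + j)).filter (fun p => anc j p = q), w σ R E (k + j) p = w σ R E k q := by
  induction j with
  | zero =>
    have : (box (k + 0)).filter (fun p => anc 0 p = q) = {q} := by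
      ext p
      simp only [Finset.mem_filter, Finset.mem_singleton, anc, pow_zero, Nat.div_one]
      constructor
      · rintro ⟨-, h⟩; rcases p with ⟨p1, p2⟩; simpa using h
      · rintro rfl; exact ⟨hq, rfl⟩
    rw [this, Finset.sum_singleton]
    rfl
  | succ j ih =>
    have hmaps : ∀ p ∈ (box (k + j + 1)).filter (fun p => anc j (par p) = q),
        par p ∈ (box (k + j)).filter (fun p => anc j p = q) := by
      intro p hp
      rcases Finset.mem_filter.1 hp with ⟨hp1, hp2⟩
      exact Finset.mem_filter.2 ⟨par_mem_box hp1, hp2⟩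
    have key := Finset.sum_fiberwise_of_maps_to hmaps (w σ R E (k + j + 1))
    have hfib : ∀ q' ∈ (box (k + j)).filter (fun p => anc j p = q),
        ((box (k + j + 1)).filter (fun p => anc j (par p) = q)).filter (fun p => par p = q')
          = (box (k + j + 1)).filter (fun p => par p = q') := by
      intro q' hq'
      rcases Finset.mem_filter.1 hq' with ⟨hq'1, hq'2⟩
      ext p
      simp only [Finset.mem_filter, and_assoc]
      constructor
      · rintro ⟨h1, -, h3⟩; exact ⟨h1, h3⟩
      · rintro ⟨h1, h3⟩; exact ⟨h1, by rw [h3]; exact hq'2, h3⟩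
    have step : ∑ p ∈ (box (k + j + 1)).filter (fun p => anc j (par p) = q),
        w σ R E (k + j + 1) p = w σ R E k q := by
      rw [← key]
      have : ∀ q' ∈ (box (k + j)).filter (fun p => anc j p = q),
          ∑ p ∈ ((box (k + j + 1)).filter (fun p => anc j (par p) = q)).filter
              (fun p => par p = q'), w σ R E (k + j + 1) p = w σ R E (k + j) q' := by
        intro q' hq'
        rw [hfib q' hq']
        exact sum_w_children hσ hR hE0 (k + j) (Finset.mem_filter.1 hq').1
      rw [Finset.sum_congr rfl this]
      exact ih
    rw [show k + (j + 1) = k + j + 1 from rfl]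
    rw [← step]
    refine Finset.sum_congr ?_ fun _ _ => rfl
    ext p
    simp only [Finset.mem_filter, anc_succ]

lemma sum_w_box (hσ : 0 ≤ σ) (hR : 0 < R) (hE0 : E ⊆ sq R 0 (0, 0)) (n : ℕ) :
    ∑ p ∈ box n, w σ R E n p = W σ E := by
  have h0 : ((0, 0) : ℕ × ℕ) ∈ box 0 := by
    refine Finset.mem_product.2 ⟨?_, ?_⟩ <;> simp [box]
  have := sum_w_desc (E := E) hσ hR hE0 0 n h0
  have hfull : (box (0 + n)).filter (fun p => anc n p = (0, 0)) = box n := by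
    ext p
    simp only [Finset.mem_filter, zero_add, anc, Prod.ext_iff]
    constructor
    · rintro ⟨h, -⟩; exact h
    · intro h
      rcases Finset.mem_product.1 h with ⟨h1, h2⟩
      rw [Finset.mem_range] at h1 h2
      exact ⟨h, by simpa using Nat.div_eq_of_lt h1, by simpa using Nat.div_eq_of_lt h2⟩
  rw [hfull, zero_add] at this
  rw [this]
  simp [w, W]

/-! ### Atoms -/

def pt (R : ℝ) (E : Set ℂ) (n : ℕ) (p : ℕ × ℕ) : ℂ :=
  if h : (E ∩ sq R n p).Nonempty then h.choose else 0

lemma w_eq_zero_of_empty (hE0 : E ⊆ sq R 0 (0, 0)) {n : ℕ} {p : ℕ × ℕ}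
    (h : E ∩ sq R n p = ∅) : w σ R E n p = 0 := by
  cases n with
  | zero =>
    simp only [w]
    split
    · rename_i hp
      subst hp
      rw [inter_eq_left.2 hE0] at h
      simp [h]
    · rfl
  | succ n =>
    have : mr σ R E (n + 1) p = 0 := by simp [mr, h]
    simp [w, this]

lemma pt_mem (n : ℕ) (p : ℕ × ℕ) (h : w σ R E n p ≠ 0) (hσ : 0 ≤ σ) (hR : 0 < R)
    (hE0 : E ⊆ sq R 0 (0, 0)) : pt R E n p ∈ E ∩ sq R n p := by
  have hne : (E ∩ sq R n p).Nonempty := by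
    rw [nonempty_iff_ne_empty]
    intro hc
    exact h (w_eq_zero_of_empty hE0 hc)
  rw [pt, dif_pos hne]
  exact hne.choose_spec

/-! ### Counting lemma -/

lemma counting_1d (hR : 0 < R) (k : ℕ) {ρ : ℝ} (hρ : 0 < ρ) (hρ' : ρ ≤ 4 * ell R k)
    (t : ℝ) : ∃ a : ℕ, ∀ q : ℕ, (∃ x : ℝ, x ∈ Iv R k q ∧ |x - t| < ρ) →
      q ∈ Finset.Ico a (a + 9) := by
  set l := ell R k with hl
  have hlpos : 0 < l := ell_pos hR k
  set u := t + R - ρ with hu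
  refine ⟨⌊u / l⌋₊, fun q ⟨x, ⟨hx1, hx2⟩, hxt⟩ => ?_⟩
  rw [abs_lt] at hxt
  have hq1 : (q : ℝ) * l ≤ x + R := by linarith
  have hq2 : x + R < ((q : ℝ) + 1) * l := by linarith
  have hub : u < (⌊u / l⌋₊ + 1 : ℝ) * l := by
    have := Nat.lt_floor_add_one (u / l)
    calc u = u / l * l := by field_simp
      _ < (⌊u / l⌋₊ + 1 : ℝ) * l := by
          exact mul_lt_mul_of_pos_right this hlpos
  have hupper : q < ⌊u / l⌋₊ + 9 := by
    have h1 : (q : ℝ) * l < u + 2 * ρ := by linarith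
    have h2 : (q : ℝ) * l < (⌊u / l⌋₊ + 1 : ℝ) * l + 8 * l := by
      have : 2 * ρ ≤ 8 * l := by linarith
      linarith
    have h3 : (q : ℝ) < (⌊u / l⌋₊ : ℝ) + 9 := by nlinarith
    exact_mod_cast Nat.cast_lt.1 (by push_cast; linarith : (q : ℝ) < ((⌊u / l⌋₊ + 9 : ℕ) : ℝ))
  have hlower : ⌊u / l⌋₊ ≤ q := by
    by_cases hun : 0 ≤ u / l
    · have h1 : (⌊u / l⌋₊ : ℝ) ≤ u / l := Nat.floor_le hun
      have h2 : u < ((q : ℝ) + 1) * l := by linarith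
      have h3 : u / l < (q : ℝ) + 1 := by
        rw [div_lt_iff₀ hlpos]; linarith
      have : (⌊u / l⌋₊ : ℝ) < (q : ℝ) + 1 := lt_of_le_of_lt h1 h3
      exact_mod_cast Nat.lt_add_one_iff.1 (by exact_mod_cast this)
    · push_neg at hun
      rw [Nat.floor_eq_zero.2 (hun.trans_le zero_le_one) ]
      exact Nat.zero_le q
  exact Finset.mem_Ico.2 ⟨hlower, hupper⟩

lemma counting (hR : 0 < R) (z : ℂ) (k : ℕ) {ρ : ℝ} (hρ : 0 < ρ) (hρ' : ρ ≤ 4 * ell R k) :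
    ((box k).filter (fun q => (sq R k q ∩ Metric.ball z ρ).Nonempty)).card ≤ 81 := by
  obtain ⟨a, ha⟩ := counting_1d hR k hρ hρ' z.re
  obtain ⟨b, hb⟩ := counting_1d hR k hρ hρ' z.im
  have hsub : (box k).filter (fun q => (sq R k q ∩ Metric.ball z ρ).Nonempty)
      ⊆ Finset.Ico a (a + 9) ×ˢ Finset.Ico b (b + 9) := by
    intro q hq
    rcases Finset.mem_filter.1 hq with ⟨-, y, hy1, hy2⟩
    rw [Metric.mem_ball, Complex.dist_eq] at hy2
    have hre : |y.re - z.re| < ρ :=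
      lt_of_le_of_lt (by rw [← Complex.sub_re]; exact Complex.abs_re_le_norm _) hy2
    have him : |y.im - z.im| < ρ :=
      lt_of_le_of_lt (by rw [← Complex.sub_im]; exact Complex.abs_im_le_norm _) hy2
    refine Finset.mem_product.2 ⟨ha q.1 ⟨y.re, hy1.1, hre⟩, hb q.2 ⟨y.im, hy1.2, him⟩⟩
  calc ((box k).filter _).card ≤ _ := Finset.card_le_card hsub
    _ ≤ 81 := by rw [Finset.card_product, Nat.card_Ico, Nat.card_Ico]; simp

/-- mass near a point: the total weight of generation-`n` atoms within distance `4·ℓ k` of `z`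
is at most `81` caps of generation `k`. -/
lemma anc_mem_box {k n : ℕ} (hkn : k ≤ n) {p : ℕ × ℕ} (hp : p ∈ box n) :
    anc (n - k) p ∈ box k := by
  rcases Finset.mem_product.1 hp with ⟨h1, h2⟩
  rw [Finset.mem_range] at h1 h2
  have hpow : 2 ^ n = 2 ^ k * 2 ^ (n - k) := by
    rw [← pow_add]
    congr 1
    omega
  have hpos : 0 < 2 ^ (n - k) := Nat.pow_pos (by norm_num)
  refine Finset.mem_product.2 ⟨Finset.mem_range.2 ?_, Finset.mem_range.2 ?_⟩ <;>
    simp only [anc] <;> rw [Nat.div_lt_iff_lt_mul hpos] <;> omega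

lemma cap_nonneg (hR : 0 < R) (n : ℕ) : 0 ≤ cap σ R n :=
  Real.rpow_nonneg (by have := ell_pos hR n; linarith) σ

lemma mass_near (hσ : 0 ≤ σ) (hR : 0 < R) (hE0 : E ⊆ sq R 0 (0, 0)) (z : ℂ)
    {k n : ℕ} (hkn : k ≤ n) :
    ∑ p ∈ (box n).filter (fun p => dist z (pt R E n p) < 4 * ell R k), w σ R E n p
      ≤ 81 * cap σ R k := by
  have hρ : 0 < 4 * ell R k := by have := ell_pos hR k; linarith
  set filt := (box k).filter
      (fun q => (sq R k q ∩ Metric.ball z (4 * ell R k)).Nonempty) with hfilt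
  set B := (box n).filter (fun p => anc (n - k) p ∈ filt) with hB
  set S2 := (box n).filter
      (fun p => dist z (pt R E n p) < 4 * ell R k ∧ w σ R E n p ≠ 0) with hS2
  have hstep0 : ∑ p ∈ (box n).filter (fun p => dist z (pt R E n p) < 4 * ell R k),
      w σ R E n p = ∑ p ∈ S2, w σ R E n p := by
    refine (Finset.sum_subset ?_ ?_).symm
    · intro p hp
      rcases Finset.mem_filter.1 hp with ⟨h1, h2, -⟩
      exact Finset.mem_filter.2 ⟨h1, h2⟩
    · intro p hp hp2
      rcases Finset.mem_filter.1 hp with ⟨h1, h2⟩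
      by_contra hw
      exact hp2 (Finset.mem_filter.2 ⟨h1, h2, hw⟩)
  have hS2B : S2 ⊆ B := by
    intro p hp
    rcases Finset.mem_filter.1 hp with ⟨h1, h2, h3⟩
    have hx := pt_mem (σ := σ) n p h3 hσ hR hE0
    refine Finset.mem_filter.2 ⟨h1, Finset.mem_filter.2 ⟨anc_mem_box hkn h1, ?_⟩⟩
    refine ⟨pt R E n p, ?_, Metric.mem_ball.2 (by rw [dist_comm]; exact h2)⟩
    have hxs : pt R E n p ∈ sq R (k + (n - k)) p := by
      rw [show k + (n - k) = n by omega]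
      exact hx.2
    exact sq_subset_anc hR k (n - k) p hxs
  have hstep1 : ∑ p ∈ S2, w σ R E n p ≤ ∑ p ∈ B, w σ R E n p :=
    Finset.sum_le_sum_of_subset_of_nonneg hS2B fun p _ _ => w_nonneg _ _
  have hmaps : ∀ p ∈ B, anc (n - k) p ∈ filt := fun p hp => (Finset.mem_filter.1 hp).2
  have key := Finset.sum_fiberwise_of_maps_to hmaps (w σ R E n)
  have hfib : ∀ q' ∈ filt, B.filter (fun p => anc (n - k) p = q')
      = (box n).filter (fun p => anc (n - k) p = q') := by
    intro q' hq'
    ext p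
    simp only [hB, Finset.mem_filter, and_assoc]
    constructor
    · rintro ⟨h1, -, h3⟩; exact ⟨h1, h3⟩
    · rintro ⟨h1, h3⟩; exact ⟨h1, by rw [h3]; exact hq', h3⟩
  have hstep2 : ∑ p ∈ B, w σ R E n p = ∑ q' ∈ filt, w σ R E k q' := by
    rw [← key]
    refine Finset.sum_congr rfl fun q' hq' => ?_
    rw [hfib q' hq']
    have hq'box : q' ∈ box k := (Finset.mem_filter.1 hq').1
    have := sum_w_desc (E := E) hσ hR hE0 k (n - k) hq'box
    rw [show k + (n - k) = n by omega] at this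
    exact this
  have hstep3 : ∑ q' ∈ filt, w σ R E k q' ≤ 81 * cap σ R k := by
    have hcard : filt.card ≤ 81 := counting hR z k hρ le_rfl
    calc ∑ q' ∈ filt, w σ R E k q' ≤ filt.card • cap σ R k :=
          Finset.sum_le_card_nsmul _ _ _ fun q' _ => w_le_cap hσ hR hE0 k q'
      _ = (filt.card : ℝ) * cap σ R k := nsmul_eq_mul _ _
      _ ≤ 81 * cap σ R k := by
          refine mul_le_mul_of_nonneg_right ?_ (cap_nonneg hR k)
          exact_mod_cast hcard
  rw [hstep0]
  exact hstep1.trans (hstep2.le.trans hstep3)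

/-! ### The potential bound -/

lemma inv_le_tele (r : ℕ → ℝ) (hr : ∀ k, 0 < r k) (hhalf : ∀ k, r (k + 1) = r k / 2)
    {d : ℝ} (hd : 0 < d) (n : ℕ) :
    d⁻¹ ≤ (r 0)⁻¹ + (∑ k ∈ Finset.range n, if d < r k then (r (k + 1))⁻¹ else 0)
      + (if d < r n then d⁻¹ else 0) := by
  induction n with
  | zero =>
    simp only [Finset.range_zero, Finset.sum_empty, add_zero]
    by_cases h : d < r 0
    · rw [if_pos h]
      have : 0 ≤ (r 0)⁻¹ := (inv_nonneg).2 (hr 0).le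
      linarith
    · rw [if_neg h]
      have h' : r 0 ≤ d := not_lt.1 h
      have := one_div_le_one_div_of_le (hr 0) h'
      rw [one_div, one_div] at this
      linarith
  | succ n ih =>
    rw [Finset.sum_range_succ]
    have key : (if d < r n then d⁻¹ else 0)
        ≤ (if d < r n then (r (n + 1))⁻¹ else 0) + (if d < r (n + 1) then d⁻¹ else 0) := by
      by_cases h1 : d < r (n + 1)
      · have h2 : d < r n := h1.trans_le (by rw [hhalf n]; linarith [hr n])
        simp only [if_pos h1, if_pos h2]
        have : 0 ≤ (r (n + 1))⁻¹ := (inv_nonneg).2 (hr (n + 1)).le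
        linarith
      · by_cases h2 : d < r n
        · rw [if_neg h1, if_pos h2, if_pos h2, add_zero]
          have := one_div_le_one_div_of_le (hr (n + 1)) (not_lt.1 h1)
          rw [one_div, one_div] at this
          linarith
        · rw [if_neg h1, if_neg h2, if_neg h2]
          norm_num
    linarith

/-- the big constant. -/
def bigM (σ R : ℝ) (E : Set ℂ) : ℝ :=
  W σ E * (8 * R)⁻¹ + 81 * ((4 * R) ^ (σ - 1) * (1 - (2:ℝ) ^ (1 - σ))⁻¹)

/-- the main potential estimate. -/
lemma potential_bound (hσ : 1 < σ) (hR : 0 < R) (hE0 : E ⊆ sq R 0 (0, 0))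
    {z : ℂ} {δ : ℝ} (hδ : 0 < δ) (hzE : δ ≤ Metric.infDist z E) (n : ℕ) :
    ∑ p ∈ box n, w σ R E n p * (dist z (pt R E n p))⁻¹
      ≤ bigM σ R E + 81 * cap σ R n / δ := by
  have hσ0 : (0:ℝ) ≤ σ := by linarith
  have hrpos : ∀ k, 0 < 4 * ell R k := fun k => by have := ell_pos hR k; linarith
  have hrhalf : ∀ k, 4 * ell R (k + 1) = 4 * ell R k / 2 := fun k => by
    rw [ell_succ]; ring
  -- pointwise telescoping bound
  have step1 : ∀ p ∈ box n, w σ R E n p * (dist z (pt R E n p))⁻¹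
      ≤ w σ R E n p * ((4 * ell R 0)⁻¹
        + (∑ k ∈ Finset.range n,
            if dist z (pt R E n p) < 4 * ell R k then (4 * ell R (k + 1))⁻¹ else 0)
        + (if dist z (pt R E n p) < 4 * ell R n then δ⁻¹ else 0)) := by
    intro p hp
    by_cases hw : w σ R E n p = 0
    · simp [hw]
    · have hx := pt_mem (σ := σ) n p hw hσ0 hR hE0
      have hd : δ ≤ dist z (pt R E n p) :=
        hzE.trans (Metric.infDist_le_dist_of_mem hx.1)
      have hd0 : 0 < dist z (pt R E n p) := hδ.trans_le hd
      have htele := inv_le_tele (fun k => 4 * ell R k) hrpos hrhalf hd0 n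
      have hlast : (if dist z (pt R E n p) < 4 * ell R n then (dist z (pt R E n p))⁻¹ else 0)
          ≤ (if dist z (pt R E n p) < 4 * ell R n then δ⁻¹ else 0) := by
        split
        · have := one_div_le_one_div_of_le hδ hd
          rw [one_div, one_div] at this
          exact this
        · exact le_rfl
      refine mul_le_mul_of_nonneg_left ?_ (w_nonneg _ _)
      linarith
  have big := Finset.sum_le_sum step1
  -- split the right-hand side into three pieces
  have hsplit : ∑ p ∈ box n, w σ R E n p * ((4 * ell R 0)⁻¹
        + (∑ k ∈ Finset.range n,
            if dist z (pt R E n p) < 4 * ell R k then (4 * ell R (k + 1))⁻¹ else 0)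
        + (if dist z (pt R E n p) < 4 * ell R n then δ⁻¹ else 0))
      = (∑ p ∈ box n, w σ R E n p * (4 * ell R 0)⁻¹)
        + (∑ p ∈ box n, w σ R E n p * ∑ k ∈ Finset.range n,
            if dist z (pt R E n p) < 4 * ell R k then (4 * ell R (k + 1))⁻¹ else 0)
        + (∑ p ∈ box n, w σ R E n p *
            if dist z (pt R E n p) < 4 * ell R n then δ⁻¹ else 0) := by
    rw [← Finset.sum_add_distrib, ← Finset.sum_add_distrib]
    refine Finset.sum_congr rfl fun p _ => by ring
  -- piece 1
  have hT1 : (∑ p ∈ box n, w σ R E n p * (4 * ell R 0)⁻¹) = W σ E * (8 * R)⁻¹ := by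
    rw [← Finset.sum_mul, sum_w_box hσ0 hR hE0]
    congr 1
    rw [ell_zero]
    ring_nf
  -- piece 2
  have hmass : ∀ k, k ≤ n → (∑ p ∈ box n,
      if dist z (pt R E n p) < 4 * ell R k then w σ R E n p else 0) ≤ 81 * cap σ R k := by
    intro k hk
    rw [← Finset.sum_filter]
    exact mass_near hσ0 hR hE0 z hk
  have hT2 : (∑ p ∈ box n, w σ R E n p * ∑ k ∈ Finset.range n,
        if dist z (pt R E n p) < 4 * ell R k then (4 * ell R (k + 1))⁻¹ else 0)
      ≤ ∑ k ∈ Finset.range n, 81 * cap σ R k * (4 * ell R (k + 1))⁻¹ := by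
    have hcomm : (∑ p ∈ box n, w σ R E n p * ∑ k ∈ Finset.range n,
          if dist z (pt R E n p) < 4 * ell R k then (4 * ell R (k + 1))⁻¹ else 0)
        = ∑ k ∈ Finset.range n, (∑ p ∈ box n,
            if dist z (pt R E n p) < 4 * ell R k then w σ R E n p else 0)
              * (4 * ell R (k + 1))⁻¹ := by
      simp only [Finset.mul_sum, Finset.sum_mul]
      rw [Finset.sum_comm]
      refine Finset.sum_congr rfl fun p _ => Finset.sum_congr rfl fun k _ => ?_
      split <;> simp
    rw [hcomm]
    refine Finset.sum_le_sum fun k hk => ?_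
    refine mul_le_mul_of_nonneg_right (hmass k (Finset.mem_range.1 hk).le) ?_
    exact inv_nonneg.2 (hrpos (k + 1)).le
  -- geometric series estimate for piece 2
  have hgeom : ∑ k ∈ Finset.range n, 81 * cap σ R k * (4 * ell R (k + 1))⁻¹
      ≤ 81 * ((4 * R) ^ (σ - 1) * (1 - (2:ℝ) ^ (1 - σ))⁻¹) := by
    set x : ℝ := (2:ℝ) ^ (1 - σ) with hxdef
    have hx0 : 0 ≤ x := Real.rpow_nonneg (by norm_num) _
    have hx1 : x < 1 := Real.rpow_lt_one_of_one_lt_of_neg one_lt_two (by linarith)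
    have hck : ∀ k, cap σ R k * (4 * ell R (k + 1))⁻¹ = (4 * R) ^ (σ - 1) * x ^ k := by
      intro k
      have hlpos := ell_pos hR k
      have h2l : 2 * ell R k = 4 * R / 2 ^ k := by
        simp only [ell]; ring
      have hpos : (0:ℝ) < 2 * ell R k := by linarith
      have hr1 : 4 * ell R (k + 1) = 2 * ell R k := by rw [ell_succ]; ring
      rw [cap, hr1]
      have e1 : (2 * ell R k) ^ σ * (2 * ell R k)⁻¹ = (2 * ell R k) ^ (σ - 1) := by
        rw [Real.rpow_sub hpos, Real.rpow_one, div_eq_mul_inv]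
      rw [e1, h2l]
      have h4R : (0:ℝ) ≤ 4 * R := by linarith
      have h2k : (0:ℝ) ≤ (2:ℝ) ^ k := by positivity
      rw [Real.div_rpow h4R h2k]
      have e2 : ((2:ℝ) ^ k) ^ (σ - 1) = ((2:ℝ) ^ (σ - 1)) ^ k := by
        rw [← Real.rpow_natCast (2:ℝ) k, ← Real.rpow_natCast ((2:ℝ) ^ (σ - 1)) k,
          ← Real.rpow_mul (by norm_num : (0:ℝ) ≤ 2),
          ← Real.rpow_mul (by norm_num : (0:ℝ) ≤ 2)]
        ring_nf
      have e3 : x ^ k = (((2:ℝ) ^ (σ - 1)) ^ k)⁻¹ := by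
        rw [hxdef, show (1 - σ) = -(σ - 1) by ring,
          Real.rpow_neg (by norm_num : (0:ℝ) ≤ 2), inv_pow]
      rw [div_eq_mul_inv, e2, e3]
    calc ∑ k ∈ Finset.range n, 81 * cap σ R k * (4 * ell R (k + 1))⁻¹
        = 81 * ((4 * R) ^ (σ - 1) * ∑ k ∈ Finset.range n, x ^ k) := by
          have hterm : ∀ k : ℕ, 81 * cap σ R k * (4 * ell R (k + 1))⁻¹
              = 81 * ((4 * R) ^ (σ - 1) * x ^ k) := fun k => by
            rw [mul_assoc, hck k]
          rw [Finset.sum_congr rfl fun k _ => hterm k, ← Finset.mul_sum, ← Finset.mul_sum]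
      _ ≤ 81 * ((4 * R) ^ (σ - 1) * (1 - x)⁻¹) := by
          have hsum : ∑ k ∈ Finset.range n, x ^ k ≤ (1 - x)⁻¹ := by
            rw [geom_sum_eq hx1.ne n]
            have h1x : 0 < 1 - x := by linarith
            rw [show (x ^ n - 1) / (x - 1) = (1 - x ^ n) / (1 - x) by
              rw [div_eq_div_iff (by linarith) (by linarith)]; ring]
            rw [div_le_iff₀ h1x, inv_mul_cancel₀ h1x.ne']
            have : 0 ≤ x ^ n := pow_nonneg hx0 n
            linarith
          have h4Rp : 0 ≤ (4 * R) ^ (σ - 1) := Real.rpow_nonneg (by linarith) _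
          refine mul_le_mul_of_nonneg_left (mul_le_mul_of_nonneg_left hsum h4Rp) (by norm_num)
  -- piece 3
  have hT3 : (∑ p ∈ box n, w σ R E n p *
        if dist z (pt R E n p) < 4 * ell R n then δ⁻¹ else 0)
      ≤ 81 * cap σ R n / δ := by
    have : (∑ p ∈ box n, w σ R E n p *
          if dist z (pt R E n p) < 4 * ell R n then δ⁻¹ else 0)
        = (∑ p ∈ box n,
            if dist z (pt R E n p) < 4 * ell R n then w σ R E n p else 0) * δ⁻¹ := by
      rw [Finset.sum_mul]
      refine Finset.sum_congr rfl fun p _ => ?_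
      split <;> simp
    rw [this, div_eq_mul_inv]
    exact mul_le_mul_of_nonneg_right (hmass n le_rfl) (inv_nonneg.2 hδ.le)
  rw [hsplit] at big
  rw [bigM]
  linarith [hT2.trans hgeom]

/-! ### The approximating Cauchy transforms -/

def appr (σ R : ℝ) (E : Set ℂ) (n : ℕ) (z : ℂ) : ℂ :=
  ∑ p ∈ box n, (w σ R E n p : ℂ) * (z - pt R E n p)⁻¹

def cauchy (σ R : ℝ) (E : Set ℂ) (z : ℂ) : ℂ :=
  appr σ R E 0 z + ∑' n, (appr σ R E (n + 1) z - appr σ R E n z)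

lemma norm_appr_le_potential (n : ℕ) (z : ℂ) :
    ‖appr σ R E n z‖ ≤ ∑ p ∈ box n, w σ R E n p * (dist z (pt R E n p))⁻¹ := by
  refine (norm_sum_le _ _).trans (Finset.sum_le_sum fun p hp => ?_)
  rw [norm_mul, Complex.norm_real, norm_inv, Real.norm_eq_abs,
    abs_of_nonneg (w_nonneg _ _), ← dist_eq_norm]

lemma appr_diff_bound (hσ : 1 < σ) (hR : 0 < R) (hE0 : E ⊆ sq R 0 (0, 0))
    {z : ℂ} {δ : ℝ} (hδ : 0 < δ) (hzE : δ ≤ Metric.infDist z E) (n : ℕ) :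
    ‖appr σ R E (n + 1) z - appr σ R E n z‖ ≤ W σ E * (2 * ell R n) / δ ^ 2 := by
  have hσ0 : (0:ℝ) ≤ σ := by linarith
  have hmaps : ∀ p ∈ box (n + 1), par p ∈ box n := fun p hp => par_mem_box hp
  have h1 : appr σ R E (n + 1) z = ∑ q ∈ box n,
      ∑ p ∈ (box (n + 1)).filter (fun p => par p = q),
        (w σ R E (n + 1) p : ℂ) * (z - pt R E (n + 1) p)⁻¹ :=
    (Finset.sum_fiberwise_of_maps_to hmaps _).symm
  have h2 : appr σ R E n z = ∑ q ∈ box n,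
      ∑ p ∈ (box (n + 1)).filter (fun p => par p = q),
        (w σ R E (n + 1) p : ℂ) * (z - pt R E n q)⁻¹ := by
    unfold appr
    refine Finset.sum_congr rfl fun q hq => ?_
    rw [← Finset.sum_mul]
    congr 1
    have hcons := sum_w_children (E := E) hσ0 hR hE0 n hq
    calc (w σ R E n q : ℂ)
        = ((∑ p ∈ (box (n + 1)).filter (fun p => par p = q), w σ R E (n + 1) p : ℝ) : ℂ) := by
          rw [hcons]
      _ = ∑ p ∈ (box (n + 1)).filter (fun p => par p = q), (w σ R E (n + 1) p : ℂ) := by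
          push_cast
          rfl
  have hsplit : appr σ R E (n + 1) z - appr σ R E n z = ∑ q ∈ box n,
      ∑ p ∈ (box (n + 1)).filter (fun p => par p = q),
        (w σ R E (n + 1) p : ℂ) * ((z - pt R E (n + 1) p)⁻¹ - (z - pt R E n q)⁻¹) := by
    rw [h1, h2, ← Finset.sum_sub_distrib]
    refine Finset.sum_congr rfl fun q hq => ?_
    rw [← Finset.sum_sub_distrib]
    refine Finset.sum_congr rfl fun p hp => ?_
    ring
  rw [hsplit]
  have hbound : ∀ q ∈ box n, ∀ p ∈ (box (n + 1)).filter (fun p => par p = q),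
      ‖(w σ R E (n + 1) p : ℂ) * ((z - pt R E (n + 1) p)⁻¹ - (z - pt R E n q)⁻¹)‖
        ≤ w σ R E (n + 1) p * (2 * ell R n / δ ^ 2) := by
    intro q hq p hp
    rcases Finset.mem_filter.1 hp with ⟨hpbox, hpar⟩
    by_cases hw : w σ R E (n + 1) p = 0
    · simp [hw]
    · have hwq : w σ R E n (par p) ≠ 0 := by
        intro hq0
        apply hw
        simp [w, hq0]
      rw [hpar] at hwq
      have hxp := pt_mem (σ := σ) (n + 1) p hw hσ0 hR hE0
      have hxq := pt_mem (σ := σ) n q hwq hσ0 hR hE0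
      have hxp_in : pt R E (n + 1) p ∈ sq R n q := by
        rw [← hpar]
        exact sq_subset_par hR n p hxp.2
      have hdp : δ ≤ dist z (pt R E (n + 1) p) :=
        hzE.trans (Metric.infDist_le_dist_of_mem hxp.1)
      have hdq : δ ≤ dist z (pt R E n q) :=
        hzE.trans (Metric.infDist_le_dist_of_mem hxq.1)
      have hzp : z - pt R E (n + 1) p ≠ 0 := by
        rw [sub_ne_zero]
        intro h
        rw [← h] at hdp
        simp at hdp
        linarith
      have hzq : z - pt R E n q ≠ 0 := by
        rw [sub_ne_zero]
        intro h
        rw [← h] at hdq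
        simp at hdq
        linarith
      have hid : (z - pt R E (n + 1) p)⁻¹ - (z - pt R E n q)⁻¹
          = (pt R E (n + 1) p - pt R E n q)
            * ((z - pt R E (n + 1) p)⁻¹ * (z - pt R E n q)⁻¹) := by
        field_simp
        try ring
      rw [norm_mul, hid, norm_mul, norm_mul, norm_inv, norm_inv,
        Complex.norm_real, Real.norm_eq_abs, abs_of_nonneg (w_nonneg _ _)]
      refine mul_le_mul_of_nonneg_left ?_ (w_nonneg _ _)
      have hab : ‖pt R E (n + 1) p - pt R E n q‖ ≤ 2 * ell R n := by
        rw [← dist_eq_norm]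
        exact dist_le_of_mem_sq hR hxp_in hxq.2
      have hinvp : ‖z - pt R E (n + 1) p‖⁻¹ ≤ δ⁻¹ := by
        rw [← dist_eq_norm]
        exact inv_anti₀ hδ hdp
      have hinvq : ‖z - pt R E n q‖⁻¹ ≤ δ⁻¹ := by
        rw [← dist_eq_norm]
        exact inv_anti₀ hδ hdq
      have h1 : (0:ℝ) ≤ ‖z - pt R E (n + 1) p‖⁻¹ := inv_nonneg.2 (norm_nonneg _)
      have h2 : (0:ℝ) ≤ ‖z - pt R E n q‖⁻¹ := inv_nonneg.2 (norm_nonneg _)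
      calc ‖pt R E (n + 1) p - pt R E n q‖
            * (‖z - pt R E (n + 1) p‖⁻¹ * ‖z - pt R E n q‖⁻¹)
          ≤ (2 * ell R n) * (δ⁻¹ * δ⁻¹) := by
            have hδi : (0:ℝ) ≤ δ⁻¹ := inv_nonneg.2 hδ.le
            refine mul_le_mul hab ?_ (mul_nonneg h1 h2) (by have := ell_pos hR n; linarith)
            exact mul_le_mul hinvp hinvq h2 hδi
        _ = 2 * ell R n / δ ^ 2 := by
            rw [pow_two, div_eq_mul_inv, mul_inv]
  calc ‖∑ q ∈ box n, ∑ p ∈ (box (n + 1)).filter (fun p => par p = q),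
        (w σ R E (n + 1) p : ℂ) * ((z - pt R E (n + 1) p)⁻¹ - (z - pt R E n q)⁻¹)‖
      ≤ ∑ q ∈ box n, ∑ p ∈ (box (n + 1)).filter (fun p => par p = q),
          w σ R E (n + 1) p * (2 * ell R n / δ ^ 2) := by
        refine (norm_sum_le _ _).trans (Finset.sum_le_sum fun q hq => ?_)
        exact (norm_sum_le _ _).trans (Finset.sum_le_sum fun p hp => hbound q hq p hp)
    _ = (∑ q ∈ box n, ∑ p ∈ (box (n + 1)).filter (fun p => par p = q),
          w σ R E (n + 1) p) * (2 * ell R n / δ ^ 2) := by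
        rw [Finset.sum_mul]
        exact Finset.sum_congr rfl fun q hq => (Finset.sum_mul _ _ _).symm
    _ = W σ E * (2 * ell R n / δ ^ 2) := by
        rw [Finset.sum_fiberwise_of_maps_to hmaps, sum_w_box hσ0 hR hE0]
    _ = W σ E * (2 * ell R n) / δ ^ 2 := by ring

lemma appr_tendstoUniformlyOn (hσ : 1 < σ) (hR : 0 < R) (hE0 : E ⊆ sq R 0 (0, 0))
    {δ : ℝ} (hδ : 0 < δ) :
    TendstoUniformlyOn (fun n z => appr σ R E n z) (cauchy σ R E) Filter.atTop
      {z | δ ≤ Metric.infDist z E} := by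
  have hu : Summable (fun n : ℕ => W σ E * (2 * ell R n) / δ ^ 2) := by
    have heq : (fun n : ℕ => W σ E * (2 * ell R n) / δ ^ 2)
        = fun n : ℕ => (W σ E * (4 * R) / δ ^ 2) * (1 / 2 : ℝ) ^ n := by
      funext n
      simp only [ell, one_div_pow]
      field_simp
      ring
    rw [heq]
    exact summable_geometric_two.mul_left _
  have htsum := tendstoUniformlyOn_tsum_nat hu
    (f := fun n z => appr σ R E (n + 1) z - appr σ R E n z)
    (s := {z : ℂ | δ ≤ Metric.infDist z E})
    (fun n z hz => appr_diff_bound hσ hR hE0 hδ hz n)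
  rw [Metric.tendstoUniformlyOn_iff] at htsum ⊢
  intro ε hε
  filter_upwards [htsum ε hε] with N hN z hz
  have hps : ∑ n ∈ Finset.range N, (appr σ R E (n + 1) z - appr σ R E n z)
      = appr σ R E N z - appr σ R E 0 z :=
    Finset.sum_range_sub (fun i => appr σ R E i z) N
  have hkey : cauchy σ R E z - appr σ R E N z
      = (∑' n, (appr σ R E (n + 1) z - appr σ R E n z))
        - ∑ n ∈ Finset.range N, (appr σ R E (n + 1) z - appr σ R E n z) := by
    rw [cauchy, hps]
    ring
  have := hN z hz
  rw [dist_eq_norm] at this ⊢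
  rw [hkey]
  exact this

lemma appr_differentiableOn (hσ : 1 < σ) (hR : 0 < R) (hE0 : E ⊆ sq R 0 (0, 0)) (n : ℕ) :
    DifferentiableOn ℂ (appr σ R E n) Eᶜ := by
  have hσ0 : (0:ℝ) ≤ σ := by linarith
  refine DifferentiableOn.fun_sum fun p hp => ?_
  by_cases hw : w σ R E n p = 0
  · simp only [hw, Complex.ofReal_zero, zero_mul]
    exact differentiableOn_const 0
  · have hx := pt_mem (σ := σ) n p hw hσ0 hR hE0
    refine DifferentiableOn.const_mul ?_ _
    refine DifferentiableOn.inv ?_ ?_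
    · exact (differentiable_id.sub_const _).differentiableOn
    · intro z hz
      rw [sub_ne_zero]
      intro h
      exact hz (h ▸ hx.1)

lemma cauchy_differentiableOn (hσ : 1 < σ) (hR : 0 < R) (hE : IsCompact E)
    (hE0 : E ⊆ sq R 0 (0, 0)) (hEne : E.Nonempty) :
    DifferentiableOn ℂ (cauchy σ R E) Eᶜ := by
  have hopen : IsOpen Eᶜ := hE.isClosed.isOpen_compl
  have htlu : TendstoLocallyUniformlyOn (fun n => appr σ R E n) (cauchy σ R E)
      Filter.atTop Eᶜ := by
    rw [tendstoLocallyUniformlyOn_iff_forall_isCompact hopen]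
    intro K hKE hKc
    rcases K.eq_empty_or_nonempty with rfl | hKne
    · exact tendstoUniformlyOn_empty
    · obtain ⟨x₀, hx₀K, hx₀min⟩ := hKc.exists_isMinOn hKne
        ((Metric.continuous_infDist_pt E).continuousOn)
      have hδ : 0 < Metric.infDist x₀ E :=
        (hE.isClosed.notMem_iff_infDist_pos hEne).1 (hKE hx₀K)
      refine (appr_tendstoUniformlyOn hσ hR hE0 hδ).mono ?_
      intro z hz
      exact hx₀min hz
  exact htlu.differentiableOn
    (Filter.Eventually.of_forall fun n => appr_differentiableOn hσ hR hE0 n) hopen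

lemma cauchy_bound (hσ : 1 < σ) (hR : 0 < R) (hE : IsCompact E) (hE0 : E ⊆ sq R 0 (0, 0))
    (hEne : E.Nonempty) {z : ℂ} (hz : z ∈ Eᶜ) : ‖cauchy σ R E z‖ ≤ bigM σ R E := by
  set δ := Metric.infDist z E with hδdef
  have hδ : 0 < δ := (hE.isClosed.notMem_iff_infDist_pos hEne).1 hz
  have hzs : z ∈ {z : ℂ | δ ≤ Metric.infDist z E} := by simp only [Set.mem_setOf_eq, hδdef]; exact le_rfl
  have hptw : Filter.Tendsto (fun n => appr σ R E n z) Filter.atTop (nhds (cauchy σ R E z)) :=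
    (appr_tendstoUniformlyOn hσ hR hE0 hδ).tendsto_at hzs
  have hnorm : Filter.Tendsto (fun n => ‖appr σ R E n z‖) Filter.atTop
      (nhds ‖cauchy σ R E z‖) := hptw.norm
  have hcap0 : Filter.Tendsto (fun n => cap σ R n) Filter.atTop (nhds 0) := by
    have hc : ∀ n : ℕ, cap σ R n = (4 * R) ^ σ * (((1:ℝ) / 2) ^ σ) ^ n := by
      intro n
      rw [cap]
      have h2l : 2 * ell R n = 4 * R * (1 / 2 : ℝ) ^ n := by
        simp only [ell, one_div_pow]
        field_simp
        ring
      rw [h2l, Real.mul_rpow (by linarith) (by positivity)]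
      congr 1
      rw [← Real.rpow_natCast ((1:ℝ)/2) n, ← Real.rpow_natCast (((1:ℝ)/2) ^ σ) n,
        ← Real.rpow_mul (by norm_num : (0:ℝ) ≤ 1/2),
        ← Real.rpow_mul (by norm_num : (0:ℝ) ≤ 1/2)]
      ring_nf
    simp only [hc]
    have hgeo : Filter.Tendsto (fun n : ℕ => (((1:ℝ) / 2) ^ σ) ^ n) Filter.atTop (nhds 0) := by
      apply tendsto_pow_atTop_nhds_zero_of_lt_one
      · positivity
      · exact Real.rpow_lt_one (by norm_num) (by norm_num) (by linarith)
    have := hgeo.const_mul ((4 * R) ^ σ)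
    simpa using this
  have hb : Filter.Tendsto (fun n => bigM σ R E + 81 * cap σ R n / δ) Filter.atTop
      (nhds (bigM σ R E)) := by
    have h1 : Filter.Tendsto (fun n => 81 * cap σ R n / δ) Filter.atTop (nhds 0) := by
      have := (hcap0.const_mul (81:ℝ)).div_const δ
      simpa using this
    have := (tendsto_const_nhds (x := bigM σ R E) (f := Filter.atTop (α := ℕ))).add h1
    simpa using this
  refine le_of_tendsto_of_tendsto hnorm hb (Filter.Eventually.of_forall fun n => ?_)
  exact (norm_appr_le_potential n z).trans (potential_bound hσ hR hE0 hδ le_rfl n)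

/-- asymptotics along the positive real axis. -/
lemma cauchy_asymp (hσ : 1 < σ) (hR : 0 < R) (hE : IsCompact E) (hE0 : E ⊆ sq R 0 (0, 0))
    (hEne : E.Nonempty) (hEb : E ⊆ Metric.ball 0 R) {t : ℝ} (ht : 2 * R ≤ t) :
    ‖cauchy σ R E t - (W σ E / t : ℝ)‖ ≤ 2 * W σ E * R / t ^ 2 := by
  have hσ0 : (0:ℝ) ≤ σ := by linarith
  have htpos : 0 < t := by linarith
  have htC : ((t:ℂ) : ℂ) ≠ 0 := by
    simp only [ne_eq, Complex.ofReal_eq_zero]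
    linarith
  have hWnn : 0 ≤ W σ E := ENNReal.toReal_nonneg
  -- bound for each approximation
  have happr : ∀ n : ℕ, ‖appr σ R E n t - ((W σ E / t : ℝ) : ℂ)‖ ≤ 2 * W σ E * R / t ^ 2 := by
    intro n
    have hWsum : ((W σ E / t : ℝ) : ℂ) = ∑ p ∈ box n, (w σ R E n p : ℂ) * (t : ℂ)⁻¹ := by
      rw [← Finset.sum_mul]
      have : ((∑ p ∈ box n, w σ R E n p : ℝ) : ℂ) = ∑ p ∈ box n, (w σ R E n p : ℂ) := by
        push_cast
        rfl
      rw [← this, sum_w_box hσ0 hR hE0]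
      push_cast
      rw [div_eq_mul_inv]
    have hsplit : appr σ R E n t - ((W σ E / t : ℝ) : ℂ)
        = ∑ p ∈ box n, (w σ R E n p : ℂ) * (((t:ℂ) - pt R E n p)⁻¹ - (t:ℂ)⁻¹) := by
      rw [appr, hWsum, ← Finset.sum_sub_distrib]
      refine Finset.sum_congr rfl fun p hp => ?_
      ring
    rw [hsplit]
    refine (norm_sum_le _ _).trans ?_
    have hterm : ∀ p ∈ box n, ‖(w σ R E n p : ℂ) * (((t:ℂ) - pt R E n p)⁻¹ - (t:ℂ)⁻¹)‖
        ≤ w σ R E n p * (2 * R / t ^ 2) := by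
      intro p hp
      by_cases hw : w σ R E n p = 0
      · simp [hw]
      · have hx := pt_mem (σ := σ) n p hw hσ0 hR hE0
        have hxR : ‖pt R E n p‖ < R := by
          have := hEb hx.1
          rwa [Metric.mem_ball, dist_eq_norm, sub_zero] at this
        have hzp : (t:ℂ) - pt R E n p ≠ 0 := by
          intro h
          rw [sub_eq_zero] at h
          have : ‖(t:ℂ)‖ < R := h ▸ hxR
          rw [Complex.norm_real, Real.norm_eq_abs, abs_of_pos htpos] at this
          linarith
        have hid : ((t:ℂ) - pt R E n p)⁻¹ - (t:ℂ)⁻¹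
            = pt R E n p * (((t:ℂ) - pt R E n p)⁻¹ * (t:ℂ)⁻¹) := by
          field_simp
          try ring
        rw [hid, norm_mul, norm_mul, norm_mul, norm_inv, norm_inv,
          Complex.norm_real, Real.norm_eq_abs, abs_of_nonneg (w_nonneg _ _)]
        refine mul_le_mul_of_nonneg_left ?_ (w_nonneg _ _)
        have hsub : t / 2 ≤ ‖(t:ℂ) - pt R E n p‖ := by
          have h1 : ‖(t:ℂ)‖ - ‖pt R E n p‖ ≤ ‖(t:ℂ) - pt R E n p‖ :=
            norm_sub_norm_le _ _
          rw [Complex.norm_real, Real.norm_eq_abs, abs_of_pos htpos] at h1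
          linarith
        have hsubpos : 0 < t / 2 := by linarith
        have hinv1 : ‖(t:ℂ) - pt R E n p‖⁻¹ ≤ (t / 2)⁻¹ := inv_anti₀ hsubpos hsub
        have hinv2 : ‖(t:ℂ)‖⁻¹ = t⁻¹ := by
          rw [Complex.norm_real, Real.norm_eq_abs, abs_of_pos htpos]
        calc ‖pt R E n p‖ * (‖(t:ℂ) - pt R E n p‖⁻¹ * ‖(t:ℂ)‖⁻¹)
            ≤ R * ((t / 2)⁻¹ * t⁻¹) := by
              refine mul_le_mul hxR.le ?_ (by positivity) (by linarith)
              rw [hinv2]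
              exact mul_le_mul_of_nonneg_right hinv1 (by positivity)
          _ = 2 * R / t ^ 2 := by
              rw [pow_two]
              field_simp
              try ring
    refine (Finset.sum_le_sum hterm).trans ?_
    rw [← Finset.sum_mul, sum_w_box hσ0 hR hE0]
    rw [show W σ E * (2 * R / t ^ 2) = 2 * W σ E * R / t ^ 2 by ring]
  -- pass to the limit
  have htE : (t : ℂ) ∈ {z : ℂ | Metric.infDist (t:ℂ) E ≤ Metric.infDist z E} := by
    simp only [Set.mem_setOf_eq]; exact le_rfl
  have hδ : 0 < Metric.infDist (t:ℂ) E := by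
    refine (hE.isClosed.notMem_iff_infDist_pos hEne).1 ?_
    intro hmem
    have := hEb hmem
    rw [Metric.mem_ball, dist_eq_norm, sub_zero, Complex.norm_real, Real.norm_eq_abs,
      abs_of_pos htpos] at this
    linarith
  have hptw : Filter.Tendsto (fun n => appr σ R E n t) Filter.atTop
      (nhds (cauchy σ R E t)) :=
    (appr_tendstoUniformlyOn hσ hR hE0 hδ).tendsto_at htE
  have hnorm : Filter.Tendsto (fun n => ‖appr σ R E n t - ((W σ E / t : ℝ) : ℂ)‖)
      Filter.atTop (nhds ‖cauchy σ R E t - ((W σ E / t : ℝ) : ℂ)‖) :=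
    (hptw.sub_const _).norm
  exact le_of_tendsto hnorm (Filter.Eventually.of_forall happr)

end F6
end

open MeasureTheory

/-- (Frostman) A compact set `E ⊆ ℂ` of Hausdorff dimension strictly bigger than one is not
`H∞`-removable: there is a nonconstant bounded holomorphic function on `ℂ \ E`. -/
theorem stmt_6 (E : Set ℂ) (hE : IsCompact E) (hdim : 1 < dimH E) :
    ∃ f : ℂ → ℂ, DifferentiableOn ℂ f Eᶜ ∧ (∃ M : ℝ, ∀ z ∈ Eᶜ, ‖f z‖ ≤ M) ∧
      ∃ z ∈ Eᶜ, ∃ w ∈ Eᶜ, f z ≠ f w := by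
  classical
  -- choose the exponent
  obtain ⟨σnn, h1σ, h2σ⟩ := ENNReal.lt_iff_exists_nnreal_btwn.1 hdim
  set σ : ℝ := (σnn : ℝ) with hσdef
  have hσ : 1 < σ := by
    have h : (1 : ℝ≥0) < σnn := by exact_mod_cast h1σ
    exact_mod_cast h
  have hσ0 : (0:ℝ) < σ := by linarith
  have hμ : μH[σ] E = ⊤ := hausdorffMeasure_of_lt_dimH h2σ
  have hΛ0 : F6.Lam σ E ≠ 0 := by
    intro h
    have := F6.hausdorff_zero_of_Lam_zero hσ0 h
    rw [hμ] at this
    simp at this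
  -- choose the bounding radius
  obtain ⟨r, hr⟩ := hE.isBounded.subset_closedBall 0
  set R : ℝ := max r 0 + 1 with hRdef
  have hR : 0 < R := by
    have : (0:ℝ) ≤ max r 0 := le_max_right r 0
    rw [hRdef]; linarith
  have hEb : E ⊆ Metric.ball 0 R := by
    intro y hy
    have h := hr hy
    rw [Metric.mem_closedBall] at h
    rw [Metric.mem_ball]
    have : r ≤ max r 0 := le_max_left r 0
    rw [hRdef]; linarith
  have hE0 : E ⊆ F6.sq R 0 (0, 0) := by
    intro y hy
    have h := hEb hy
    rw [Metric.mem_ball, Complex.dist_eq, sub_zero] at h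
    have hyre : |y.re| ≤ ‖y‖ := Complex.abs_re_le_norm y
    have hyim : |y.im| ≤ ‖y‖ := Complex.abs_im_le_norm y
    have h1 : |y.re| < R := lt_of_le_of_lt hyre h
    have h2 : |y.im| < R := lt_of_le_of_lt hyim h
    rw [abs_lt] at h1 h2
    have hl0 : F6.ell R 0 = 2 * R := F6.ell_zero R
    constructor
    · constructor
      · simp only [hl0]; push_cast; linarith [h1.1]
      · simp only [hl0]; push_cast; linarith [h1.2]
    · constructor
      · simp only [hl0]; push_cast; linarith [h2.1]
      · simp only [hl0]; push_cast; linarith [h2.2]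
  have hEne : E.Nonempty := by
    rcases Set.eq_empty_or_nonempty E with rfl | h
    · exact absurd (measure_empty (μ := F6.Lam σ)) hΛ0
    · exact h
  have hΛtop : F6.Lam σ E ≠ ⊤ := by
    refine ne_top_of_le_ne_top ?_ (F6.Lam_le_diam hσ0.le E)
    exact ENNReal.rpow_ne_top_of_nonneg hσ0.le hE.isBounded.ediam_ne_top
  have hW : 0 < F6.W σ E := ENNReal.toReal_pos hΛ0 hΛtop
  refine ⟨F6.cauchy σ R E, F6.cauchy_differentiableOn hσ hR hE hE0 hEne,
    ⟨F6.bigM σ R E, fun z hz => F6.cauchy_bound hσ hR hE hE0 hEne hz⟩, ?_⟩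
  -- nonconstancy, via two points on the positive real axis
  set t₁ : ℝ := 8 * R with ht₁
  set t₂ : ℝ := 32 * R with ht₂
  have h₁ := F6.cauchy_asymp hσ hR hE hE0 hEne hEb (t := t₁) (by rw [ht₁]; linarith)
  have h₂ := F6.cauchy_asymp hσ hR hE hE0 hEne hEb (t := t₂) (by rw [ht₂]; linarith)
  have hmemaux : ∀ t : ℝ, R ≤ t → (t : ℂ) ∈ Eᶜ := by
    intro t ht hmem
    have := hEb hmem
    rw [Metric.mem_ball, Complex.dist_eq, sub_zero, Complex.norm_real, Real.norm_eq_abs,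
      abs_of_pos (by linarith : (0:ℝ) < t)] at this
    linarith
  have ht₁E : (t₁ : ℂ) ∈ Eᶜ := hmemaux t₁ (by rw [ht₁]; linarith)
  have ht₂E : (t₂ : ℂ) ∈ Eᶜ := hmemaux t₂ (by rw [ht₂]; linarith)
  refine ⟨(t₁ : ℂ), ht₁E, (t₂ : ℂ), ht₂E, ?_⟩
  intro hEq
  set Wv : ℝ := F6.W σ E with hWv
  -- numerical simplifications
  have e1 : 2 * Wv * R / t₁ ^ 2 = Wv / (32 * R) := by
    rw [ht₁]; field_simp; ring
  have e2 : 2 * Wv * R / t₂ ^ 2 = Wv / (512 * R) := by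
    rw [ht₂]; field_simp; ring
  have hnorm1 : ‖((Wv / t₁ : ℝ) : ℂ)‖ = Wv / t₁ := by
    rw [Complex.norm_real, Real.norm_eq_abs, abs_of_nonneg]
    positivity
  have hnorm2 : ‖((Wv / t₂ : ℝ) : ℂ)‖ = Wv / t₂ := by
    rw [Complex.norm_real, Real.norm_eq_abs, abs_of_nonneg]
    positivity
  have hlow : Wv / t₁ - Wv / (32 * R) ≤ ‖F6.cauchy σ R E t₁‖ := by
    have htri : ‖((Wv / t₁ : ℝ) : ℂ)‖ - ‖F6.cauchy σ R E t₁‖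
        ≤ ‖F6.cauchy σ R E t₁ - ((Wv / t₁ : ℝ) : ℂ)‖ := by
      rw [norm_sub_rev]
      exact norm_sub_norm_le _ _
    rw [hnorm1] at htri
    linarith [h₁, e1]
  have hhigh : ‖F6.cauchy σ R E t₂‖ ≤ Wv / t₂ + Wv / (512 * R) := by
    have htri : ‖F6.cauchy σ R E t₂‖ - ‖((Wv / t₂ : ℝ) : ℂ)‖
        ≤ ‖F6.cauchy σ R E t₂ - ((Wv / t₂ : ℝ) : ℂ)‖ := norm_sub_norm_le _ _
    rw [hnorm2] at htri
    linarith [h₂, e2]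
  rw [hEq] at hlow
  have hchain : Wv / t₁ - Wv / (32 * R) ≤ Wv / t₂ + Wv / (512 * R) := hlow.trans hhigh
  have ha : Wv / t₁ = Wv / (8 * R) := by rw [ht₁]
  have hb : Wv / t₂ = Wv / (32 * R) := by rw [ht₂]
  rw [ha, hb] at hchain
  have hfinal : 64 * Wv - 16 * Wv ≤ 16 * Wv + Wv := by
    have hRne : (512 * R) > 0 := by linarith
    have := mul_le_mul_of_nonneg_left hchain (le_of_lt hRne)
    calc 64 * Wv - 16 * Wv = (512 * R) * (Wv / (8 * R) - Wv / (32 * R)) := by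
          field_simp; ring
      _ ≤ (512 * R) * (Wv / (32 * R) + Wv / (512 * R)) := this
      _ = 16 * Wv + Wv := by field_simp; ring
  linarith
end
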